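/- arXiv:1506.08204 — 7 statements merged into one kernel-verified Lean document; each statement's English description precedes it below -/
import Mathlib

section
/- Let M be an SDDM matrix with indices partitioned into blocks F and C, and write M_{FF} = D_{FF} − A_{FF} where D_{FF} is diagonal and A_{FF} is a nonnegative symmetric matrix with zero diagonal. Define M₁ = [[D_{FF}, M_{FC}],[M_{CF}, diag(M_{CF}·D_{FF}^{−1}·M_{FC}·1_C)]] and M₂ = [[D_{FF} − A_{FF}·D_{FF}^{−1}·A_{FF}, (I + A_{FF}·D_{FF}^{−1})·M_{FC}],[M_{CF}·(I + D_{FF}^{−1}·A_{FF}), 2·M_{CC} − diag(M_{CF}·D_{FF}^{−1}·M_{FC}·1_C)]], where diag(x) is the diagonal matrix with diagonal given by the vector x and 1_C is the all-ones vector on C. Then Schur(M₁, F) is a Laplacian matrix, M₂ is an SDDM matrix, and Schur(M, F) = ½·( Schur(M₁, F) + Schur(M₂, F) ). -/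
open Matrix BigOperators Finset
open scoped Classical

noncomputable section
set_option linter.unusedSectionVars false
set_option linter.unusedVariables false
set_option linter.unnecessarySimpa false
set_option maxHeartbeats 1600000

section Aux

variable {n m : Type*} [Fintype n] [Fintype m]

/-- quadratic form as double sum -/
lemma dotProduct_mulVec_expand (x y : n → ℝ) (X : Matrix n n ℝ) :
    x ⬝ᵥ X *ᵥ y = ∑ i, ∑ j, x i * (X i j * y j) := by
  simp [dotProduct, mulVec, Finset.mul_sum]

lemma real_isHermitian_iff (X : Matrix n n ℝ) : X.IsHermitian ↔ Xᵀ = X := by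
  rw [Matrix.IsHermitian, conjTranspose_eq_transpose_of_trivial]

/-- symmetric, nonpositive offdiagonal, nonnegative row sums → PSD -/
lemma posSemidef_of_rowsum (N : Matrix n n ℝ) (hsym : Nᵀ = N)
    (hoff : ∀ i j, i ≠ j → N i j ≤ 0) (hrow : ∀ i, 0 ≤ ∑ j, N i j) :
    N.PosSemidef := by
  refine .of_dotProduct_mulVec_nonneg ((real_isHermitian_iff N).2 hsym) fun x => ?_
  have hstar : star x = x := by simp
  rw [hstar, dotProduct_mulVec_expand]
  have key : ∑ i, ∑ j, x i * (N i j * x j)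
      = (∑ i, (∑ j, N i j) * x i ^ 2)
        - ∑ i, ∑ j, N i j * (x i - x j) ^ 2 / 2 := by
    have h1 : ∀ i j, x i * (N i j * x j)
        = N i j * (x i ^ 2 + x j ^ 2) / 2 - N i j * (x i - x j) ^ 2 / 2 := by
      intro i j; ring
    simp only [h1, Finset.sum_sub_distrib]
    congr 1
    have h2 : ∑ i, ∑ j, N i j * (x i ^ 2 + x j ^ 2) / 2
        = (∑ i, ∑ j, N i j * x i ^ 2 / 2) + ∑ i, ∑ j, N i j * x j ^ 2 / 2 := by
      rw [← Finset.sum_add_distrib]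
      congr 1; ext i
      rw [← Finset.sum_add_distrib]
      congr 1; ext j; ring
    rw [h2]
    have h3 : ∑ i, ∑ j, N i j * x j ^ 2 / 2 = ∑ i, ∑ j, N i j * x i ^ 2 / 2 := by
      rw [Finset.sum_comm]
      congr 1; ext i
      congr 1; ext j
      have : N j i = N i j := by
        conv_lhs => rw [← hsym]
        rfl
      rw [this]
    rw [h3, ← Finset.sum_add_distrib]
    congr 1; ext i
    rw [Finset.sum_mul, ← Finset.sum_add_distrib]
    congr 1; ext j; ring
  rw [key]
  have t1 : 0 ≤ ∑ i, (∑ j, N i j) * x i ^ 2 :=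
    Finset.sum_nonneg fun i _ => mul_nonneg (hrow i) (sq_nonneg _)
  have t2 : ∑ i, ∑ j, N i j * (x i - x j) ^ 2 / 2 ≤ 0 := by
    refine Finset.sum_nonpos fun i _ => Finset.sum_nonpos fun j _ => ?_
    rcases eq_or_ne i j with rfl | hij
    · simp
    · have := hoff i j hij
      have h4 : 0 ≤ (x i - x j) ^ 2 := sq_nonneg _
      nlinarith
  linarith

end Aux


section Aux2

variable {n m p : Type*} [Fintype n] [Fintype m] [Fintype p]

/-- row sums nonneg from diagonal dominance with nonpositive offdiagonal -/
lemma rowsum_nonneg_of_dom (N : Matrix n n ℝ) [DecidableEq n]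
    (hoff : ∀ i j, i ≠ j → N i j ≤ 0)
    (hdom : ∀ i, ∑ j ∈ Finset.univ.erase i, |N i j| ≤ N i i) (i : n) :
    0 ≤ ∑ j, N i j := by
  have h1 : ∑ j, N i j = N i i + ∑ j ∈ Finset.univ.erase i, N i j := by
    rw [← Finset.add_sum_erase _ _ (Finset.mem_univ i)]
  have h2 : ∑ j ∈ Finset.univ.erase i, N i j
      = -∑ j ∈ Finset.univ.erase i, |N i j| := by
    rw [← Finset.sum_neg_distrib]
    refine Finset.sum_congr rfl fun j hj => ?_
    have hj' : N i j ≤ 0 := hoff i j (fun h => (Finset.mem_erase.1 hj).1 h.symm)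
    rw [abs_of_nonpos hj']; ring
  rw [h1, h2]
  linarith [hdom i]

/-- diagonal dominance from nonpositive offdiagonal and nonneg row sums -/
lemma dom_of_rowsum_nonneg (N : Matrix n n ℝ) [DecidableEq n]
    (hoff : ∀ j, i ≠ j → N i j ≤ 0)
    (hrow : 0 ≤ ∑ j, N i j) :
    ∑ j ∈ Finset.univ.erase i, |N i j| ≤ N i i := by
  have h1 : ∑ j, N i j = N i i + ∑ j ∈ Finset.univ.erase i, N i j := by
    rw [← Finset.add_sum_erase _ _ (Finset.mem_univ i)]
  have h2 : ∑ j ∈ Finset.univ.erase i, N i j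
      = -∑ j ∈ Finset.univ.erase i, |N i j| := by
    rw [← Finset.sum_neg_distrib]
    refine Finset.sum_congr rfl fun j hj => ?_
    have hj' : N i j ≤ 0 := hoff j (fun h => (Finset.mem_erase.1 hj).1 h.symm)
    rw [abs_of_nonpos hj']; ring
  rw [h1, h2] at hrow
  linarith

lemma mul_entry_nonneg {X : Matrix n m ℝ} {Y : Matrix m p ℝ}
    (hX : ∀ i j, 0 ≤ X i j) (hY : ∀ i j, 0 ≤ Y i j) :
    ∀ i j, 0 ≤ (X * Y) i j := by
  intro i j
  rw [Matrix.mul_apply]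
  exact Finset.sum_nonneg fun k _ => mul_nonneg (hX i k) (hY k j)

lemma mul_entry_nonpos_left {X : Matrix n m ℝ} {Y : Matrix m p ℝ}
    (hX : ∀ i j, X i j ≤ 0) (hY : ∀ i j, 0 ≤ Y i j) :
    ∀ i j, (X * Y) i j ≤ 0 := by
  intro i j
  rw [Matrix.mul_apply]
  exact Finset.sum_nonpos fun k _ => mul_nonpos_of_nonpos_of_nonneg (hX i k) (hY k j)

lemma mul_entry_nonpos_right {X : Matrix n m ℝ} {Y : Matrix m p ℝ}
    (hX : ∀ i j, 0 ≤ X i j) (hY : ∀ i j, Y i j ≤ 0) :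
    ∀ i j, (X * Y) i j ≤ 0 := by
  intro i j
  rw [Matrix.mul_apply]
  exact Finset.sum_nonpos fun k _ => mul_nonpos_of_nonneg_of_nonpos (hX i k) (hY k j)

lemma mulVec_mono {X : Matrix n m ℝ} (hX : ∀ i j, 0 ≤ X i j)
    {u w : m → ℝ} (huw : ∀ j, u j ≤ w j) (i : n) : (X *ᵥ u) i ≤ (X *ᵥ w) i := by
  simp only [mulVec, dotProduct]
  exact Finset.sum_le_sum fun j _ => mul_le_mul_of_nonneg_left (huw j) (hX i j)

lemma mulVec_nonneg {X : Matrix n m ℝ} (hX : ∀ i j, 0 ≤ X i j)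
    {u : m → ℝ} (hu : ∀ j, 0 ≤ u j) (i : n) : 0 ≤ (X *ᵥ u) i := by
  simp only [mulVec, dotProduct]
  exact Finset.sum_nonneg fun j _ => mul_nonneg (hX i j) (hu j)

lemma mulVec_antitone {X : Matrix n m ℝ} (hX : ∀ i j, X i j ≤ 0)
    {u w : m → ℝ} (huw : ∀ j, u j ≤ w j) (i : n) : (X *ᵥ w) i ≤ (X *ᵥ u) i := by
  simp only [mulVec, dotProduct]
  exact Finset.sum_le_sum fun j _ => mul_le_mul_of_nonpos_left (huw j) (hX i j)

lemma rowSum_eq_mulVec_one (N : Matrix n m ℝ) (i : n) :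
    ∑ j, N i j = (N *ᵥ fun _ => (1 : ℝ)) i := by
  simp [mulVec, dotProduct]

/-- the M-matrix inverse-positivity lemma -/
lemma mmatrix_inv_nonneg [DecidableEq n] (d : n → ℝ) (A : Matrix n n ℝ)
    (hd : ∀ i, 0 < d i) (hAs : Aᵀ = A) (hAnn : ∀ i j, 0 ≤ A i j)
    (hdom : ∀ i, ∑ j, A i j ≤ d i)
    (hu : IsUnit (Matrix.diagonal d - A).det) :
    ∀ i j, 0 ≤ (Matrix.diagonal d - A)⁻¹ i j := by
  set X := Matrix.diagonal d - A with hX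
  suffices h : ∀ v : n → ℝ, (∀ k, 0 ≤ v k) → ∀ i, 0 ≤ (X⁻¹ *ᵥ v) i by
    intro i j
    have := h (Pi.single j 1) (fun k => by
      rcases eq_or_ne k j with rfl | hk
      · simp
      · simp [Pi.single_eq_of_ne hk]) i
    simpa using this
  intro v hv
  set y := X⁻¹ *ᵥ v with hy
  have hXy : X *ᵥ y = v := by
    rw [hy, mulVec_mulVec, Matrix.mul_nonsing_inv _ hu, one_mulVec]
  -- equation at each index
  have hdiagsum : ∀ (z : n → ℝ) (k : n),
      ∑ x, Matrix.diagonal d k x * z x = d k * z k := by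
    intro z k
    simp [Matrix.diagonal_apply, ite_mul, Finset.sum_ite_eq]
  have heq : ∀ k, d k * y k - ∑ j, A k j * y j = v k := by
    intro k
    have h0 : ∑ x, (Matrix.diagonal d k x - A k x) * y x = v k := by
      simpa [X, mulVec, dotProduct] using congrFun hXy k
    have h1 : ∑ x, (Matrix.diagonal d k x - A k x) * y x
        = (∑ x, Matrix.diagonal d k x * y x) - ∑ x, A k x * y x := by
      rw [← Finset.sum_sub_distrib]
      congr 1; ext x; ring
    rw [h1, hdiagsum] at h0
    exact h0
  by_contra hcon
  push_neg at hcon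
  obtain ⟨i, hi⟩ := hcon
  obtain ⟨i₀, -, hmin⟩ := Finset.exists_min_image Finset.univ y ⟨i, Finset.mem_univ i⟩
  set μ := y i₀ with hμ
  have hmneg : μ < 0 := lt_of_le_of_lt (hmin i (Finset.mem_univ i)) hi
  have hylb : ∀ j, μ ≤ y j := fun j => hmin j (Finset.mem_univ j)
  -- key claim
  have claim : ∀ k, y k = μ → (∀ j, A k j * (y j - μ) = 0) ∧ d k = ∑ j, A k j := by
    intro k hk
    have h1 : ∑ j, A k j * y j ≤ d k * μ := by
      have := heq k
      rw [hk] at this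
      linarith [hv k]
    have h2 : (∑ j, A k j) * μ ≤ ∑ j, A k j * y j := by
      rw [Finset.sum_mul]
      exact Finset.sum_le_sum fun j _ => mul_le_mul_of_nonneg_left (hylb j) (hAnn k j)
    have h3 : d k * μ ≤ (∑ j, A k j) * μ :=
      mul_le_mul_of_nonpos_right (hdom k) hmneg.le
    have h4 : ∑ j, A k j * y j = (∑ j, A k j) * μ := le_antisymm (h1.trans h3) h2
    have h5 : d k * μ = (∑ j, A k j) * μ := le_antisymm (h3) (by linarith)
    constructor
    · have h6 : ∑ j, A k j * (y j - μ) = 0 := by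
        have : ∑ j, A k j * (y j - μ) = (∑ j, A k j * y j) - (∑ j, A k j) * μ := by
          rw [Finset.sum_mul, ← Finset.sum_sub_distrib]
          congr 1; ext j; ring
        rw [this, h4]; ring
      intro j
      have := (Finset.sum_eq_zero_iff_of_nonneg (fun j _ =>
        mul_nonneg (hAnn k j) (by linarith [hylb j]))).1 h6 j (Finset.mem_univ j)
      exact this
    · have := mul_right_cancel₀ hmneg.ne h5
      exact this
  -- indicator vector
  set w : n → ℝ := fun k => if y k = μ then 1 else 0 with hw
  have hXw : X *ᵥ w = 0 := by
    funext k
    have hXwk : (X *ᵥ w) k = d k * w k - ∑ j, A k j * w j := by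
      have h0 : (X *ᵥ w) k = ∑ x, (Matrix.diagonal d k x - A k x) * w x := by
        simp [X, mulVec, dotProduct]
      have h1 : ∑ x, (Matrix.diagonal d k x - A k x) * w x
          = (∑ x, Matrix.diagonal d k x * w x) - ∑ x, A k x * w x := by
        rw [← Finset.sum_sub_distrib]
        congr 1; ext x; ring
      rw [h0, h1, hdiagsum]
    have hsum : ∑ j, A k j * w j = ∑ j ∈ Finset.univ.filter (fun j => y j = μ), A k j := by
      rw [Finset.sum_filter]
      congr 1; ext j
      by_cases h : y j = μ <;> simp [hw, h]
    rcases eq_or_ne (y k) μ with hk | hk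
    · have hc := claim k hk
      have hdk : d k = ∑ j, A k j := hc.2
      have hzero : ∀ j ∈ Finset.univ.filter (fun j => ¬ y j = μ), A k j = 0 := by
        intro j hj
        have hjne : y j ≠ μ := (Finset.mem_filter.1 hj).2
        have := hc.1 j
        have hpos : 0 < y j - μ := lt_of_le_of_ne (by linarith [hylb j]) (by
          intro h; exact hjne (by linarith))
        rcases mul_eq_zero.1 this with h | h
        · exact h
        · exact absurd h hpos.ne'
      have hsplit : ∑ j, A k j
          = (∑ j ∈ Finset.univ.filter (fun j => y j = μ), A k j)
            + ∑ j ∈ Finset.univ.filter (fun j => ¬ y j = μ), A k j :=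
        (Finset.sum_filter_add_sum_filter_not _ _ _).symm
      have hwk : w k = 1 := if_pos hk
      rw [hXwk, hsum, hwk, mul_one, hdk, hsplit, Finset.sum_eq_zero hzero, Pi.zero_apply]
      ring
    · have hwk : w k = 0 := if_neg hk
      have hzero : ∀ j ∈ Finset.univ.filter (fun j => y j = μ), A k j = 0 := by
        intro j hj
        have hjm : y j = μ := (Finset.mem_filter.1 hj).2
        have := (claim j hjm).1 k
        have hAjk : A j k = A k j := by
          conv_lhs => rw [← hAs]
          rfl
        rw [hAjk] at this
        have hpos : 0 < y k - μ := lt_of_le_of_ne (by linarith [hylb k]) (by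
          intro h; exact hk (by linarith))
        rcases mul_eq_zero.1 this with h | h
        · exact h
        · exact absurd h hpos.ne'
      rw [hXwk, hsum, hwk, mul_zero, Finset.sum_eq_zero hzero, Pi.zero_apply]
      ring
  have hw0 : w = 0 := by
    have : X⁻¹ *ᵥ (X *ᵥ w) = w := by
      rw [mulVec_mulVec, Matrix.nonsing_inv_mul _ hu, one_mulVec]
    rw [hXw, mulVec_zero] at this
    exact this.symm
  have : w i₀ = 1 := by simp [hw, hμ]
  rw [hw0] at this
  simpa using this

end Aux2


section Aux3

variable {m n : Type*} [Fintype m] [Fintype n]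

lemma sum_elim_ne_zero_left {x : m → ℝ} (hx : x ≠ 0) : Sum.elim x (0 : n → ℝ) ≠ 0 := by
  intro h
  exact hx (funext fun i => congrFun h (Sum.inl i))

lemma posDef_toBlocks₁₁ {A : Matrix m m ℝ} {B : Matrix m n ℝ} {C : Matrix n m ℝ}
    {E : Matrix n n ℝ} (h : (Matrix.fromBlocks A B C E).PosDef) : A.PosDef := by
  refine .of_dotProduct_mulVec_pos ?_ ?_
  · ext i j
    have := congrFun (congrFun h.1 (Sum.inl i)) (Sum.inl j)
    simpa using this
  · intro x hx
    have hv := h.dotProduct_mulVec_pos (sum_elim_ne_zero_left hx)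
    have hstar : star (Sum.elim x (0 : n → ℝ)) = Sum.elim x 0 := by simp
    rw [hstar, fromBlocks_mulVec] at hv
    simp only [mulVec_zero, add_zero, sumElim_dotProduct_sumElim, zero_dotProduct,
      add_zero] at hv
    have hstar2 : star x = x := by simp
    rw [hstar2]
    simpa using hv

lemma posDef_toBlocks₂₂ {A : Matrix m m ℝ} {B : Matrix m n ℝ} {C : Matrix n m ℝ}
    {E : Matrix n n ℝ} (h : (Matrix.fromBlocks A B C E).PosDef) : E.PosDef := by
  refine .of_dotProduct_mulVec_pos ?_ ?_
  · ext i j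
    have := congrFun (congrFun h.1 (Sum.inr i)) (Sum.inr j)
    simpa using this
  · intro x hx
    have hne : Sum.elim (0 : m → ℝ) x ≠ 0 := by
      intro h'
      exact hx (funext fun i => congrFun h' (Sum.inr i))
    have hv := h.dotProduct_mulVec_pos hne
    have hstar : star (Sum.elim (0 : m → ℝ) x) = Sum.elim (0 : m → ℝ) x := by simp
    rw [hstar, fromBlocks_mulVec] at hv
    simp only [mulVec_zero, zero_add, sumElim_dotProduct_sumElim, dotProduct_zero,
      zero_add] at hv
    have hstar2 : star x = x := by simp
    rw [hstar2]
    convert hv using 2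
    simp

lemma posDef_diag_pos {A : Matrix m m ℝ} [DecidableEq m] (h : A.PosDef) (i : m) :
    0 < A i i := by
  have hne : (Pi.single i (1:ℝ) : m → ℝ) ≠ 0 := by
    intro hc
    have h1 : (Pi.single i (1:ℝ) : m → ℝ) i = 0 := by rw [hc]; rfl
    rw [Pi.single_eq_same] at h1
    exact one_ne_zero h1
  have := h.dotProduct_mulVec_pos hne
  have hstar : star (Pi.single i (1:ℝ) : m → ℝ) = Pi.single i 1 := by simp
  rw [hstar, single_dotProduct, one_mul] at this
  simpa [mulVec_single] using this

/-- quadratic-form congruence -/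
lemma dotProduct_conj (P Y : Matrix m m ℝ) (x : m → ℝ) :
    x ⬝ᵥ (Pᵀ * Y * P) *ᵥ x = (P *ᵥ x) ⬝ᵥ Y *ᵥ (P *ᵥ x) := by
  rw [← mulVec_mulVec, ← mulVec_mulVec, dotProduct_mulVec x Pᵀ, vecMul_transpose]

/-- PD of block matrix from PD of block and Schur complement -/
lemma posDef_fromBlocks₁₁ {A : Matrix m m ℝ} [DecidableEq m] {B : Matrix m n ℝ}
    {E : Matrix n n ℝ} (hA : A.PosDef) (hS : (E - Bᴴ * A⁻¹ * B).PosDef) :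
    (Matrix.fromBlocks A B Bᴴ E).PosDef := by
  haveI : Invertible A := Matrix.invertibleOfIsUnitDet A hA.det_pos.ne'.isUnit
  refine .of_dotProduct_mulVec_pos ?_ ?_
  · rw [Matrix.IsHermitian.fromBlocks₁₁ B E hA.1]
    exact hS.1
  · intro x hx
    rw [← Sum.elim_comp_inl_inr x, dotProduct_mulVec,
      Matrix.schur_complement_eq₁₁ B E _ _ hA.1]
    rcases eq_or_ne (x ∘ Sum.inr) 0 with hy | hy
    · have hxl : x ∘ Sum.inl ≠ 0 := by
        intro h'
        apply hx
        funext i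
        cases i with
        | inl i => exact congrFun h' i
        | inr i => exact congrFun hy i
      rw [hy]
      simp only [mulVec_zero, add_zero, star_zero, zero_vecMul, zero_dotProduct, add_zero]
      rw [← dotProduct_mulVec]
      exact hA.dotProduct_mulVec_pos hxl
    · have h1 : 0 ≤ star (x ∘ Sum.inl + (A⁻¹ * B) *ᵥ (x ∘ Sum.inr)) ᵥ* A ⬝ᵥ
          (x ∘ Sum.inl + (A⁻¹ * B) *ᵥ (x ∘ Sum.inr)) := by
        rw [← dotProduct_mulVec]
        exact hA.posSemidef.dotProduct_mulVec_nonneg _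
      have h2 : 0 < star (x ∘ Sum.inr) ᵥ* (E - Bᴴ * A⁻¹ * B) ⬝ᵥ (x ∘ Sum.inr) := by
        rw [← dotProduct_mulVec]
        exact hS.dotProduct_mulVec_pos hy
      linarith

/-- PD of Schur complement from PD of block matrix -/
lemma posDef_schur {A : Matrix m m ℝ} [DecidableEq m] {B : Matrix m n ℝ}
    {E : Matrix n n ℝ} (hA : A.PosDef)
    (hM : (Matrix.fromBlocks A B Bᴴ E).PosDef) : (E - Bᴴ * A⁻¹ * B).PosDef := by
  haveI : Invertible A := Matrix.invertibleOfIsUnitDet A hA.det_pos.ne'.isUnit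
  refine .of_dotProduct_mulVec_pos ?_ ?_
  · rw [← Matrix.IsHermitian.fromBlocks₁₁ B E hA.1]
    exact hM.1
  · intro y hy
    have hne : Sum.elim (-((A⁻¹ * B) *ᵥ y)) y ≠ 0 := by
      intro h'
      exact hy (funext fun i => congrFun h' (Sum.inr i))
    have := hM.dotProduct_mulVec_pos hne
    rw [dotProduct_mulVec, Matrix.schur_complement_eq₁₁ B E _ _ hA.1, neg_add_cancel,
      star_zero, zero_vecMul, zero_dotProduct, zero_add] at this
    rwa [dotProduct_mulVec]

end Aux3


section Aux4

variable {m n p : Type*} [Fintype m] [Fintype n] [Fintype p]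

lemma dotProduct_mulVec_expand' (x y : n → ℝ) (X : Matrix n n ℝ) :
    x ⬝ᵥ X *ᵥ y = ∑ i, ∑ j, x i * (X i j * y j) := by
  simp [dotProduct, mulVec, Finset.mul_sum]

lemma mul_entry_nonneg_of_nonpos {X : Matrix n m ℝ} {Y : Matrix m p ℝ}
    (hX : ∀ i j, X i j ≤ 0) (hY : ∀ i j, Y i j ≤ 0) :
    ∀ i j, 0 ≤ (X * Y) i j := by
  intro i j
  rw [Matrix.mul_apply]
  refine Finset.sum_nonneg fun k _ => ?_
  have := mul_nonneg (neg_nonneg.2 (hX i k)) (neg_nonneg.2 (hY k j))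
  nlinarith [this]

lemma posDef_diag_add {d : m → ℝ} {A : Matrix m m ℝ} [DecidableEq m]
    (hAs : Aᵀ = A) (hAnn : ∀ i j, 0 ≤ A i j)
    (hDA : (Matrix.diagonal d - A).PosDef) : (Matrix.diagonal d + A).PosDef := by
  refine .of_dotProduct_mulVec_pos ?_ ?_
  · show (Matrix.diagonal d + A)ᴴ = _
    rw [conjTranspose_eq_transpose_of_trivial, transpose_add, diagonal_transpose, hAs]
  · intro x hx
    have hstar : star x = x := by simp
    rw [hstar]
    have habs : (fun i => |x i|) ≠ 0 := by
      intro h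
      apply hx
      funext i
      have := congrFun h i
      simpa [abs_eq_zero] using this
    have h1 := hDA.dotProduct_mulVec_pos habs
    have hstar2 : star (fun i => |x i|) = fun i => |x i| := by simp
    rw [hstar2] at h1
    rw [dotProduct_mulVec_expand'] at h1 ⊢
    refine lt_of_lt_of_le h1 (Finset.sum_le_sum fun i _ => Finset.sum_le_sum fun j _ => ?_)
    rcases eq_or_ne i j with rfl | hij
    · simp only [Matrix.diagonal_apply_eq, Matrix.sub_apply, Matrix.add_apply]
      have h2 : |x i| * |x i| = x i * x i := abs_mul_abs_self _
      have h4 : |x i| * ((d i - A i i) * |x i|) = (d i - A i i) * (x i * x i) := by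
        rw [← h2]; ring
      have h5 : x i * ((d i + A i i) * x i) = (d i + A i i) * (x i * x i) := by ring
      rw [h4, h5]
      have h6 := mul_nonneg (hAnn i i) (mul_self_nonneg (x i))
      nlinarith [h6]
    · simp only [Matrix.diagonal_apply_ne _ hij, Matrix.sub_apply, Matrix.add_apply, zero_sub,
        zero_add]
      have h3 : -(|x i| * |x j|) ≤ x i * x j := by
        rw [← abs_mul]
        exact neg_abs_le _
      nlinarith [hAnn i j]

end Aux4
section Helpers

variable {m : Type*} [Fintype m]

lemma psd_nonneg {X : Matrix m m ℝ} (h : X.PosSemidef) (v : m → ℝ) :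
    0 ≤ v ⬝ᵥ X *ᵥ v := by
  have := h.dotProduct_mulVec_nonneg v
  rwa [show star v = v by simp] at this

lemma pd_pos {X : Matrix m m ℝ} (h : X.PosDef) {v : m → ℝ} (hv : v ≠ 0) :
    0 < v ⬝ᵥ X *ᵥ v := by
  have := h.dotProduct_mulVec_pos hv
  rwa [show star v = v by simp] at this

lemma posDef_of_real {X : Matrix m m ℝ} (hsym : Xᵀ = X)
    (h : ∀ v, v ≠ 0 → 0 < v ⬝ᵥ X *ᵥ v) : X.PosDef :=
  .of_dotProduct_mulVec_pos ((real_isHermitian_iff X).2 hsym) fun v hv => by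
    rw [show star v = v by simp]; exact h v hv

end Helpers
/-- Loewner order: `PSDLE A B` means `A ⪯ B`, i.e. `B - A` is positive semidefinite. -/
def PSDLE {n : Type*} [Fintype n] (A B : Matrix n n ℝ) : Prop :=
  (B - A).PosSemidef

/-- `ApproxEps A ε B` means `A ≈_ε B`, i.e. `e^ε • B ⪰ A ⪰ e^{-ε} • B`. -/
def ApproxEps {n : Type*} [Fintype n] (A : Matrix n n ℝ) (ε : ℝ) (B : Matrix n n ℝ) : Prop :=
  PSDLE A (Real.exp ε • B) ∧ PSDLE (Real.exp (-ε) • B) A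

/-- `M` is α-strongly diagonally dominant:
`M_{ii} ≥ (1+α)·Σ_{j≠i} |M_{ij}|` for every `i`. -/
def IsStronglyDD {n : Type*} [Fintype n] [DecidableEq n] (α : ℝ) (M : Matrix n n ℝ) : Prop :=
  ∀ i, (1 + α) * ∑ j ∈ Finset.univ.erase i, |M i j| ≤ M i i

/-- A Laplacian matrix: symmetric, nonpositive off-diagonal entries, zero row sums. -/
def IsLaplacian {n : Type*} [Fintype n] (L : Matrix n n ℝ) : Prop :=
  L.IsSymm ∧ (∀ i j, i ≠ j → L i j ≤ 0) ∧ ∀ i, ∑ j, L i j = 0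

/-- An SDDM matrix: symmetric positive definite, nonpositive off-diagonal entries,
and each diagonal entry at least the sum of absolute values of the off-diagonal
entries in its row. -/
def IsSDDM {n : Type*} [Fintype n] [DecidableEq n] (M : Matrix n n ℝ) : Prop :=
  M.IsSymm ∧ M.PosDef ∧ (∀ i j, i ≠ j → M i j ≤ 0) ∧
    ∀ i, ∑ j ∈ Finset.univ.erase i, |M i j| ≤ M i i

/-- The Schur complement `Schur(M, F)` eliminating the first (`F`) block:
`M_CC - M_CF · M_FF⁻¹ · M_FC`. -/
def schurElimF {F C : Type*} [Fintype F] [Fintype C] [DecidableEq F]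
    (M : Matrix (F ⊕ C) (F ⊕ C) ℝ) : Matrix C C ℝ :=
  M.toBlocks₂₂ - M.toBlocks₂₁ * M.toBlocks₁₁⁻¹ * M.toBlocks₁₂

/-- The Schur complement `Schur(M, S)` eliminating the second (`S`) block:
`M_CC - M_CS · M_SS⁻¹ · M_SC`. -/
def schurElimS {C S : Type*} [Fintype C] [Fintype S] [DecidableEq S]
    (M : Matrix (C ⊕ S) (C ⊕ S) ℝ) : Matrix C C ℝ :=
  M.toBlocks₁₁ - M.toBlocks₁₂ * M.toBlocks₂₂⁻¹ * M.toBlocks₂₁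

/-- splitting of the Schur complement: for an SDDM matrix
`M = [[D − A, M_FC],[M_CF, M_CC]]` with `D` diagonal and `A` nonnegative
symmetric with zero diagonal, setting
`M₁ = [[D, M_FC],[M_CF, diag(M_CF·D⁻¹·M_FC·1)]]` and
`M₂ = [[D − A·D⁻¹·A, (I + A·D⁻¹)·M_FC],[M_CF·(I + D⁻¹·A), 2·M_CC − diag(M_CF·D⁻¹·M_FC·1)]]`,
`Schur(M₁,F)` is a Laplacian, `M₂` is SDDM and
`Schur(M,F) = ½(Schur(M₁,F) + Schur(M₂,F))`. -/
theorem schur_splitting {F C : Type*} [Fintype F] [Fintype C] [DecidableEq F] [DecidableEq C]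
    (D A : Matrix F F ℝ) (MFC : Matrix F C ℝ) (MCF : Matrix C F ℝ) (MCC : Matrix C C ℝ)
    (hDdiag : ∀ i j, i ≠ j → D i j = 0)
    (hAsym : A.IsSymm) (hAnn : ∀ i j, 0 ≤ A i j) (hAdiag : ∀ i, A i i = 0)
    (hM : IsSDDM (Matrix.fromBlocks (D - A) MFC MCF MCC)) :
    IsLaplacian (schurElimF (Matrix.fromBlocks D MFC MCF
        (Matrix.diagonal ((MCF * D⁻¹ * MFC) *ᵥ fun _ => (1 : ℝ))))) ∧
    IsSDDM (Matrix.fromBlocks (D - A * D⁻¹ * A) (((1 : Matrix F F ℝ) + A * D⁻¹) * MFC)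
        (MCF * ((1 : Matrix F F ℝ) + D⁻¹ * A))
        ((2 : ℝ) • MCC - Matrix.diagonal ((MCF * D⁻¹ * MFC) *ᵥ fun _ => (1 : ℝ)))) ∧
    schurElimF (Matrix.fromBlocks (D - A) MFC MCF MCC) =
      (1 / 2 : ℝ) •
        (schurElimF (Matrix.fromBlocks D MFC MCF
            (Matrix.diagonal ((MCF * D⁻¹ * MFC) *ᵥ fun _ => (1 : ℝ)))) +
         schurElimF (Matrix.fromBlocks (D - A * D⁻¹ * A) (((1 : Matrix F F ℝ) + A * D⁻¹) * MFC)
            (MCF * ((1 : Matrix F F ℝ) + D⁻¹ * A))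
            ((2 : ℝ) • MCC - Matrix.diagonal ((MCF * D⁻¹ * MFC) *ᵥ fun _ => (1 : ℝ))))) := by
    classical
  obtain ⟨hMsym, hMpd, hMoff, hMdom⟩ := hM
  have hAt : Aᵀ = A := hAsym
  -- block transposes
  have hts : Matrix.fromBlocks (D - A)ᵀ MCFᵀ MFCᵀ MCCᵀ
      = Matrix.fromBlocks (D - A) MFC MCF MCC := by
    rw [← Matrix.fromBlocks_transpose]; exact hMsym
  have hMCFt : MCFᵀ = MFC := by
    have := congrArg Matrix.toBlocks₁₂ hts
    simpa [Matrix.toBlocks_fromBlocks₁₂] using this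
  have hMFCt : MFCᵀ = MCF := by
    have := congrArg Matrix.toBlocks₂₁ hts
    simpa [Matrix.toBlocks_fromBlocks₂₁] using this
  have hMCCt : MCCᵀ = MCC := by
    have := congrArg Matrix.toBlocks₂₂ hts
    simpa [Matrix.toBlocks_fromBlocks₂₂] using this
  have hDA_pd : (D - A).PosDef := posDef_toBlocks₁₁ hMpd
  have hMCC_pd : MCC.PosDef := posDef_toBlocks₂₂ hMpd
  set d : F → ℝ := fun i => D i i with hd_def
  have hDdiagonal : D = Matrix.diagonal d := by
    ext i j
    rcases eq_or_ne i j with rfl | hij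
    · simp [Matrix.diagonal_apply_eq, hd_def]
    · rw [hDdiag i j hij, Matrix.diagonal_apply_ne _ hij]
  have hd_pos : ∀ i, 0 < d i := by
    intro i
    have h1 := posDef_diag_pos hDA_pd i
    simp only [Matrix.sub_apply, hAdiag i, sub_zero] at h1
    exact h1
  have hDT : Dᵀ = D := by rw [hDdiagonal, Matrix.diagonal_transpose]
  have hD_pd : D.PosDef := by rw [hDdiagonal]; exact Matrix.PosDef.diagonal hd_pos
  have hDdet : IsUnit D.det := hD_pd.det_pos.ne'.isUnit
  have hDAT : (D - A)ᵀ = D - A := by rw [Matrix.transpose_sub, hDT, hAt]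
  have hDAdet : IsUnit (D - A).det := hDA_pd.det_pos.ne'.isUnit
  have hDID : D * D⁻¹ = 1 := Matrix.mul_nonsing_inv _ hDdet
  have hDDI : D⁻¹ * D = 1 := Matrix.nonsing_inv_mul _ hDdet
  have hDinv : D⁻¹ = Matrix.diagonal (fun i => (d i)⁻¹) := by
    refine Matrix.inv_eq_right_inv ?_
    rw [hDdiagonal, Matrix.diagonal_mul_diagonal, ← Matrix.diagonal_one]
    have he : (fun i => d i * (d i)⁻¹) = fun _ => (1:ℝ) :=
      funext fun i => mul_inv_cancel₀ (hd_pos i).ne'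
    rw [he]
  have hDinvT : D⁻¹ᵀ = D⁻¹ := by rw [Matrix.transpose_nonsing_inv, hDT]
  have hDinv_nonneg : ∀ i j, 0 ≤ D⁻¹ i j := by
    intro i j
    rw [hDinv]
    rcases eq_or_ne i j with rfl | hij
    · rw [Matrix.diagonal_apply_eq]
      exact inv_nonneg.2 (hd_pos i).le
    · rw [Matrix.diagonal_apply_ne _ hij]
  have hDAinvT : (D - A)⁻¹ᵀ = (D - A)⁻¹ := by rw [Matrix.transpose_nonsing_inv, hDAT]
  -- entrywise signs of the blocks
  have hMFCle : ∀ i j, MFC i j ≤ 0 := fun i j => by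
    have := hMoff (Sum.inl i) (Sum.inr j) (by simp)
    simpa using this
  have hMCFle : ∀ i j, MCF i j ≤ 0 := fun i j => by
    have := hMoff (Sum.inr i) (Sum.inl j) (by simp)
    simpa using this
  have hMCCoff : ∀ i j, i ≠ j → MCC i j ≤ 0 := fun i j hij => by
    have := hMoff (Sum.inr i) (Sum.inr j) (by simp [hij])
    simpa using this
  -- row sums of M
  have hMrow := rowsum_nonneg_of_dom _ hMoff hMdom
  have hDone : D *ᵥ (fun _ => (1:ℝ)) = d := by
    funext i
    rw [hDdiagonal]
    simp [Matrix.mulVec_diagonal]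
  have hrowFkey : ∀ i, (A *ᵥ fun _ => (1:ℝ)) i - (MFC *ᵥ fun _ => (1:ℝ)) i ≤ d i := by
    intro i
    have h1 := hMrow (Sum.inl i)
    rw [Fintype.sum_sum_type] at h1
    have h2 : ∑ j, Matrix.fromBlocks (D - A) MFC MCF MCC (Sum.inl i) (Sum.inl j)
        = ((D - A) *ᵥ fun _ => (1:ℝ)) i := by
      simp [Matrix.mulVec, dotProduct]
    have h3 : ∑ j, Matrix.fromBlocks (D - A) MFC MCF MCC (Sum.inl i) (Sum.inr j)
        = (MFC *ᵥ fun _ => (1:ℝ)) i := by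
      simp [Matrix.mulVec, dotProduct]
    rw [h2, h3, Matrix.sub_mulVec] at h1
    have h4 := congrFun hDone i
    simp only [Pi.sub_apply] at h1
    linarith
  have hrowC : ∀ i, 0 ≤ (MCF *ᵥ fun _ => (1:ℝ)) i + (MCC *ᵥ fun _ => (1:ℝ)) i := by
    intro i
    have h1 := hMrow (Sum.inr i)
    rw [Fintype.sum_sum_type] at h1
    have h2 : ∑ j, Matrix.fromBlocks (D - A) MFC MCF MCC (Sum.inr i) (Sum.inl j)
        = (MCF *ᵥ fun _ => (1:ℝ)) i := by
      simp [Matrix.mulVec, dotProduct]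
    have h3 : ∑ j, Matrix.fromBlocks (D - A) MFC MCF MCC (Sum.inr i) (Sum.inr j)
        = (MCC *ᵥ fun _ => (1:ℝ)) i := by
      simp [Matrix.mulVec, dotProduct]
    rw [h2, h3] at h1
    exact h1
  have hfF_nonpos : ∀ i, (MFC *ᵥ fun _ => (1:ℝ)) i ≤ 0 := by
    intro i
    simp only [Matrix.mulVec, dotProduct, mul_one]
    exact Finset.sum_nonpos fun j _ => by simpa using hMFCle i j
  have hdomA : ∀ i, ∑ j, A i j ≤ d i := by
    intro i
    have h1 : ∑ j, A i j = (A *ᵥ fun _ => (1:ℝ)) i := by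
      simp [Matrix.mulVec, dotProduct]
    rw [h1]
    have := hrowFkey i
    have := hfF_nonpos i
    linarith
  have hDAinv_nonneg : ∀ i j, 0 ≤ (D - A)⁻¹ i j := by
    have key := mmatrix_inv_nonneg d A hd_pos hAt hAnn hdomA
      (by rw [← hDdiagonal]; exact hDAdet)
    intro i j
    have := key i j
    rwa [← hDdiagonal] at this
  -- algebra identities
  have hADD : A * D⁻¹ * D = A := by rw [Matrix.mul_assoc, hDDI, mul_one]
  have hkey1 : (1 - A * D⁻¹) * (D + A) = D - A * D⁻¹ * A := by
    rw [sub_mul, one_mul, mul_add, hADD]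
    abel
  have hkey2 : (1 + A * D⁻¹) * (D - A) = D - A * D⁻¹ * A := by
    rw [add_mul, one_mul, mul_sub, hADD]
    abel
  have hfact : (D - A) * D⁻¹ * (D + A) = D - A * D⁻¹ * A := by
    rw [Matrix.sub_mul, hDID, ← hkey1]
  have hplus1 : (1 + D⁻¹ * A : Matrix F F ℝ) = D⁻¹ * (D + A) := by
    rw [mul_add, hDDI]
  have hplus2 : (1 + A * D⁻¹ : Matrix F F ℝ) = (D + A) * D⁻¹ := by
    rw [add_mul, hDID]
  have hDplusA_pd : (D + A).PosDef := by
    rw [hDdiagonal]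
    exact posDef_diag_add hAt hAnn (by rw [← hDdiagonal]; exact hDA_pd)
  have hDplusAdet : IsUnit (D + A).det := hDplusA_pd.det_pos.ne'.isUnit
  -- PD of D - A D⁻¹ A
  have hPt : (1 - D⁻¹ * A : Matrix F F ℝ)ᵀ = 1 - A * D⁻¹ := by
    rw [Matrix.transpose_sub, Matrix.transpose_one, Matrix.transpose_mul, hAt, hDinvT]
  have hQt : (1 + D⁻¹ * A : Matrix F F ℝ)ᵀ = 1 + A * D⁻¹ := by
    rw [Matrix.transpose_add, Matrix.transpose_one, Matrix.transpose_mul, hAt, hDinvT]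
  have hZT : (D - A * D⁻¹ * A)ᵀ = D - A * D⁻¹ * A := by
    rw [Matrix.transpose_sub, hDT, Matrix.transpose_mul, Matrix.transpose_mul, hAt, hDinvT,
      ← Matrix.mul_assoc]
  have hZ_pd : (D - A * D⁻¹ * A).PosDef := by
    have e1 : (1 - D⁻¹ * A : Matrix F F ℝ)ᵀ * (D + A) * (1 - D⁻¹ * A)
        = (D - A * D⁻¹ * A) - (D - A * D⁻¹ * A) * (D⁻¹ * A) := by
      rw [hPt, hkey1, mul_sub, mul_one]
    have e2 : (1 + D⁻¹ * A : Matrix F F ℝ)ᵀ * (D - A) * (1 + D⁻¹ * A)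
        = (D - A * D⁻¹ * A) + (D - A * D⁻¹ * A) * (D⁻¹ * A) := by
      rw [hQt, hkey2, mul_add, mul_one]
    have e3 : (1 - D⁻¹ * A : Matrix F F ℝ)ᵀ * (D + A) * (1 - D⁻¹ * A)
          + (1 + D⁻¹ * A : Matrix F F ℝ)ᵀ * (D - A) * (1 + D⁻¹ * A)
        = (D - A * D⁻¹ * A) + (D - A * D⁻¹ * A) := by
      rw [e1, e2]; abel
    refine posDef_of_real hZT (fun x hx => ?_)
    have hform : ((1 - D⁻¹ * A) *ᵥ x) ⬝ᵥ (D + A) *ᵥ ((1 - D⁻¹ * A) *ᵥ x)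
          + ((1 + D⁻¹ * A) *ᵥ x) ⬝ᵥ (D - A) *ᵥ ((1 + D⁻¹ * A) *ᵥ x)
        = x ⬝ᵥ (D - A * D⁻¹ * A) *ᵥ x + x ⬝ᵥ (D - A * D⁻¹ * A) *ᵥ x := by
      calc ((1 - D⁻¹ * A) *ᵥ x) ⬝ᵥ (D + A) *ᵥ ((1 - D⁻¹ * A) *ᵥ x)
            + ((1 + D⁻¹ * A) *ᵥ x) ⬝ᵥ (D - A) *ᵥ ((1 + D⁻¹ * A) *ᵥ x)
          = x ⬝ᵥ ((1 - D⁻¹ * A)ᵀ * (D + A) * (1 - D⁻¹ * A)) *ᵥ x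
            + x ⬝ᵥ ((1 + D⁻¹ * A)ᵀ * (D - A) * (1 + D⁻¹ * A)) *ᵥ x := by
            rw [dotProduct_conj, dotProduct_conj]
        _ = x ⬝ᵥ ((1 - D⁻¹ * A)ᵀ * (D + A) * (1 - D⁻¹ * A)
              + (1 + D⁻¹ * A)ᵀ * (D - A) * (1 + D⁻¹ * A)) *ᵥ x := by
            rw [Matrix.add_mulVec, dotProduct_add]
        _ = x ⬝ᵥ ((D - A * D⁻¹ * A) + (D - A * D⁻¹ * A)) *ᵥ x := by rw [e3]
        _ = x ⬝ᵥ (D - A * D⁻¹ * A) *ᵥ x + x ⬝ᵥ (D - A * D⁻¹ * A) *ᵥ x := by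
            rw [Matrix.add_mulVec, dotProduct_add]
    have hsum : (1 - D⁻¹ * A) *ᵥ x + (1 + D⁻¹ * A) *ᵥ x = x + x := by
      rw [← Matrix.add_mulVec]
      have : (1 - D⁻¹ * A) + (1 + D⁻¹ * A) = (1 + 1 : Matrix F F ℝ) := by abel
      rw [this, Matrix.add_mulVec, Matrix.one_mulVec]
    have hxx : x + x ≠ 0 := by
      intro h
      apply hx
      funext i
      have h8 := congrFun h i
      simp only [Pi.add_apply, Pi.zero_apply] at h8
      show x i = 0
      linarith
    have hcase : (1 - D⁻¹ * A) *ᵥ x ≠ 0 ∨ (1 + D⁻¹ * A) *ᵥ x ≠ 0 := by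
      by_contra hc
      push_neg at hc
      rw [hc.1, hc.2] at hsum
      exact hxx (by rw [← hsum]; simp)
    have t1 : 0 ≤ ((1 - D⁻¹ * A) *ᵥ x) ⬝ᵥ (D + A) *ᵥ ((1 - D⁻¹ * A) *ᵥ x) :=
      psd_nonneg hDplusA_pd.posSemidef _
    have t2 : 0 ≤ ((1 + D⁻¹ * A) *ᵥ x) ⬝ᵥ (D - A) *ᵥ ((1 + D⁻¹ * A) *ᵥ x) :=
      psd_nonneg hDA_pd.posSemidef _
    rcases hcase with hc | hc
    · have := pd_pos hDplusA_pd hc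
      linarith [hform]
    · have := pd_pos hDA_pd hc
      linarith [hform]
  have hZdet : IsUnit (D - A * D⁻¹ * A).det := hZ_pd.det_pos.ne'.isUnit
  -- the key inverse identity
  have hZinv : (D - A * D⁻¹ * A)⁻¹ = (D + A)⁻¹ * (D * (D - A)⁻¹) := by
    rw [← hfact, Matrix.mul_inv_rev, Matrix.mul_inv_rev,
      Matrix.nonsing_inv_nonsing_inv _ hDdet]
  have hstep1 : (1 + D⁻¹ * A : Matrix F F ℝ) * (D + A)⁻¹ = D⁻¹ := by
    rw [hplus1, Matrix.mul_assoc, Matrix.mul_nonsing_inv _ hDplusAdet, mul_one]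
  have hSchurAlg : (1 + D⁻¹ * A) * (D - A * D⁻¹ * A)⁻¹ * (1 + A * D⁻¹)
      = (D - A)⁻¹ + (D - A)⁻¹ - D⁻¹ := by
    have h6 : (D + A) * D⁻¹ = 1 + 1 - (D - A) * D⁻¹ := by
      have h7 : D + A = D + D - (D - A) := by abel
      rw [h7, Matrix.sub_mul, Matrix.add_mul, hDID]
    calc (1 + D⁻¹ * A) * (D - A * D⁻¹ * A)⁻¹ * (1 + A * D⁻¹)
        = ((1 + D⁻¹ * A) * (D + A)⁻¹) * (D * (D - A)⁻¹) * (1 + A * D⁻¹) := by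
          rw [hZinv, ← Matrix.mul_assoc (1 + D⁻¹ * A) ((D + A)⁻¹) (D * (D - A)⁻¹)]
      _ = (D⁻¹ * (D * (D - A)⁻¹)) * (1 + A * D⁻¹) := by rw [hstep1]
      _ = (D - A)⁻¹ * ((D + A) * D⁻¹) := by
          rw [← Matrix.mul_assoc, ← Matrix.mul_assoc, hDDI, one_mul, hplus2, Matrix.mul_assoc]
      _ = (D - A)⁻¹ * (1 + 1) - (D - A)⁻¹ * ((D - A) * D⁻¹) := by
          rw [h6, Matrix.mul_sub]
      _ = (D - A)⁻¹ + (D - A)⁻¹ - D⁻¹ := by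
          rw [Matrix.mul_add, mul_one, ← Matrix.mul_assoc, Matrix.nonsing_inv_mul _ hDAdet,
            one_mul]
  have hdiff : (D - A)⁻¹ * A * D⁻¹ = (D - A)⁻¹ - D⁻¹ := by
    have hA_eq : A = D - (D - A) := by abel
    calc (D - A)⁻¹ * A * D⁻¹ = (D - A)⁻¹ * (D - (D - A)) * D⁻¹ := by rw [← hA_eq]
      _ = ((D - A)⁻¹ * D - 1) * D⁻¹ := by
          rw [Matrix.mul_sub, Matrix.nonsing_inv_mul _ hDAdet]
      _ = (D - A)⁻¹ - D⁻¹ := by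
          rw [Matrix.sub_mul, one_mul, Matrix.mul_assoc, hDID, mul_one]
  -- stage 3
  set v := (MCF * D⁻¹ * MFC) *ᵥ (fun _ => (1:ℝ)) with hv_def
  have hP0_nonneg : ∀ i j, 0 ≤ (MCF * D⁻¹ * MFC) i j := by
    have h1 : ∀ i j, (D⁻¹ * MFC) i j ≤ 0 := mul_entry_nonpos_right hDinv_nonneg hMFCle
    have h2 := mul_entry_nonneg_of_nonpos hMCFle h1
    intro i j
    have h3 := h2 i j
    rwa [← Matrix.mul_assoc] at h3
  have hP0T : (MCF * D⁻¹ * MFC)ᵀ = MCF * D⁻¹ * MFC := by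
    rw [Matrix.transpose_mul, Matrix.transpose_mul, hMFCt, hDinvT, hMCFt, ← Matrix.mul_assoc]
  have hP1T : (MCF * (D - A)⁻¹ * MFC)ᵀ = MCF * (D - A)⁻¹ * MFC := by
    rw [Matrix.transpose_mul, Matrix.transpose_mul, hMFCt, hDAinvT, hMCFt, ← Matrix.mul_assoc]
  have hS1row : ∀ i, ∑ j, (Matrix.diagonal v - MCF * D⁻¹ * MFC) i j = 0 := by
    intro i
    simp only [Matrix.sub_apply]
    rw [Finset.sum_sub_distrib]
    have h1 : ∑ j, Matrix.diagonal v i j = v i := by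
      simp [Matrix.diagonal_apply, Finset.sum_ite_eq]
    have h2 : ∑ j, (MCF * D⁻¹ * MFC) i j = v i := by
      rw [rowSum_eq_mulVec_one]
    rw [h1, h2, sub_self]
  have hMFCH : MFCᴴ = MCF := by
    rw [Matrix.conjTranspose_eq_transpose_of_trivial, hMFCt]
  have hSM_pd : (MCC - MCF * (D - A)⁻¹ * MFC).PosDef := by
    have h1 : (Matrix.fromBlocks (D - A) MFC MFCᴴ MCC).PosDef := by rw [hMFCH]; exact hMpd
    have h2 := posDef_schur hDA_pd h1
    rwa [hMFCH] at h2
  have hSMrow : ∀ i, 0 ≤ ((MCC - MCF * (D - A)⁻¹ * MFC) *ᵥ (fun _ => (1:ℝ))) i := by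
    intro i
    set t := (D - A)⁻¹ *ᵥ (MFC *ᵥ (fun _ => (1:ℝ))) with ht
    have hmt_le_one : ∀ k, (-t) k ≤ 1 := by
      intro k
      have h1 : ∀ j, (-(MFC *ᵥ fun _ => (1:ℝ))) j ≤ ((D - A) *ᵥ fun _ => (1:ℝ)) j := by
        intro j
        have h5 : ((D - A) *ᵥ fun _ => (1:ℝ)) j = d j - (A *ᵥ fun _ => (1:ℝ)) j := by
          rw [Matrix.sub_mulVec]
          simp only [Pi.sub_apply]
          rw [congrFun hDone j]
        rw [h5]
        simp only [Pi.neg_apply]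
        linarith [hrowFkey j]
      have h3 : -t = (D - A)⁻¹ *ᵥ (-(MFC *ᵥ fun _ => (1:ℝ))) := by
        rw [ht, Matrix.mulVec_neg]
      have h2 : (-t) k ≤ ((D - A)⁻¹ *ᵥ ((D - A) *ᵥ fun _ => (1:ℝ))) k := by
        rw [h3]
        exact mulVec_mono hDAinv_nonneg h1 k
      have h4 : (D - A)⁻¹ *ᵥ ((D - A) *ᵥ fun _ => (1:ℝ)) = (fun _ => (1:ℝ)) := by
        rw [Matrix.mulVec_mulVec, Matrix.nonsing_inv_mul _ hDAdet, Matrix.one_mulVec]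
      rw [h4] at h2
      exact h2
    have h6 : ((MCC - MCF * (D - A)⁻¹ * MFC) *ᵥ fun _ => (1:ℝ)) i
        = (MCC *ᵥ fun _ => (1:ℝ)) i + (MCF *ᵥ (-t)) i := by
      rw [Matrix.sub_mulVec]
      simp only [Pi.sub_apply]
      rw [← Matrix.mulVec_mulVec, ← Matrix.mulVec_mulVec, ← ht, Matrix.mulVec_neg]
      simp only [Pi.neg_apply]
      ring
    have h7 : (MCF *ᵥ fun _ => (1:ℝ)) i ≤ (MCF *ᵥ (-t)) i :=
      mulVec_antitone hMCFle hmt_le_one i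
    rw [h6]
    linarith [hrowC i]
  have hQdiff : (MCF * ((D - A)⁻¹ * (A * D⁻¹))) * MFC
      = MCF * (D - A)⁻¹ * MFC - MCF * D⁻¹ * MFC := by
    have h1 : (D - A)⁻¹ * (A * D⁻¹) = (D - A)⁻¹ - D⁻¹ := by
      rw [← Matrix.mul_assoc, hdiff]
    rw [h1, Matrix.mul_sub, Matrix.sub_mul]
  have hdiffEnt : ∀ i j, 0 ≤ ((MCF * ((D - A)⁻¹ * (A * D⁻¹))) * MFC) i j := by
    have h1 : ∀ i j, 0 ≤ ((D - A)⁻¹ * (A * D⁻¹)) i j :=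
      mul_entry_nonneg hDAinv_nonneg (mul_entry_nonneg hAnn hDinv_nonneg)
    have h2 : ∀ i j, (MCF * ((D - A)⁻¹ * (A * D⁻¹))) i j ≤ 0 :=
      mul_entry_nonpos_left hMCFle h1
    exact mul_entry_nonneg_of_nonpos h2 hMFCle
  have hSMS1_psd : ((MCC - MCF * (D - A)⁻¹ * MFC)
      - (Matrix.diagonal v - MCF * D⁻¹ * MFC)).PosSemidef := by
    apply posSemidef_of_rowsum
    · rw [Matrix.transpose_sub, Matrix.transpose_sub, Matrix.transpose_sub, hMCCt, hP1T,
        Matrix.diagonal_transpose, hP0T]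
    · intro i j hij
      have h1 : ((MCC - MCF * (D - A)⁻¹ * MFC) - (Matrix.diagonal v - MCF * D⁻¹ * MFC)) i j
          = MCC i j - ((MCF * ((D - A)⁻¹ * (A * D⁻¹))) * MFC) i j := by
        rw [hQdiff]
        simp only [Matrix.sub_apply, Matrix.diagonal_apply_ne _ hij]
        ring
      rw [h1]
      have h2 := hdiffEnt i j
      have h3 := hMCCoff i j hij
      linarith
    · intro i
      simp only [Matrix.sub_apply]
      rw [Finset.sum_sub_distrib]
      have h3 : ∑ j, (MCC i j - (MCF * (D - A)⁻¹ * MFC) i j)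
          = ((MCC - MCF * (D - A)⁻¹ * MFC) *ᵥ fun _ => (1:ℝ)) i := by
        rw [← rowSum_eq_mulVec_one]
        simp [Matrix.sub_apply]
      have h4 : ∑ j, (Matrix.diagonal v i j - (MCF * D⁻¹ * MFC) i j) = 0 := by
        have := hS1row i
        simpa [Matrix.sub_apply] using this
      rw [h3, h4]
      simpa using hSMrow i
  have hprod : MCF * (1 + D⁻¹ * A) * (D - A * D⁻¹ * A)⁻¹ * ((1 + A * D⁻¹) * MFC)
      = MCF * (D - A)⁻¹ * MFC + MCF * (D - A)⁻¹ * MFC - MCF * D⁻¹ * MFC := by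
    calc MCF * (1 + D⁻¹ * A) * (D - A * D⁻¹ * A)⁻¹ * ((1 + A * D⁻¹) * MFC)
        = MCF * ((1 + D⁻¹ * A) * (D - A * D⁻¹ * A)⁻¹ * (1 + A * D⁻¹)) * MFC := by
          simp only [Matrix.mul_assoc]
      _ = MCF * ((D - A)⁻¹ + (D - A)⁻¹ - D⁻¹) * MFC := by rw [hSchurAlg]
      _ = MCF * (D - A)⁻¹ * MFC + MCF * (D - A)⁻¹ * MFC - MCF * D⁻¹ * MFC := by
          rw [Matrix.mul_sub, Matrix.mul_add, Matrix.sub_mul, Matrix.add_mul]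
  have hS2eq : (2:ℝ) • MCC - Matrix.diagonal v
        - MCF * (1 + D⁻¹ * A) * (D - A * D⁻¹ * A)⁻¹ * ((1 + A * D⁻¹) * MFC)
      = (MCC - MCF * (D - A)⁻¹ * MFC)
        + ((MCC - MCF * (D - A)⁻¹ * MFC) - (Matrix.diagonal v - MCF * D⁻¹ * MFC)) := by
    rw [hprod, two_smul]
    abel
  have hS2_pd : ((2:ℝ) • MCC - Matrix.diagonal v
      - MCF * (1 + D⁻¹ * A) * (D - A * D⁻¹ * A)⁻¹ * ((1 + A * D⁻¹) * MFC)).PosDef := by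
    rw [hS2eq]
    exact hSM_pd.add_posSemidef hSMS1_psd
  -- stage 4 : assemble the three statements
  have hS1comp : schurElimF (Matrix.fromBlocks D MFC MCF (Matrix.diagonal v))
      = Matrix.diagonal v - MCF * D⁻¹ * MFC := by
    simp only [schurElimF, Matrix.toBlocks_fromBlocks₁₁, Matrix.toBlocks_fromBlocks₁₂,
      Matrix.toBlocks_fromBlocks₂₁, Matrix.toBlocks_fromBlocks₂₂]
  have hSMcomp : schurElimF (Matrix.fromBlocks (D - A) MFC MCF MCC)
      = MCC - MCF * (D - A)⁻¹ * MFC := by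
    simp only [schurElimF, Matrix.toBlocks_fromBlocks₁₁, Matrix.toBlocks_fromBlocks₁₂,
      Matrix.toBlocks_fromBlocks₂₁, Matrix.toBlocks_fromBlocks₂₂]
  have hS2comp : schurElimF (Matrix.fromBlocks (D - A * D⁻¹ * A) ((1 + A * D⁻¹) * MFC)
        (MCF * (1 + D⁻¹ * A)) ((2:ℝ) • MCC - Matrix.diagonal v))
      = (2:ℝ) • MCC - Matrix.diagonal v
        - MCF * (1 + D⁻¹ * A) * (D - A * D⁻¹ * A)⁻¹ * ((1 + A * D⁻¹) * MFC) := by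
    simp only [schurElimF, Matrix.toBlocks_fromBlocks₁₁, Matrix.toBlocks_fromBlocks₁₂,
      Matrix.toBlocks_fromBlocks₂₁, Matrix.toBlocks_fromBlocks₂₂]
  -- entrywise facts for M₂
  have h1AD_nonneg : ∀ i j, 0 ≤ (1 + A * D⁻¹ : Matrix F F ℝ) i j := by
    intro i j
    simp only [Matrix.add_apply]
    have h1 := mul_entry_nonneg hAnn hDinv_nonneg i j
    rcases eq_or_ne i j with rfl | hij
    · rw [Matrix.one_apply_eq]; linarith
    · rw [Matrix.one_apply_ne hij]; linarith
  have h1DA_nonneg : ∀ i j, 0 ≤ (1 + D⁻¹ * A : Matrix F F ℝ) i j := by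
    intro i j
    simp only [Matrix.add_apply]
    have h1 := mul_entry_nonneg hDinv_nonneg hAnn i j
    rcases eq_or_ne i j with rfl | hij
    · rw [Matrix.one_apply_eq]; linarith
    · rw [Matrix.one_apply_ne hij]; linarith
  have hB12le : ∀ i j, (((1 + A * D⁻¹) : Matrix F F ℝ) * MFC) i j ≤ 0 :=
    mul_entry_nonpos_right h1AD_nonneg hMFCle
  have hB21le : ∀ i j, (MCF * ((1 + D⁻¹ * A) : Matrix F F ℝ)) i j ≤ 0 :=
    mul_entry_nonpos_left hMCFle h1DA_nonneg
  have hB11off : ∀ i j, i ≠ j → (D - A * D⁻¹ * A) i j ≤ 0 := by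
    intro i j hij
    simp only [Matrix.sub_apply, hDdiag i j hij, zero_sub, neg_nonpos]
    exact mul_entry_nonneg (mul_entry_nonneg hAnn hDinv_nonneg) hAnn i j
  have hB22off : ∀ i j, i ≠ j → ((2:ℝ) • MCC - Matrix.diagonal v) i j ≤ 0 := by
    intro i j hij
    simp only [Matrix.sub_apply, Matrix.smul_apply, Matrix.diagonal_apply_ne _ hij, sub_zero,
      smul_eq_mul]
    have := hMCCoff i j hij
    linarith
  have hM2off : ∀ i j : F ⊕ C, i ≠ j →
      Matrix.fromBlocks (D - A * D⁻¹ * A) ((1 + A * D⁻¹) * MFC)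
        (MCF * (1 + D⁻¹ * A)) ((2:ℝ) • MCC - Matrix.diagonal v) i j ≤ 0 := by
    intro i j hij
    cases i with
    | inl i' =>
      cases j with
      | inl j' =>
        have hne : i' ≠ j' := fun h => hij (by rw [h])
        simpa using hB11off i' j' hne
      | inr j' => simpa using hB12le i' j'
    | inr i' =>
      cases j with
      | inl j' => simpa using hB21le i' j'
      | inr j' =>
        have hne : i' ≠ j' := fun h => hij (by rw [h])
        simpa using hB22off i' j' hne
  -- row sums of M₂
  have hDinvg : ∀ k, (D⁻¹ *ᵥ ((A *ᵥ fun _ => (1:ℝ)) - (MFC *ᵥ fun _ => (1:ℝ)))) k ≤ 1 := by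
    intro k
    rw [hDinv, Matrix.mulVec_diagonal]
    have h1 : ((A *ᵥ fun _ => (1:ℝ)) - (MFC *ᵥ fun _ => (1:ℝ))) k ≤ d k := by
      simp only [Pi.sub_apply]
      exact hrowFkey k
    calc (d k)⁻¹ * ((A *ᵥ fun _ => (1:ℝ)) - MFC *ᵥ fun _ => (1:ℝ)) k
        ≤ (d k)⁻¹ * d k := by
          exact mul_le_mul_of_nonneg_left h1 (inv_nonneg.2 (hd_pos k).le)
      _ = 1 := inv_mul_cancel₀ (hd_pos k).ne'
  have hM2rowF : ∀ i, 0 ≤ ∑ j, Matrix.fromBlocks (D - A * D⁻¹ * A) ((1 + A * D⁻¹) * MFC)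
      (MCF * (1 + D⁻¹ * A)) ((2:ℝ) • MCC - Matrix.diagonal v) (Sum.inl i) j := by
    intro i
    rw [Fintype.sum_sum_type]
    have h1 : ∑ j, Matrix.fromBlocks (D - A * D⁻¹ * A) ((1 + A * D⁻¹) * MFC)
        (MCF * (1 + D⁻¹ * A)) ((2:ℝ) • MCC - Matrix.diagonal v) (Sum.inl i) (Sum.inl j)
        = ((D - A * D⁻¹ * A) *ᵥ fun _ => (1:ℝ)) i := by
      simp [Matrix.mulVec, dotProduct]
    have h2 : ∑ j, Matrix.fromBlocks (D - A * D⁻¹ * A) ((1 + A * D⁻¹) * MFC)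
        (MCF * (1 + D⁻¹ * A)) ((2:ℝ) • MCC - Matrix.diagonal v) (Sum.inl i) (Sum.inr j)
        = (((1 + A * D⁻¹) * MFC) *ᵥ fun _ => (1:ℝ)) i := by
      simp [Matrix.mulVec, dotProduct]
    rw [h1, h2]
    have h3 : ((D - A * D⁻¹ * A) *ᵥ fun _ => (1:ℝ)) i
        = d i - (A *ᵥ (D⁻¹ *ᵥ (A *ᵥ fun _ => (1:ℝ)))) i := by
      rw [Matrix.sub_mulVec]
      simp only [Pi.sub_apply]
      rw [congrFun hDone i, ← Matrix.mulVec_mulVec, ← Matrix.mulVec_mulVec]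
    have h4 : (((1 + A * D⁻¹) * MFC) *ᵥ fun _ => (1:ℝ)) i
        = (MFC *ᵥ fun _ => (1:ℝ)) i + (A *ᵥ (D⁻¹ *ᵥ (MFC *ᵥ fun _ => (1:ℝ)))) i := by
      rw [Matrix.add_mul, Matrix.one_mul, Matrix.add_mulVec]
      simp only [Pi.add_apply]
      rw [← Matrix.mulVec_mulVec, ← Matrix.mulVec_mulVec]
    rw [h3, h4]
    have h5 : (A *ᵥ (D⁻¹ *ᵥ (A *ᵥ fun _ => (1:ℝ)))) i
          - (A *ᵥ (D⁻¹ *ᵥ (MFC *ᵥ fun _ => (1:ℝ)))) i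
        = (A *ᵥ (D⁻¹ *ᵥ ((A *ᵥ fun _ => (1:ℝ)) - (MFC *ᵥ fun _ => (1:ℝ))))) i := by
      rw [Matrix.mulVec_sub, Matrix.mulVec_sub]
      simp
    have h6 : (A *ᵥ (D⁻¹ *ᵥ ((A *ᵥ fun _ => (1:ℝ)) - (MFC *ᵥ fun _ => (1:ℝ))))) i
        ≤ (A *ᵥ fun _ => (1:ℝ)) i :=
      mulVec_mono hAnn hDinvg i
    have h7 := hrowFkey i
    linarith
  have hM2rowC : ∀ i, 0 ≤ ∑ j, Matrix.fromBlocks (D - A * D⁻¹ * A) ((1 + A * D⁻¹) * MFC)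
      (MCF * (1 + D⁻¹ * A)) ((2:ℝ) • MCC - Matrix.diagonal v) (Sum.inr i) j := by
    intro i
    rw [Fintype.sum_sum_type]
    have h1 : ∑ j, Matrix.fromBlocks (D - A * D⁻¹ * A) ((1 + A * D⁻¹) * MFC)
        (MCF * (1 + D⁻¹ * A)) ((2:ℝ) • MCC - Matrix.diagonal v) (Sum.inr i) (Sum.inl j)
        = ((MCF * (1 + D⁻¹ * A)) *ᵥ fun _ => (1:ℝ)) i := by
      simp [Matrix.mulVec, dotProduct]
    have h2 : ∑ j, Matrix.fromBlocks (D - A * D⁻¹ * A) ((1 + A * D⁻¹) * MFC)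
        (MCF * (1 + D⁻¹ * A)) ((2:ℝ) • MCC - Matrix.diagonal v) (Sum.inr i) (Sum.inr j)
        = (((2:ℝ) • MCC - Matrix.diagonal v) *ᵥ fun _ => (1:ℝ)) i := by
      simp [Matrix.mulVec, dotProduct]
    rw [h1, h2]
    have h3 : ((MCF * (1 + D⁻¹ * A)) *ᵥ fun _ => (1:ℝ)) i
        = (MCF *ᵥ fun _ => (1:ℝ)) i + (MCF *ᵥ (D⁻¹ *ᵥ (A *ᵥ fun _ => (1:ℝ)))) i := by
      rw [Matrix.mul_add, Matrix.mul_one, Matrix.add_mulVec]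
      simp only [Pi.add_apply]
      rw [← Matrix.mulVec_mulVec, ← Matrix.mulVec_mulVec]
    have h4 : (((2:ℝ) • MCC - Matrix.diagonal v) *ᵥ fun _ => (1:ℝ)) i
        = 2 * (MCC *ᵥ fun _ => (1:ℝ)) i - (MCF *ᵥ (D⁻¹ *ᵥ (MFC *ᵥ fun _ => (1:ℝ)))) i := by
      rw [Matrix.sub_mulVec]
      simp only [Pi.sub_apply]
      rw [Matrix.smul_mulVec, Matrix.mulVec_diagonal, mul_one, hv_def,
        ← Matrix.mulVec_mulVec, ← Matrix.mulVec_mulVec]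
      simp [smul_eq_mul]
    rw [h3, h4]
    have h5 : (MCF *ᵥ (D⁻¹ *ᵥ (A *ᵥ fun _ => (1:ℝ)))) i
          - (MCF *ᵥ (D⁻¹ *ᵥ (MFC *ᵥ fun _ => (1:ℝ)))) i
        = (MCF *ᵥ (D⁻¹ *ᵥ ((A *ᵥ fun _ => (1:ℝ)) - (MFC *ᵥ fun _ => (1:ℝ))))) i := by
      rw [Matrix.mulVec_sub, Matrix.mulVec_sub]
      simp
    have h6 : (MCF *ᵥ fun _ => (1:ℝ)) i
        ≤ (MCF *ᵥ (D⁻¹ *ᵥ ((A *ᵥ fun _ => (1:ℝ)) - (MFC *ᵥ fun _ => (1:ℝ))))) i :=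
      mulVec_antitone hMCFle hDinvg i
    have h7 := hrowC i
    linarith
  -- symmetry pieces for M₂
  have hB12T : ((1 + A * D⁻¹) * MFC)ᵀ = MCF * (1 + D⁻¹ * A) := by
    rw [Matrix.transpose_mul, hMFCt, Matrix.transpose_add, Matrix.transpose_one,
      Matrix.transpose_mul, hDinvT, hAt]
  have hB21T : (MCF * (1 + D⁻¹ * A))ᵀ = (1 + A * D⁻¹) * MFC := by
    rw [Matrix.transpose_mul, hMCFt, Matrix.transpose_add, Matrix.transpose_one,
      Matrix.transpose_mul, hDinvT, hAt]
  have hB22T : ((2:ℝ) • MCC - Matrix.diagonal v)ᵀ = (2:ℝ) • MCC - Matrix.diagonal v := by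
    rw [Matrix.transpose_sub, Matrix.transpose_smul, hMCCt, Matrix.diagonal_transpose]
  have hB12H : ((1 + A * D⁻¹) * MFC)ᴴ = MCF * (1 + D⁻¹ * A) := by
    rw [Matrix.conjTranspose_eq_transpose_of_trivial, hB12T]
  refine ⟨?_, ⟨?_, ?_, ?_, ?_⟩, ?_⟩
  · -- Laplacian
    rw [hS1comp]
    refine ⟨?_, ?_, ?_⟩
    · show (Matrix.diagonal v - MCF * D⁻¹ * MFC)ᵀ = _
      rw [Matrix.transpose_sub, Matrix.diagonal_transpose, hP0T]
    · intro i j hij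
      simp only [Matrix.sub_apply, Matrix.diagonal_apply_ne _ hij, zero_sub, neg_nonpos]
      exact hP0_nonneg i j
    · exact hS1row
  · -- M₂ symmetric
    show (Matrix.fromBlocks _ _ _ _)ᵀ = _
    rw [Matrix.fromBlocks_transpose, hZT, hB12T, hB21T, hB22T]
  · -- M₂ positive definite
    rw [← hB12H]
    refine posDef_fromBlocks₁₁ hZ_pd ?_
    rw [hB12H]
    exact hS2_pd
  · -- M₂ offdiagonal
    exact hM2off
  · -- M₂ diagonally dominant
    intro i
    refine dom_of_rowsum_nonneg _ (fun j hij => hM2off i j hij) ?_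
    cases i with
    | inl i' => exact hM2rowF i'
    | inr i' => exact hM2rowC i'
  · -- the splitting identity
    rw [hSMcomp, hS1comp, hS2comp, hS2eq]
    have hcollapse : (Matrix.diagonal v - MCF * D⁻¹ * MFC)
          + ((MCC - MCF * (D - A)⁻¹ * MFC)
            + ((MCC - MCF * (D - A)⁻¹ * MFC) - (Matrix.diagonal v - MCF * D⁻¹ * MFC)))
        = (MCC - MCF * (D - A)⁻¹ * MFC) + (MCC - MCF * (D - A)⁻¹ * MFC) := by
      abel
    rw [hcollapse, ← two_smul ℝ (MCC - MCF * (D - A)⁻¹ * MFC), smul_smul]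
    norm_num
end
end

section
/- Let D be a diagonal matrix with positive diagonal entries and A a symmetric matrix with zero diagonal such that D − A is α-strongly diagonally dominant for some α ≥ 0. Then D − A·D^{−1}·A is ((1+α)² − 1)-strongly diagonally dominant. -/
open Matrix BigOperators Finset
open scoped Classical

noncomputable section

/-- if `D` is diagonal with positive diagonal, `A` symmetric with
zero diagonal, and `D − A` is α-strongly diagonally dominant (`α ≥ 0`), then
`D − A·D⁻¹·A` is `((1+α)² − 1)`-strongly diagonally dominant. -/
theorem strongly_dd_improves {n : Type*} [Fintype n] [DecidableEq n]
    (D A : Matrix n n ℝ) (α : ℝ) (hα : 0 ≤ α)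
    (hDdiag : ∀ i j, i ≠ j → D i j = 0) (hDpos : ∀ i, 0 < D i i)
    (hAsym : A.IsSymm) (hAdiag : ∀ i, A i i = 0)
    (hdd : IsStronglyDD α (D - A)) :
    IsStronglyDD ((1 + α) ^ 2 - 1) (D - A * D⁻¹ * A) := by
  intro i
  set d : n → ℝ := fun k => D k k with hd
  have hdpos : ∀ k, 0 < d k := hDpos
  have h1α : (0:ℝ) < 1 + α := by linarith
  have hDeq : D = Matrix.diagonal d := by
    ext a b
    by_cases h : a = b
    · subst h; simp [Matrix.diagonal, hd]
    · simp [Matrix.diagonal, h, hDdiag a b h]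
  have hDinv : D⁻¹ = Matrix.diagonal (fun k => (d k)⁻¹) := by
    apply Matrix.inv_eq_right_inv
    rw [hDeq, Matrix.diagonal_mul_diagonal]
    convert Matrix.diagonal_one using 2
    funext k
    exact mul_inv_cancel₀ (ne_of_gt (hdpos k))
  have hsym : ∀ a b, A b a = A a b := fun a b => hAsym.apply a b
  set S : n → ℝ := fun k => ∑ j, |A k j| with hS
  have hSd : ∀ k, (1 + α) * S k ≤ d k := by
    intro k
    have h0 := hdd k
    have h1 : ∑ j ∈ Finset.univ.erase k, |(D - A) k j| = S k := by
      have h2 : S k = ∑ j ∈ Finset.univ.erase k, |A k j| := by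
        rw [eq_comm]
        apply Finset.sum_erase
        simp [hAdiag k]
      rw [h2]
      apply Finset.sum_congr rfl
      intro j hj
      have hjk : j ≠ k := Finset.ne_of_mem_erase hj
      rw [Matrix.sub_apply, hDdiag k j (Ne.symm hjk), zero_sub, abs_neg]
    have h3 : (D - A) k k = d k := by
      simp [Matrix.sub_apply, hAdiag k, hd]
    rw [h1, h3] at h0
    exact h0
  have hmul : ∀ a b, (A * D⁻¹ * A) a b = ∑ k, A a k * (d k)⁻¹ * A k b := by
    intro a b
    rw [hDinv, Matrix.mul_apply]
    apply Finset.sum_congr rfl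
    intro k _
    rw [Matrix.mul_diagonal]
  set T : ℝ := ∑ k, (A i k) ^ 2 * (d k)⁻¹ with hT
  have hTnn : 0 ≤ T := by
    apply Finset.sum_nonneg
    intro k _
    exact mul_nonneg (sq_nonneg _) (le_of_lt (inv_pos.mpr (hdpos k)))
  have hMdiag : (D - A * D⁻¹ * A) i i = d i - T := by
    rw [Matrix.sub_apply, hmul]
    congr 1
    apply Finset.sum_congr rfl
    intro k _
    rw [hsym i k]
    ring
  have hbound : ∑ j ∈ Finset.univ.erase i, |(D - A * D⁻¹ * A) i j|
      ≤ S i * (1 + α)⁻¹ - T := by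
    have step1 : ∑ j ∈ Finset.univ.erase i, |(D - A * D⁻¹ * A) i j|
        ≤ ∑ j ∈ Finset.univ.erase i, ∑ k, |A i k| * (d k)⁻¹ * |A k j| := by
      apply Finset.sum_le_sum
      intro j hj
      have hji : j ≠ i := Finset.ne_of_mem_erase hj
      rw [Matrix.sub_apply, hDdiag i j (Ne.symm hji), zero_sub, abs_neg, hmul]
      calc |∑ k, A i k * (d k)⁻¹ * A k j| ≤ ∑ k, |A i k * (d k)⁻¹ * A k j| :=
            Finset.abs_sum_le_sum_abs _ _
        _ = ∑ k, |A i k| * (d k)⁻¹ * |A k j| := by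
            apply Finset.sum_congr rfl
            intro k _
            rw [abs_mul, abs_mul, abs_of_pos (inv_pos.mpr (hdpos k))]
    have step2 : ∑ j ∈ Finset.univ.erase i, ∑ k, |A i k| * (d k)⁻¹ * |A k j|
        = ∑ k, |A i k| * (d k)⁻¹ * (S k - |A i k|) := by
      rw [Finset.sum_comm]
      apply Finset.sum_congr rfl
      intro k _
      rw [← Finset.mul_sum, Finset.sum_erase_eq_sub (Finset.mem_univ i), hsym i k]
    have step3 : ∑ k, |A i k| * (d k)⁻¹ * (S k - |A i k|)
        ≤ ∑ k, (|A i k| * (1 + α)⁻¹ - (A i k) ^ 2 * (d k)⁻¹) := by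
      apply Finset.sum_le_sum
      intro k _
      have hdk := hdpos k
      have hdkinv : (0:ℝ) < (d k)⁻¹ := inv_pos.mpr hdk
      have hSk : S k ≤ d k * (1 + α)⁻¹ := by
        have h := hSd k
        rw [mul_comm] at h
        calc S k = S k * (1 + α) * (1 + α)⁻¹ := by field_simp
          _ ≤ d k * (1 + α)⁻¹ :=
            mul_le_mul_of_nonneg_right h (le_of_lt (inv_pos.mpr h1α))
      have h2 : |A i k| * (d k)⁻¹ * (S k - |A i k|)
          ≤ |A i k| * (d k)⁻¹ * (d k * (1 + α)⁻¹ - |A i k|) := by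
        exact mul_le_mul_of_nonneg_left (by linarith)
          (mul_nonneg (abs_nonneg _) (le_of_lt hdkinv))
      have hinv : (d k)⁻¹ * d k = 1 := inv_mul_cancel₀ (ne_of_gt hdk)
      have hsq : |A i k| ^ 2 = (A i k) ^ 2 := sq_abs _
      have h3 : |A i k| * (d k)⁻¹ * (d k * (1 + α)⁻¹ - |A i k|)
          = |A i k| * (1 + α)⁻¹ - (A i k) ^ 2 * (d k)⁻¹ := by
        linear_combination (|A i k| * (1 + α)⁻¹) * hinv - (d k)⁻¹ * hsq
      linarith
    have step4 : ∑ k, (|A i k| * (1 + α)⁻¹ - (A i k) ^ 2 * (d k)⁻¹)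
        = S i * (1 + α)⁻¹ - T := by
      rw [Finset.sum_sub_distrib, ← Finset.sum_mul]
    linarith
  rw [hMdiag]
  have hco : 1 + ((1 + α) ^ 2 - 1) = (1 + α) ^ 2 := by ring
  rw [hco]
  have hinv1 : (1 + α) * (1 + α)⁻¹ = 1 := mul_inv_cancel₀ (ne_of_gt h1α)
  have hSi := hSd i
  have hmono : (1 + α) ^ 2 * (∑ j ∈ Finset.univ.erase i, |(D - A * D⁻¹ * A) i j|)
      ≤ (1 + α) ^ 2 * (S i * (1 + α)⁻¹ - T) :=
    mul_le_mul_of_nonneg_left hbound (sq_nonneg _)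
  have heq : (1 + α) ^ 2 * (S i * (1 + α)⁻¹ - T)
      = (1 + α) * S i - (1 + α) ^ 2 * T := by
    linear_combination ((1 + α) * S i) * hinv1
  have hTle : T ≤ (1 + α) ^ 2 * T := by
    nlinarith [mul_nonneg (mul_nonneg hα hα) hTnn, mul_nonneg hα hTnn]
  linarith
end
end

section
/- Let X be a nonnegative diagonal matrix and Y, Ỹ Laplacian matrices of the same size such that X + Y is α-strongly diagonally dominant for some α ≥ 0 and Y ≈_ε Ỹ. Then X + Ỹ is e^{−ε}·α-strongly diagonally dominant. -/
open Matrix BigOperators Finset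
open scoped Classical

noncomputable section

lemma lap_abs_sum {n : Type*} [Fintype n] [DecidableEq n] {L : Matrix n n ℝ}
    (hL : IsLaplacian L) (i : n) :
    ∑ j ∈ Finset.univ.erase i, |L i j| = L i i := by
  have h1 : ∀ j ∈ Finset.univ.erase i, |L i j| = -(L i j) := by
    intro j hj
    have : j ≠ i := (Finset.mem_erase.mp hj).1
    exact abs_of_nonpos (hL.2.1 i j this.symm)
  rw [Finset.sum_congr rfl h1, Finset.sum_neg_distrib]
  have h2 : L i i + ∑ j ∈ Finset.univ.erase i, L i j = 0 := by
    rw [Finset.add_sum_erase _ _ (Finset.mem_univ i)]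
    exact hL.2.2 i
  linarith

/-- if `X` is a nonnegative diagonal matrix, `Y, Ỹ` Laplacians,
`X + Y` is α-strongly diagonally dominant (`α ≥ 0`) and `Y ≈_ε Ỹ`, then
`X + Ỹ` is `e^{−ε}·α`-strongly diagonally dominant. -/
theorem strongly_dd_stable_under_sparsification {n : Type*} [Fintype n] [DecidableEq n]
    (X Y Yt : Matrix n n ℝ) (α ε : ℝ) (hα : 0 ≤ α) (hε : 0 ≤ ε)
    (hXdiag : ∀ i j, i ≠ j → X i j = 0) (hXnn : ∀ i, 0 ≤ X i i)
    (hY : IsLaplacian Y) (hYt : IsLaplacian Yt)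
    (hdd : IsStronglyDD α (X + Y))
    (happrox : ApproxEps Y ε Yt) :
    IsStronglyDD (Real.exp (-ε) * α) (X + Yt) := by
  intro i
  have hsY : ∑ j ∈ Finset.univ.erase i, |(X + Y) i j| = Y i i := by
    rw [← lap_abs_sum hY i]
    apply Finset.sum_congr rfl
    intro j hj
    have hji : j ≠ i := (Finset.mem_erase.mp hj).1
    simp [Matrix.add_apply, hXdiag i j hji.symm]
  have hsYt : ∑ j ∈ Finset.univ.erase i, |(X + Yt) i j| = Yt i i := by
    rw [← lap_abs_sum hYt i]
    apply Finset.sum_congr rfl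
    intro j hj
    have hji : j ≠ i := (Finset.mem_erase.mp hj).1
    simp [Matrix.add_apply, hXdiag i j hji.symm]
  have hdd' := hdd i
  rw [hsY] at hdd'
  have hXY : (X + Y) i i = X i i + Y i i := rfl
  rw [hXY] at hdd'
  -- hdd' : (1 + α) * Y i i ≤ X i i + Y i i, so α * Y i i ≤ X i i
  have hαY : α * Y i i ≤ X i i := by nlinarith
  have hdiag : Real.exp (-ε) * Yt i i ≤ Y i i := by
    have hpsd := happrox.2
    have := hpsd.dotProduct_mulVec_nonneg (fun j => if j = i then 1 else 0)
    have hval : (Star.star (fun j => if j = i then (1:ℝ) else 0)) ⬝ᵥ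
        (Y - Real.exp (-ε) • Yt) *ᵥ (fun j => if j = i then 1 else 0)
        = Y i i - Real.exp (-ε) * Yt i i := by
      simp [dotProduct, Matrix.mulVec, Matrix.sub_apply, Matrix.smul_apply,
        Finset.sum_ite_eq', mul_comm]
    rw [hval] at this
    linarith
  rw [hsYt]
  have hXYt : (X + Yt) i i = X i i + Yt i i := rfl
  rw [hXYt]
  have hchain : Real.exp (-ε) * α * Yt i i ≤ X i i := by
    calc Real.exp (-ε) * α * Yt i i = α * (Real.exp (-ε) * Yt i i) := by ring
      _ ≤ α * Y i i := mul_le_mul_of_nonneg_left hdiag hα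
      _ ≤ X i i := hαY
  nlinarith
end
end

section
/- Let M_{FF} = X_{FF} + L_{FF} be an SDDM matrix, with X_{FF} a nonnegative diagonal matrix and L_{FF} a Laplacian, that is α-strongly diagonally dominant for some α ≥ 4 (so that X_{FF} has positive diagonal entries). Define Z = ½·X_{FF}^{−1} + ½·X_{FF}^{−1}·(X_{FF} − L_{FF})·X_{FF}^{−1}·(X_{FF} − L_{FF})·X_{FF}^{−1}. Then Z is invertible and M_{FF} ⪯ Z^{−1} ⪯ M_{FF} + (2/α)·L_{FF}. -/
open Matrix BigOperators Finset
open scoped Classical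

noncomputable section

lemma psd_smul' {n : Type*} [Fintype n] {M : Matrix n n ℝ} (hM : M.PosSemidef)
    {c : ℝ} (hc : 0 ≤ c) : (c • M).PosSemidef := by
  refine Matrix.PosSemidef.of_dotProduct_mulVec_nonneg ?_ ?_
  · unfold Matrix.IsHermitian
    rw [conjTranspose_smul, hM.1]
    simp
  · intro x
    rw [smul_mulVec, dotProduct_smul, smul_eq_mul]
    exact mul_nonneg hc (hM.dotProduct_mulVec_nonneg x)

lemma aeval_conjTranspose {n : Type*} [Fintype n] [DecidableEq n] {R : Matrix n n ℝ}
    (hR : Rᴴ = R) (p : Polynomial ℝ) : (Polynomial.aeval R p)ᴴ = Polynomial.aeval R p := by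
  induction p using Polynomial.induction_on with
  | C c => simp [Polynomial.aeval_C, Algebra.algebraMap_eq_smul_one, conjTranspose_smul]
  | add p q hp hq => rw [map_add, conjTranspose_add, hp, hq]
  | monomial m c ih =>
      have h : (Polynomial.aeval R) (Polynomial.C c * Polynomial.X ^ (m + 1)) = c • R ^ (m + 1) := by
        simp [Algebra.algebraMap_eq_smul_one, smul_mul_assoc]
      rw [h, conjTranspose_smul, conjTranspose_pow, hR]
      simp


lemma posSemidef_of_dd {n : Type*} [Fintype n] [DecidableEq n]
    (B : Matrix n n ℝ) (hsymm : B.IsSymm)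
    (hdd : ∀ i, ∑ j ∈ Finset.univ.erase i, |B i j| ≤ B i i) :
    B.PosSemidef := by
  refine Matrix.PosSemidef.of_dotProduct_mulVec_nonneg ?_ ?_
  · rw [Matrix.IsHermitian, conjTranspose_eq_transpose_of_trivial]
    exact hsymm
  · intro x
    have hx : star x = x := by simp
    rw [hx]
    have expand : dotProduct x (B *ᵥ x)
        = ∑ i, B i i * x i ^ 2 + ∑ i, ∑ j ∈ Finset.univ.erase i, x i * (B i j * x j) := by
      simp only [dotProduct, Matrix.mulVec, dotProduct, Finset.mul_sum]
      rw [← Finset.sum_add_distrib]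
      refine Finset.sum_congr rfl fun i _ => ?_
      rw [← Finset.sum_erase_add _ _ (Finset.mem_univ i)]
      ring
    have hswap : ∑ i, ∑ j ∈ Finset.univ.erase i, |B i j| * x j ^ 2
        = ∑ i, ∑ j ∈ Finset.univ.erase i, |B i j| * x i ^ 2 := by
      rw [Finset.sum_comm' (s' := fun y => Finset.univ.erase y) (t' := Finset.univ)
        (by intro a c; simp [Finset.mem_erase, ne_comm, and_comm])]
      refine Finset.sum_congr rfl fun i _ => Finset.sum_congr rfl fun j hj => ?_
      have h : B j i = B i j := by
        conv_lhs => rw [← hsymm]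
        simp [Matrix.transpose_apply]
      rw [h]
    have hbound : ∀ i, ∀ j ∈ Finset.univ.erase i,
        -(|B i j| * x i ^ 2) - |B i j| * x j ^ 2 ≤ 2 * (x i * (B i j * x j)) := by
      intro i j _
      have h1 : -|B i j * (x i * x j)| ≤ B i j * (x i * x j) := neg_abs_le _
      have h2 : |B i j * (x i * x j)| = |B i j| * |x i * x j| := abs_mul _ _
      have h3 : |x i * x j| ≤ (x i ^ 2 + x j ^ 2) / 2 := by
        rw [abs_mul]
        nlinarith [sq_nonneg (|x i| - |x j|), sq_abs (x i), sq_abs (x j)]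
      have h4 : |B i j| * |x i * x j| ≤ |B i j| * ((x i ^ 2 + x j ^ 2) / 2) :=
        mul_le_mul_of_nonneg_left h3 (abs_nonneg _)
      rw [h2] at h1
      nlinarith [h1, h4]
    have step : ∑ i, ∑ j ∈ Finset.univ.erase i,
          (-(|B i j| * x i ^ 2) - |B i j| * x j ^ 2)
        ≤ ∑ i, ∑ j ∈ Finset.univ.erase i, 2 * (x i * (B i j * x j)) :=
      Finset.sum_le_sum fun i _ => Finset.sum_le_sum (hbound i)
    have e1 : ∑ i, ∑ j ∈ Finset.univ.erase i,
          (-(|B i j| * x i ^ 2) - |B i j| * x j ^ 2)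
        = -(∑ i, ∑ j ∈ Finset.univ.erase i, |B i j| * x i ^ 2)
          - ∑ i, ∑ j ∈ Finset.univ.erase i, |B i j| * x j ^ 2 := by
      simp [Finset.sum_sub_distrib, Finset.sum_neg_distrib]
    have e2 : ∑ i, ∑ j ∈ Finset.univ.erase i, 2 * (x i * (B i j * x j))
        = 2 * ∑ i, ∑ j ∈ Finset.univ.erase i, x i * (B i j * x j) := by
      simp only [← Finset.mul_sum]
    have e3 : ∑ i, (∑ j ∈ Finset.univ.erase i, |B i j|) * x i ^ 2
        = ∑ i, ∑ j ∈ Finset.univ.erase i, |B i j| * x i ^ 2 := by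
      simp_rw [Finset.sum_mul]
    have final : 0 ≤ ∑ i, (B i i - ∑ j ∈ Finset.univ.erase i, |B i j|) * x i ^ 2 :=
      Finset.sum_nonneg fun i _ => mul_nonneg (by linarith [hdd i]) (sq_nonneg _)
    have expand2 : ∑ i, (B i i - ∑ j ∈ Finset.univ.erase i, |B i j|) * x i ^ 2
        = ∑ i, B i i * x i ^ 2 - ∑ i, (∑ j ∈ Finset.univ.erase i, |B i j|) * x i ^ 2 := by
      rw [← Finset.sum_sub_distrib]
      exact Finset.sum_congr rfl fun i _ => by ring
    rw [expand]
    linarith [step, e1, e2, e3, final, expand2, hswap]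

/-- Let `M = X + L` be an SDDM matrix (`X` nonnegative diagonal,
`L` Laplacian) that is α-strongly diagonally dominant for some `α ≥ 4`.  With
`Z = ½·X⁻¹ + ½·X⁻¹·(X − L)·X⁻¹·(X − L)·X⁻¹`, `Z` is invertible and
`M ⪯ Z⁻¹ ⪯ M + (2/α)·L`. -/
theorem last_step_operator {n : Type*} [Fintype n] [DecidableEq n]
    (X L : Matrix n n ℝ) (α : ℝ) (hα : 4 ≤ α)
    (hXdiag : ∀ i j, i ≠ j → X i j = 0) (hXnn : ∀ i, 0 ≤ X i i)
    (hL : IsLaplacian L)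
    (hM : IsSDDM (X + L)) (hsdd : IsStronglyDD α (X + L)) :
    IsUnit ((1 / 2 : ℝ) • X⁻¹ +
        (1 / 2 : ℝ) • (X⁻¹ * (X - L) * X⁻¹ * (X - L) * X⁻¹)) ∧
    PSDLE (X + L)
      ((1 / 2 : ℝ) • X⁻¹ + (1 / 2 : ℝ) • (X⁻¹ * (X - L) * X⁻¹ * (X - L) * X⁻¹))⁻¹ ∧
    PSDLE ((1 / 2 : ℝ) • X⁻¹ + (1 / 2 : ℝ) • (X⁻¹ * (X - L) * X⁻¹ * (X - L) * X⁻¹))⁻¹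
      ((X + L) + (2 / α) • L) := by
  obtain ⟨hLsymm, hLoff, hLrow⟩ := hL
  obtain ⟨hMsymm, hMpd, hMoff, hMdd⟩ := hM
  have hα0 : (0:ℝ) < α := by linarith
  -- diagonal of L equals sum of abs of off-diagonal entries
  have hLdiag : ∀ i, L i i = ∑ j ∈ Finset.univ.erase i, |L i j| := by
    intro i
    have h0 := hLrow i
    rw [← Finset.sum_erase_add _ _ (Finset.mem_univ i)] at h0
    have : ∑ j ∈ Finset.univ.erase i, |L i j| = ∑ j ∈ Finset.univ.erase i, -(L i j) :=
      Finset.sum_congr rfl fun j hj =>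
        abs_of_nonpos (hLoff i j (Ne.symm (Finset.ne_of_mem_erase hj)))
    rw [this, Finset.sum_neg_distrib]
    linarith
  have hLnn : ∀ i, 0 ≤ L i i := fun i => by
    rw [hLdiag i]; exact Finset.sum_nonneg fun j _ => abs_nonneg _
  -- X i i ≥ α * L i i
  have hXL : ∀ i, α * L i i ≤ X i i := by
    intro i
    have h := hsdd i
    have hsame : ∑ j ∈ Finset.univ.erase i, |(X + L) i j| = L i i := by
      rw [hLdiag i]
      refine Finset.sum_congr rfl fun j hj => ?_
      have hji : i ≠ j := Ne.symm (Finset.ne_of_mem_erase hj)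
      simp [Matrix.add_apply, hXdiag i j hji]
    rw [hsame] at h
    have : (X + L) i i = X i i + L i i := rfl
    rw [this] at h
    nlinarith
  -- X has positive diagonal
  have hMiipos : ∀ i, 0 < X i i + L i i := by
    intro i
    have h := hMpd.dotProduct_mulVec_pos (x := (Pi.single i 1 : n → ℝ)) (by
      intro hcon
      have := congrFun hcon i
      simp at this)
    have : dotProduct (star (Pi.single i 1 : n → ℝ)) ((X + L) *ᵥ Pi.single i 1)
        = (X + L) i i := by
      simp [Matrix.mulVec_single, dotProduct, Pi.single_apply, Finset.sum_ite_eq']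
    rw [this] at h
    exact h
  have hXpos : ∀ i, 0 < X i i := by
    intro i
    nlinarith [hMiipos i, hXL i, hLnn i]
  -- square root scaling matrices
  set S : Matrix n n ℝ := Matrix.diagonal fun i => Real.sqrt (X i i) with hSdef
  set T : Matrix n n ℝ := Matrix.diagonal fun i => (Real.sqrt (X i i))⁻¹ with hTdef
  have hsq : ∀ i, 0 < Real.sqrt (X i i) := fun i => Real.sqrt_pos.mpr (hXpos i)
  have hST : S * T = 1 := by
    rw [hSdef, hTdef, Matrix.diagonal_mul_diagonal]
    rw [show (fun i => Real.sqrt (X i i) * (Real.sqrt (X i i))⁻¹) = fun _ : n => (1:ℝ) from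
      funext fun i => mul_inv_cancel₀ (ne_of_gt (hsq i))]
    exact Matrix.diagonal_one
  have hTS : T * S = 1 := by
    rw [hSdef, hTdef, Matrix.diagonal_mul_diagonal]
    rw [show (fun i => (Real.sqrt (X i i))⁻¹ * Real.sqrt (X i i)) = fun _ : n => (1:ℝ) from
      funext fun i => inv_mul_cancel₀ (ne_of_gt (hsq i))]
    exact Matrix.diagonal_one
  have hXdiagonal : X = Matrix.diagonal fun i => X i i := by
    ext i j
    by_cases h : i = j
    · subst h; simp
    · simp [Matrix.diagonal_apply_ne _ h, hXdiag i j h]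
  have hSS : S * S = X := by
    rw [hSdef, Matrix.diagonal_mul_diagonal]
    conv_rhs => rw [hXdiagonal]
    exact congrArg Matrix.diagonal (funext fun i => Real.mul_self_sqrt (hXpos i).le)
  have hXt : Xᵀ = X := by conv_lhs => rw [hXdiagonal, Matrix.diagonal_transpose, ← hXdiagonal]
  have hTt : Tᵀ = T := Matrix.diagonal_transpose _
  have hSt : Sᵀ = S := Matrix.diagonal_transpose _
  have hTh : Tᴴ = T := by rw [conjTranspose_eq_transpose_of_trivial, hTt]
  have hSh : Sᴴ = S := by rw [conjTranspose_eq_transpose_of_trivial, hSt]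
  have hTXT : T * X * T = 1 := by
    rw [← hSS]
    simp only [Matrix.mul_assoc]
    rw [hST, Matrix.mul_one, hTS]
  have hXinv : X⁻¹ = T * T := by
    apply Matrix.inv_eq_right_inv
    rw [← hSS, Matrix.mul_assoc S S (T * T), ← Matrix.mul_assoc S T T, hST, Matrix.one_mul, hST]
  -- the normalized matrix A
  set A : Matrix n n ℝ := T * L * T with hAdef
  have hAh : Aᴴ = A := by
    rw [hAdef, conjTranspose_eq_transpose_of_trivial]
    simp only [Matrix.transpose_mul, hTt, hLsymm.eq]
    simp only [Matrix.mul_assoc]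
  have hLpsd : L.PosSemidef := posSemidef_of_dd L hLsymm fun i => le_of_eq (hLdiag i).symm
  have hApsd : A.PosSemidef := by
    have h := hLpsd.conjTranspose_mul_mul_same T
    rwa [hTh] at h
  set b : ℝ := 2 / α with hbdef
  have hb0 : 0 < b := by positivity
  have hb2 : b ≤ 1 / 2 := by
    rw [hbdef, div_le_iff₀ hα0]
    linarith
  set W : Matrix n n ℝ := b • X - L with hWdef
  have hWsymm : W.IsSymm := by
    rw [Matrix.IsSymm, hWdef, Matrix.transpose_sub, Matrix.transpose_smul, hXt, hLsymm.eq]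
  have hWdd : ∀ i, ∑ j ∈ Finset.univ.erase i, |W i j| ≤ W i i := by
    intro i
    have hsame : ∑ j ∈ Finset.univ.erase i, |W i j| = L i i := by
      rw [hLdiag i]
      refine Finset.sum_congr rfl fun j hj => ?_
      have hji : i ≠ j := Ne.symm (Finset.ne_of_mem_erase hj)
      rw [hWdef]
      simp [Matrix.sub_apply, Matrix.smul_apply, hXdiag i j hji, abs_neg]
    rw [hsame, hWdef]
    have hWii : (b • X - L) i i = b * X i i - L i i := by
      simp [Matrix.sub_apply, Matrix.smul_apply]
    rw [hWii]
    have h5 : 2 * L i i ≤ b * X i i := by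
      rw [hbdef, div_mul_eq_mul_div, le_div_iff₀ hα0]
      nlinarith [hXL i, hLnn i]
    linarith
  have hWpsd : W.PosSemidef := posSemidef_of_dd W hWsymm hWdd
  have hTWT : T * W * T = b • (1 : Matrix n n ℝ) - A := by
    rw [hWdef]
    simp only [Matrix.mul_sub, Matrix.sub_mul, Matrix.mul_smul, Matrix.smul_mul, hTXT, hAdef]
  have hbA : (b • (1 : Matrix n n ℝ) - A).PosSemidef := by
    have h := hWpsd.conjTranspose_mul_mul_same T
    rwa [hTh, hTWT] at h
  have h1A : ((1 : Matrix n n ℝ) - A).PosSemidef := by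
    have h2 : (1 : Matrix n n ℝ) - A = (b • 1 - A) + (1 - b) • 1 := by
      rw [sub_add_eq_add_sub, ← add_smul]
      norm_num
    rw [h2]
    exact hbA.add (psd_smul' Matrix.PosSemidef.one (by linarith))
  -- the square root of A
  obtain ⟨R, hRh, hRR⟩ : ∃ R : Matrix n n ℝ, Rᴴ = R ∧ R * R = A := by
    open scoped MatrixOrder in
    obtain ⟨R, hR, -, hRR⟩ := CFC.exists_sqrt_of_isSelfAdjoint_of_quasispectrumRestricts
      hApsd.isHermitian (QuasispectrumRestricts.nnreal_of_nonneg hApsd.nonneg)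
    exact ⟨R, hR, hRR⟩
  have hA2 : R ^ 2 = A := by rw [sq, hRR]
  -- polynomials
  set ζ : Polynomial ℝ := Polynomial.C (1/2 : ℝ) * (1 + (1 - Polynomial.X ^ 2) ^ 2) with hζdef
  set Z' : Matrix n n ℝ := Polynomial.aeval R ζ with hZ'def
  have hZ'mat : Z' = (1/2 : ℝ) • (1 + (1 - A) * (1 - A)) := by
    rw [hZ'def, hζdef]
    simp only [_root_.map_mul, _root_.map_add, _root_.map_one, _root_.map_sub, _root_.map_pow, Polynomial.aeval_X,
      Polynomial.aeval_C, hA2, Algebra.algebraMap_eq_smul_one, smul_mul_assoc, one_mul, sq, hRR]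
  have h1Ah : ((1 : Matrix n n ℝ) - A)ᴴ = 1 - A := by
    rw [conjTranspose_sub, conjTranspose_one, hAh]
  have hZ'pd : Z'.PosDef := by
    rw [hZ'mat, smul_add]
    apply Matrix.PosDef.add_posSemidef
    · rw [← Matrix.diagonal_one, ← Matrix.diagonal_smul]
      exact Matrix.PosDef.diagonal fun i => by norm_num
    · apply psd_smul' _ (by norm_num)
      have h := Matrix.posSemidef_conjTranspose_mul_self ((1 : Matrix n n ℝ) - A)
      rwa [h1Ah] at h
  have hZ'h : Z'ᴴ = Z' := hZ'pd.1
  have hZ'det : IsUnit Z'.det := isUnit_iff_ne_zero.mpr (ne_of_gt hZ'pd.det_pos)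
  set G : Matrix n n ℝ := Z'⁻¹ with hGdef
  have hZ'G : Z' * G = 1 := Matrix.mul_nonsing_inv _ hZ'det
  have hGZ' : G * Z' = 1 := Matrix.nonsing_inv_mul _ hZ'det
  have hGh : Gᴴ = G := by rw [hGdef, Matrix.conjTranspose_nonsing_inv, hZ'h]
  -- the statement's matrix Z equals T * Z' * T
  have h1Aeq : (1 : Matrix n n ℝ) - A = T * (X - L) * T := by
    rw [Matrix.mul_sub, Matrix.sub_mul, hTXT, hAdef]
  have hmid : T * ((1 - A) * (1 - A)) * T = X⁻¹ * (X - L) * X⁻¹ * (X - L) * X⁻¹ := by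
    rw [h1Aeq, hXinv]
    simp only [Matrix.mul_assoc]
  have hZeq : (1 / 2 : ℝ) • X⁻¹ +
      (1 / 2 : ℝ) • (X⁻¹ * (X - L) * X⁻¹ * (X - L) * X⁻¹) = T * Z' * T := by
    rw [hZ'mat, Matrix.mul_smul, Matrix.smul_mul, Matrix.mul_add, Matrix.add_mul,
      Matrix.mul_one, smul_add, hmid]
    rw [hXinv]
  have hSAS : S * A * S = L := by
    rw [hAdef]
    simp only [Matrix.mul_assoc]
    rw [hTS, Matrix.mul_one, ← Matrix.mul_assoc S T L, hST, Matrix.one_mul]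
  have hMeq : X + L = S * (1 + A) * S := by
    rw [Matrix.mul_add, Matrix.add_mul, Matrix.mul_one, hSS, hSAS]
  -- Part 1 : Z is invertible
  have hZright : (T * Z' * T) * (S * G * S) = 1 := by
    calc (T * Z' * T) * (S * G * S) = T * (Z' * ((T * S) * (G * S))) := by
          simp only [Matrix.mul_assoc]
      _ = T * (Z' * G) * S := by rw [hTS, Matrix.one_mul]; simp only [Matrix.mul_assoc]
      _ = T * S := by rw [hZ'G, Matrix.mul_one]
      _ = 1 := hTS
  have hZunit : IsUnit ((1 / 2 : ℝ) • X⁻¹ +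
      (1 / 2 : ℝ) • (X⁻¹ * (X - L) * X⁻¹ * (X - L) * X⁻¹)) := by
    rw [hZeq]
    rw [Matrix.isUnit_iff_isUnit_det]
    apply IsUnit.of_mul_eq_one ((S * G * S).det)
    rw [← Matrix.det_mul, hZright, Matrix.det_one]
  have hZinvEq : ((1 / 2 : ℝ) • X⁻¹ +
      (1 / 2 : ℝ) • (X⁻¹ * (X - L) * X⁻¹ * (X - L) * X⁻¹))⁻¹ = S * G * S := by
    rw [hZeq]
    exact Matrix.inv_eq_right_inv hZright
  -- lower bound
  set pP : Polynomial ℝ := ζ - ζ * (1 + Polynomial.X ^ 2) * ζ with hpPdef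
  have hPmat : Polynomial.aeval R pP = Z' - Z' * (1 + A) * Z' := by
    rw [hpPdef]
    simp only [_root_.map_sub, _root_.map_mul, _root_.map_add, _root_.map_one, _root_.map_pow, Polynomial.aeval_X, hA2, ← hZ'def]
  have hGident : G - (1 + A) = G * (Z' - Z' * (1 + A) * Z') * G := by
    have e2 : G * (Z' * (1 + A) * Z') * G = 1 + A := by
      simp only [Matrix.mul_assoc, hZ'G, Matrix.mul_one]
      rw [← Matrix.mul_assoc, hGZ', Matrix.one_mul]
    have e1 : G * (Z' - Z' * (1 + A) * Z') * G
        = G * Z' * G - G * (Z' * (1 + A) * Z') * G := by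
      rw [Matrix.mul_sub, Matrix.sub_mul]
    rw [e1, e2, hGZ', Matrix.one_mul]
  -- decomposition of pP as a positive combination
  have hpPpoly : pP = Polynomial.C (1/4 : ℝ) *
        ((Polynomial.X ^ 2) * (1 - Polynomial.X ^ 2) * (Polynomial.X ^ 2))
      + Polynomial.C (1/4 : ℝ) *
        ((Polynomial.X ^ 2 * (1 - Polynomial.X ^ 2)) * (1 - Polynomial.X ^ 2)
          * (Polynomial.X ^ 2 * (1 - Polynomial.X ^ 2))) := by
    apply Polynomial.funext
    intro t
    simp only [hpPdef, hζdef, Polynomial.eval_add, Polynomial.eval_mul, Polynomial.eval_sub,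
      Polynomial.eval_one, Polynomial.eval_pow, Polynomial.eval_X, Polynomial.eval_C]
    ring
  have hg1mat : Polynomial.aeval R (1 - Polynomial.X ^ 2 : Polynomial ℝ) = 1 - A := by
    simp only [_root_.map_sub, _root_.map_one, _root_.map_pow, Polynomial.aeval_X, hA2]
  have hPdec : Polynomial.aeval R pP
      = (1/4 : ℝ) • (Polynomial.aeval R (Polynomial.X ^ 2 : Polynomial ℝ)
          * Polynomial.aeval R (1 - Polynomial.X ^ 2 : Polynomial ℝ)
          * Polynomial.aeval R (Polynomial.X ^ 2 : Polynomial ℝ))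
      + (1/4 : ℝ) • (Polynomial.aeval R (Polynomial.X ^ 2 * (1 - Polynomial.X ^ 2) : Polynomial ℝ)
          * Polynomial.aeval R (1 - Polynomial.X ^ 2 : Polynomial ℝ)
          * Polynomial.aeval R (Polynomial.X ^ 2 * (1 - Polynomial.X ^ 2) : Polynomial ℝ)) := by
    conv_lhs => rw [hpPpoly]
    simp only [_root_.map_add, _root_.map_mul, Polynomial.aeval_C, Algebra.algebraMap_eq_smul_one,
      smul_mul_assoc, one_mul]
  have hPpsd : (Polynomial.aeval R pP).PosSemidef := by
    rw [hPdec]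
    have t1 := h1A.conjTranspose_mul_mul_same
      (Polynomial.aeval R (Polynomial.X ^ 2 : Polynomial ℝ))
    rw [aeval_conjTranspose hRh] at t1
    have t2 := h1A.conjTranspose_mul_mul_same
      (Polynomial.aeval R (Polynomial.X ^ 2 * (1 - Polynomial.X ^ 2) : Polynomial ℝ))
    rw [aeval_conjTranspose hRh] at t2
    rw [hg1mat]
    exact (psd_smul' t1 (by norm_num)).add (psd_smul' t2 (by norm_num))
  have key2 : (S * G * S) - (X + L)
      = (G * S)ᴴ * (Polynomial.aeval R pP) * (G * S) := by
    rw [hPmat, Matrix.conjTranspose_mul, hSh, hGh, hMeq]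
    have e : S * G * (Z' - Z' * (1 + A) * Z') * (G * S)
        = S * ((G * (Z' - Z' * (1 + A) * Z') * G) * S) := by
      simp only [Matrix.mul_assoc]
    rw [e, ← hGident, Matrix.sub_mul, Matrix.mul_sub]
    simp only [Matrix.mul_assoc]
  have part2 : PSDLE (X + L) ((1 / 2 : ℝ) • X⁻¹ +
      (1 / 2 : ℝ) • (X⁻¹ * (X - L) * X⁻¹ * (X - L) * X⁻¹))⁻¹ := by
    rw [PSDLE, hZinvEq, key2]
    exact hPpsd.conjTranspose_mul_mul_same (G * S)
  -- upper bound
  set c : ℝ := 1 + b with hcdef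
  set pQ : Polynomial ℝ := ζ * (1 + Polynomial.C c * Polynomial.X ^ 2) * ζ - ζ with hpQdef
  have hcA : Polynomial.aeval R (1 + Polynomial.C c * Polynomial.X ^ 2 : Polynomial ℝ)
      = 1 + c • A := by
    simp only [_root_.map_add, _root_.map_one, _root_.map_mul, _root_.map_pow,
      Polynomial.aeval_X, Polynomial.aeval_C, hA2, Algebra.algebraMap_eq_smul_one,
      smul_mul_assoc, one_mul]
  have hQmat : Polynomial.aeval R pQ = Z' * (1 + c • A) * Z' - Z' := by
    rw [hpQdef]
    simp only [_root_.map_sub, _root_.map_mul, hcA, ← hZ'def]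
  have hGident2 : (1 + c • A) - G = G * (Z' * (1 + c • A) * Z' - Z') * G := by
    have e2 : G * (Z' * (1 + c • A) * Z') * G = 1 + c • A := by
      simp only [Matrix.mul_assoc, hZ'G, Matrix.mul_one]
      rw [← Matrix.mul_assoc, hGZ', Matrix.one_mul]
    have e1 : G * (Z' * (1 + c • A) * Z' - Z') * G
        = G * (Z' * (1 + c • A) * Z') * G - G * Z' * G := by
      rw [Matrix.mul_sub, Matrix.sub_mul]
    rw [e1, e2, hGZ', Matrix.one_mul]
  have hMbeq : (X + L) + b • L = S * (1 + c • A) * S := by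
    rw [Matrix.mul_add, Matrix.add_mul, Matrix.mul_one, hSS, Matrix.mul_smul, Matrix.smul_mul,
      hSAS, hcdef, add_smul, one_smul, add_assoc]
  -- decomposition of pQ
  have hgmat : Polynomial.aeval R (Polynomial.C b - Polynomial.X ^ 2 : Polynomial ℝ)
      = b • 1 - A := by
    simp only [_root_.map_sub, _root_.map_pow, Polynomial.aeval_X, Polynomial.aeval_C, hA2,
      Algebra.algebraMap_eq_smul_one]
  have hpQpoly : pQ = Polynomial.C (1/2 : ℝ) *
        (Polynomial.X * (Polynomial.C b - Polynomial.X ^ 2) * Polynomial.X)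
      + Polynomial.C (1/2 : ℝ) *
        ((Polynomial.X * (1 - Polynomial.X ^ 2)) * (Polynomial.C b - Polynomial.X ^ 2)
          * (Polynomial.X * (1 - Polynomial.X ^ 2)))
      + Polynomial.C ((1/2 - b)/2 : ℝ) *
        ((Polynomial.X ^ 2 * (1 - Polynomial.X ^ 2))
          * (Polynomial.X ^ 2 * (1 - Polynomial.X ^ 2)))
      + Polynomial.C ((1/2 - b)/2 : ℝ) * (Polynomial.X ^ 2 * Polynomial.X ^ 2)
      + Polynomial.C ((1 + b)/4 : ℝ) *
        ((Polynomial.X ^ 3 * (1 - Polynomial.X ^ 2))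
          * (Polynomial.X ^ 3 * (1 - Polynomial.X ^ 2)))
      + Polynomial.C ((1 + b)/4 : ℝ) * (Polynomial.X ^ 3 * Polynomial.X ^ 3) := by
    apply Polynomial.funext
    intro t
    simp only [hpQdef, hζdef, hcdef, Polynomial.eval_add, Polynomial.eval_mul,
      Polynomial.eval_sub, Polynomial.eval_one, Polynomial.eval_pow, Polynomial.eval_X,
      Polynomial.eval_C]
    ring
  have hQdec : Polynomial.aeval R pQ
      = (1/2 : ℝ) • (Polynomial.aeval R (Polynomial.X : Polynomial ℝ)
          * Polynomial.aeval R (Polynomial.C b - Polynomial.X ^ 2 : Polynomial ℝ)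
          * Polynomial.aeval R (Polynomial.X : Polynomial ℝ))
      + (1/2 : ℝ) • (Polynomial.aeval R (Polynomial.X * (1 - Polynomial.X ^ 2) : Polynomial ℝ)
          * Polynomial.aeval R (Polynomial.C b - Polynomial.X ^ 2 : Polynomial ℝ)
          * Polynomial.aeval R (Polynomial.X * (1 - Polynomial.X ^ 2) : Polynomial ℝ))
      + ((1/2 - b)/2 : ℝ) •
          (Polynomial.aeval R (Polynomial.X ^ 2 * (1 - Polynomial.X ^ 2) : Polynomial ℝ)
          * Polynomial.aeval R (Polynomial.X ^ 2 * (1 - Polynomial.X ^ 2) : Polynomial ℝ))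
      + ((1/2 - b)/2 : ℝ) • (Polynomial.aeval R (Polynomial.X ^ 2 : Polynomial ℝ)
          * Polynomial.aeval R (Polynomial.X ^ 2 : Polynomial ℝ))
      + ((1 + b)/4 : ℝ) •
          (Polynomial.aeval R (Polynomial.X ^ 3 * (1 - Polynomial.X ^ 2) : Polynomial ℝ)
          * Polynomial.aeval R (Polynomial.X ^ 3 * (1 - Polynomial.X ^ 2) : Polynomial ℝ))
      + ((1 + b)/4 : ℝ) • (Polynomial.aeval R (Polynomial.X ^ 3 : Polynomial ℝ)
          * Polynomial.aeval R (Polynomial.X ^ 3 : Polynomial ℝ)) := by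
    conv_lhs => rw [hpQpoly]
    simp only [_root_.map_add, _root_.map_mul, Polynomial.aeval_C,
      Algebra.algebraMap_eq_smul_one, smul_mul_assoc, one_mul]
  have hQpsd : (Polynomial.aeval R pQ).PosSemidef := by
    rw [hQdec]
    have u1 := hbA.conjTranspose_mul_mul_same
      (Polynomial.aeval R (Polynomial.X : Polynomial ℝ))
    rw [aeval_conjTranspose hRh] at u1
    have u2 := hbA.conjTranspose_mul_mul_same
      (Polynomial.aeval R (Polynomial.X * (1 - Polynomial.X ^ 2) : Polynomial ℝ))
    rw [aeval_conjTranspose hRh] at u2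
    have u3 := Matrix.posSemidef_conjTranspose_mul_self
      (Polynomial.aeval R (Polynomial.X ^ 2 * (1 - Polynomial.X ^ 2) : Polynomial ℝ))
    rw [aeval_conjTranspose hRh] at u3
    have u4 := Matrix.posSemidef_conjTranspose_mul_self
      (Polynomial.aeval R (Polynomial.X ^ 2 : Polynomial ℝ))
    rw [aeval_conjTranspose hRh] at u4
    have u5 := Matrix.posSemidef_conjTranspose_mul_self
      (Polynomial.aeval R (Polynomial.X ^ 3 * (1 - Polynomial.X ^ 2) : Polynomial ℝ))
    rw [aeval_conjTranspose hRh] at u5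
    have u6 := Matrix.posSemidef_conjTranspose_mul_self
      (Polynomial.aeval R (Polynomial.X ^ 3 : Polynomial ℝ))
    rw [aeval_conjTranspose hRh] at u6
    rw [hgmat]
    exact (((((psd_smul' u1 (by norm_num)).add (psd_smul' u2 (by norm_num))).add
      (psd_smul' u3 (by linarith))).add (psd_smul' u4 (by linarith))).add
      (psd_smul' u5 (by linarith))).add (psd_smul' u6 (by linarith))
  have key3 : ((X + L) + b • L) - (S * G * S)
      = (G * S)ᴴ * (Polynomial.aeval R pQ) * (G * S) := by
    rw [hQmat, Matrix.conjTranspose_mul, hSh, hGh, hMbeq]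
    have e : S * G * (Z' * (1 + c • A) * Z' - Z') * (G * S)
        = S * ((G * (Z' * (1 + c • A) * Z' - Z') * G) * S) := by
      simp only [Matrix.mul_assoc]
    rw [e, ← hGident2, Matrix.sub_mul, Matrix.mul_sub]
    simp only [Matrix.mul_assoc]
  have part3 : PSDLE ((1 / 2 : ℝ) • X⁻¹ +
      (1 / 2 : ℝ) • (X⁻¹ * (X - L) * X⁻¹ * (X - L) * X⁻¹))⁻¹ ((X + L) + (2 / α) • L) := by
    rw [PSDLE, hZinvEq, ← hbdef, key3]
    exact hQpsd.conjTranspose_mul_mul_same (G * S)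
  exact ⟨hZunit, part2, part3⟩
end
end

section
/- Let M be an SDDM matrix with indices partitioned into blocks F and C such that M_{FF} is α-strongly diagonally dominant for some α ≥ 4, and let M_{FF} = X_{FF} + L_{FF} be the unique decomposition with X_{FF} a nonnegative diagonal matrix (with positive diagonal entries) and L_{FF} a Laplacian. Let Z = ½·X_{FF}^{−1} + ½·X_{FF}^{−1}·(X_{FF} − L_{FF})·X_{FF}^{−1}·(X_{FF} − L_{FF})·X_{FF}^{−1}, and let M^{last} be the matrix obtained from M by replacing its FF block with Z^{−1}. Define M₁ = [[X_{FF}, M_{FC}],[M_{CF}, diag(M_{CF}·X_{FF}^{−1}·M_{FC}·1_C)]] and M₂ = [[X_{FF}, (X_{FF} − L_{FF})·X_{FF}^{−1}·M_{FC}],[M_{CF}·X_{FF}^{−1}·(X_{FF} − L_{FF}), 2·M_{CC} − diag(M_{CF}·X_{FF}^{−1}·M_{FC}·1_C)]], where diag(x) is the diagonal matrix with diagonal given by the vector x and 1_C is the all-ones vector on C. Then Schur(M₁, F) is a Laplacian matrix, M₂ is an SDDM matrix, and Schur(M^{last}, F) = ½·( Schur(M₁, F) + Schur(M₂, F) ).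 -/
open Matrix BigOperators Finset
open scoped Classical

noncomputable section

namespace LastStepAux

variable {n : Type*} [Fintype n] [DecidableEq n]

/-- A symmetric diagonally dominant real matrix is positive semidefinite. -/
lemma dd_posSemidef {A : Matrix n n ℝ} (hsym : A.IsSymm)
    (hdom : ∀ i, ∑ j ∈ Finset.univ.erase i, |A i j| ≤ A i i) : A.PosSemidef := by
  refine posSemidef_iff_dotProduct_mulVec.mpr ⟨hsym, fun x => ?_⟩
  have hAs : ∀ i j, A j i = A i j := fun i j => congrFun (congrFun hsym i) j
  have hQ : star x ⬝ᵥ A *ᵥ x = ∑ i, ∑ j, x i * (A i j * x j) := by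
    simp [dotProduct, mulVec, Finset.mul_sum, mul_assoc]
  rw [hQ]
  set T : ℝ := ∑ i, ∑ j ∈ Finset.univ.erase i, |A i j| * (x i ^ 2 - |x i| * |x j|) with hT
  have key : ∀ i, ∑ j ∈ Finset.univ.erase i, |A i j| * (x i ^ 2 - |x i| * |x j|)
      ≤ ∑ j, x i * (A i j * x j) := by
    intro i
    have hstep : ∀ j ∈ Finset.univ.erase i, -(|A i j| * (|x i| * |x j|)) ≤ x i * (A i j * x j) := by
      intro j _
      have h1 : |x i * (A i j * x j)| = |A i j| * (|x i| * |x j|) := by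
        rw [abs_mul, abs_mul]; ring
      have h2 := neg_abs_le (x i * (A i j * x j))
      linarith [h1.le, h1.ge]
    have hsum := Finset.sum_le_sum hstep
    rw [Finset.sum_neg_distrib] at hsum
    have hdiag : (∑ j ∈ Finset.univ.erase i, |A i j|) * x i ^ 2 ≤ A i i * x i ^ 2 :=
      mul_le_mul_of_nonneg_right (hdom i) (sq_nonneg _)
    have hsplit : ∑ j, x i * (A i j * x j)
        = x i * (A i i * x i) + ∑ j ∈ Finset.univ.erase i, x i * (A i j * x j) :=
      (Finset.add_sum_erase _ _ (Finset.mem_univ i)).symm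
    have hLHS : ∑ j ∈ Finset.univ.erase i, |A i j| * (x i ^ 2 - |x i| * |x j|)
        = (∑ j ∈ Finset.univ.erase i, |A i j|) * x i ^ 2
          - ∑ j ∈ Finset.univ.erase i, |A i j| * (|x i| * |x j|) := by
      rw [Finset.sum_mul, ← Finset.sum_sub_distrib]
      exact Finset.sum_congr rfl fun j _ => by ring
    have hxii : x i * (A i i * x i) = A i i * x i ^ 2 := by ring
    rw [hsplit, hxii, hLHS]
    linarith
  have hQT : T ≤ ∑ i, ∑ j, x i * (A i j * x j) := Finset.sum_le_sum fun i _ => key i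
  have hswap : T = ∑ i, ∑ j ∈ Finset.univ.erase i, |A i j| * (x j ^ 2 - |x i| * |x j|) := by
    rw [hT, Finset.sum_comm' (t := fun i => Finset.univ.erase i) (t' := Finset.univ)
      (s' := fun j => Finset.univ.erase j)
      (by intro a b; simp [Finset.mem_erase, ne_comm])]
    refine Finset.sum_congr rfl fun i _ => Finset.sum_congr rfl fun j _ => ?_
    rw [hAs i j]; ring
  have hTT : 0 ≤ T + T := by
    nth_rewrite 2 [hswap]
    rw [← Finset.sum_add_distrib]
    refine Finset.sum_nonneg fun i _ => ?_
    rw [← Finset.sum_add_distrib]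
    refine Finset.sum_nonneg fun j _ => ?_
    have h1 : |A i j| * (x i ^ 2 - |x i| * |x j|) + |A i j| * (x j ^ 2 - |x i| * |x j|)
        = |A i j| * (|x i| - |x j|) ^ 2 := by
      rw [← sq_abs (x i), ← sq_abs (x j)]; ring
    rw [h1]
    positivity
  have hT0 : 0 ≤ T := by linarith
  linarith

/-- Positive scalar multiple of a positive definite matrix. -/
lemma posDef_smul {A : Matrix n n ℝ} (hA : A.PosDef) {c : ℝ} (hc : 0 < c) : (c • A).PosDef := by
  refine posDef_iff_dotProduct_mulVec.mpr ⟨?_, fun x hx => ?_⟩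
  · have h := hA.1
    unfold Matrix.IsHermitian at h ⊢
    rw [conjTranspose_smul, h]
    simp
  · rw [Matrix.smul_mulVec, dotProduct_smul]
    exact mul_pos hc (hA.dotProduct_mulVec_pos hx)

/-- Nonnegative scalar multiple of a positive semidefinite matrix. -/
lemma posSemidef_smul {A : Matrix n n ℝ} (hA : A.PosSemidef) {c : ℝ} (hc : 0 ≤ c) :
    (c • A).PosSemidef := by
  refine posSemidef_iff_dotProduct_mulVec.mpr ⟨?_, fun x => ?_⟩
  · have h := hA.1
    unfold Matrix.IsHermitian at h ⊢
    rw [conjTranspose_smul, h]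
    simp
  · rw [Matrix.smul_mulVec, dotProduct_smul]
    exact mul_nonneg hc (hA.dotProduct_mulVec_nonneg x)

/-- Key spectral inequality: if `0 ⪯ Y ⪯ 1` then `(1-Y)² ⪯ (1+Y)⁻¹`. -/
lemma inv_key {Y : Matrix n n ℝ} (h0 : Y.PosSemidef)
    (h1 : ((1 : Matrix n n ℝ) - Y).PosSemidef) :
    ((1 + Y)⁻¹ - (1 - Y) * (1 - Y)).PosSemidef := by
  have hY : Y.IsHermitian := h0.1
  set U : Matrix n n ℝ := (hY.eigenvectorUnitary : Matrix n n ℝ) with hUdef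
  set e : n → ℝ := hY.eigenvalues with hedef
  have hUU : U * star U = 1 := Matrix.mem_unitaryGroup_iff.mp hY.eigenvectorUnitary.2
  have hUU' : star U * U = 1 := Matrix.mem_unitaryGroup_iff'.mp hY.eigenvectorUnitary.2
  have hspec : Y = U * diagonal e * star U := by
    have h := hY.spectral_theorem
    simpa using h
  have he0 : ∀ i, 0 ≤ e i := fun i => h0.eigenvalues_nonneg i
  have he1 : ∀ i, e i ≤ 1 := by
    intro i
    have h2 : (star U * ((1 : Matrix n n ℝ) - Y) * U).PosSemidef := by
      have h3 := h1.mul_mul_conjTranspose_same (star U)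
      have h4 : (star U)ᴴ = U := by
        rw [Matrix.star_eq_conjTranspose, conjTranspose_conjTranspose]
      rwa [h4] at h3
    have h3 : star U * ((1 : Matrix n n ℝ) - Y) * U = diagonal (fun i => 1 - e i) := by
      have h4 : star U * Y * U = diagonal e := by
        rw [hspec]; simp only [Matrix.mul_assoc]
        rw [← Matrix.mul_assoc (star U) U, hUU', Matrix.one_mul, Matrix.mul_one]
      rw [Matrix.mul_sub, Matrix.sub_mul, Matrix.mul_one, hUU', h4]
      ext a b
      by_cases hab : a = b
      · subst hab; simp [Matrix.one_apply]
      · simp [Matrix.one_apply, hab, Matrix.diagonal_apply_ne _ hab]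
    rw [h3] at h2
    have := Matrix.posSemidef_diagonal_iff.mp h2 i
    linarith
  have hone : ∀ i, (0:ℝ) < 1 + e i := fun i => by linarith [he0 i]
  have hsum : (1 : Matrix n n ℝ) + Y = U * diagonal (fun i => 1 + e i) * star U := by
    rw [hspec]
    have : (1 : Matrix n n ℝ) = U * 1 * star U := by rw [Matrix.mul_one, hUU]
    nth_rewrite 1 [this]
    rw [← Matrix.add_mul, ← Matrix.mul_add]
    congr 1
    congr 1
    ext a b
    by_cases hab : a = b
    · subst hab; simp [Matrix.one_apply]
    · simp [Matrix.one_apply, hab, Matrix.diagonal_apply_ne _ hab]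
  have hdiff : (1 : Matrix n n ℝ) - Y = U * diagonal (fun i => 1 - e i) * star U := by
    rw [hspec]
    have : (1 : Matrix n n ℝ) = U * 1 * star U := by rw [Matrix.mul_one, hUU]
    nth_rewrite 1 [this]
    rw [← Matrix.sub_mul, ← Matrix.mul_sub]
    congr 1
    congr 1
    ext a b
    by_cases hab : a = b
    · subst hab; simp [Matrix.one_apply]
    · simp [Matrix.one_apply, hab, Matrix.diagonal_apply_ne _ hab]
  have hmul : ∀ (d₁ d₂ : n → ℝ),
      (U * diagonal d₁ * star U) * (U * diagonal d₂ * star U)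
        = U * diagonal (fun i => d₁ i * d₂ i) * star U := by
    intro d₁ d₂
    have : (U * diagonal d₁ * star U) * (U * diagonal d₂ * star U)
        = U * (diagonal d₁ * (star U * U) * diagonal d₂) * star U := by noncomm_ring
    rw [this, hUU', Matrix.mul_one, Matrix.diagonal_mul_diagonal]
  have hinv : (1 + Y)⁻¹ = U * diagonal (fun i => (1 + e i)⁻¹) * star U := by
    apply Matrix.inv_eq_right_inv
    rw [hsum, hmul]
    have : (fun i => (1 + e i) * (1 + e i)⁻¹) = fun _ => (1:ℝ) := by
      funext i; exact mul_inv_cancel₀ (hone i).ne'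
    rw [this, Matrix.diagonal_one, Matrix.mul_one, hUU]
  have hsq : ((1 : Matrix n n ℝ) - Y) * ((1 : Matrix n n ℝ) - Y)
      = U * diagonal (fun i => (1 - e i) * (1 - e i)) * star U := by
    rw [hdiff, hmul]
  rw [hinv, hsq]
  have hfin : U * diagonal (fun i => (1 + e i)⁻¹) * star U
      - U * diagonal (fun i => (1 - e i) * (1 - e i)) * star U
      = U * diagonal (fun i => (1 + e i)⁻¹ - (1 - e i) * (1 - e i)) * star U := by
    rw [← Matrix.diagonal_sub, ← Matrix.sub_mul, ← Matrix.mul_sub]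
  rw [hfin]
  have hd : (diagonal (fun i => (1 + e i)⁻¹ - (1 - e i) * (1 - e i))).PosSemidef := by
    refine Matrix.posSemidef_diagonal_iff.mpr fun i => ?_
    have h0i := he0 i
    have h1i := he1 i
    have h2 : (1 - e i) * (1 - e i) * (1 + e i) ≤ 1 := by nlinarith [mul_nonneg (mul_nonneg h0i h0i) (sub_nonneg.2 h1i)]
    have h3 : (1 - e i) * (1 - e i) ≤ (1 + e i)⁻¹ := by
      rw [show (1 + e i)⁻¹ = 1 / (1 + e i) from (one_div _).symm, le_div_iff₀ (hone i)]
      exact h2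
    linarith
  exact hd.mul_mul_conjTranspose_same U


variable {m : Type*} {l : Type*} [Fintype m] [Fintype l] [DecidableEq m] [DecidableEq l]

/-- The top-left block of a positive definite block matrix is positive definite. -/
lemma posDef_toBlock {A : Matrix m m ℝ} {B : Matrix m l ℝ} {C : Matrix l m ℝ}
    {D : Matrix l l ℝ} (h : (Matrix.fromBlocks A B C D).PosDef) : A.PosDef := by
  refine posDef_iff_dotProduct_mulVec.mpr ⟨?_, fun x hx => ?_⟩
  · have h1 := h.1
    ext i j
    have h2 := congrFun (congrFun h1 (Sum.inl i)) (Sum.inl j)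
    simpa using h2
  · have hv : (x ⊕ᵥ (0 : l → ℝ)) ≠ 0 := by
      intro hc
      apply hx
      funext i
      simpa using congrFun hc (Sum.inl i)
    have h2 := h.dotProduct_mulVec_pos hv
    simpa [Function.star_sumElim, Matrix.fromBlocks_mulVec,
      sumElim_dotProduct_sumElim] using h2

/-- Positive definiteness of a 2×2 block matrix in terms of the Schur complement. -/
lemma posDef_fromBlocks_iff {A : Matrix m m ℝ} (B : Matrix m l ℝ) (D : Matrix l l ℝ)
    (hA : A.PosDef) [Invertible A] :
    (Matrix.fromBlocks A B Bᴴ D).PosDef ↔ (D - Bᴴ * A⁻¹ * B).PosDef := by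
  constructor
  · intro h
    refine posDef_iff_dotProduct_mulVec.mpr ⟨(Matrix.IsHermitian.fromBlocks₁₁ B D hA.1).mp h.1, fun y hy => ?_⟩
    have hv : (-((A⁻¹ * B) *ᵥ y) ⊕ᵥ y) ≠ 0 := by
      intro hc
      apply hy
      funext i
      simpa using congrFun hc (Sum.inr i)
    have h2 := h.dotProduct_mulVec_pos hv
    rw [dotProduct_mulVec, Matrix.schur_complement_eq₁₁ B D _ _ hA.1, neg_add_cancel,
      dotProduct_zero, zero_add] at h2
    rw [dotProduct_mulVec]
    exact h2
  · intro h
    refine posDef_iff_dotProduct_mulVec.mpr ⟨(Matrix.IsHermitian.fromBlocks₁₁ B D hA.1).mpr h.1, fun v hv => ?_⟩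
    rw [dotProduct_mulVec, ← Sum.elim_comp_inl_inr v,
      Matrix.schur_complement_eq₁₁ B D _ _ hA.1]
    by_cases hy : v ∘ Sum.inr = 0
    · have hx : v ∘ Sum.inl ≠ 0 := by
        intro hxe
        apply hv
        rw [← Sum.elim_comp_inl_inr v, hxe, hy]
        funext i
        cases i <;> rfl
      rw [hy]
      simp only [Matrix.mulVec_zero, add_zero, star_zero, Matrix.zero_vecMul,
        zero_dotProduct, dotProduct_zero]
      rw [← dotProduct_mulVec]
      exact hA.dotProduct_mulVec_pos hx
    · have h2 := h.dotProduct_mulVec_pos hy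
      rw [dotProduct_mulVec] at h2
      have h1 : 0 ≤ star (v ∘ Sum.inl + (A⁻¹ * B) *ᵥ (v ∘ Sum.inr)) ᵥ* A
          ⬝ᵥ (v ∘ Sum.inl + (A⁻¹ * B) *ᵥ (v ∘ Sum.inr)) := by
        rw [← dotProduct_mulVec]
        exact hA.posSemidef.dotProduct_mulVec_nonneg _
      exact add_pos_of_nonneg_of_pos h1 h2

end LastStepAux

open LastStepAux

set_option maxHeartbeats 2000000 in
/-- splitting for the last step: for an SDDM matrix
`M = [[X + L, M_FC],[M_CF, M_CC]]` whose `FF` block is α-strongly diagonally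
dominant with `α ≥ 4` (`X` nonnegative diagonal with positive diagonal, `L`
Laplacian), with `Z = ½X⁻¹ + ½X⁻¹(X−L)X⁻¹(X−L)X⁻¹` and `M^last` obtained from
`M` by replacing the `FF` block with `Z⁻¹`, the matrices
`M₁ = [[X, M_FC],[M_CF, diag(M_CF·X⁻¹·M_FC·1)]]` and
`M₂ = [[X, (X−L)·X⁻¹·M_FC],[M_CF·X⁻¹·(X−L), 2·M_CC − diag(M_CF·X⁻¹·M_FC·1)]]`
satisfy: `Schur(M₁,F)` is a Laplacian, `M₂` is SDDM, and
`Schur(M^last,F) = ½(Schur(M₁,F) + Schur(M₂,F))`. -/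
theorem last_step_splitting {F C : Type*} [Fintype F] [Fintype C] [DecidableEq F] [DecidableEq C]
    (X L : Matrix F F ℝ) (MFC : Matrix F C ℝ) (MCF : Matrix C F ℝ) (MCC : Matrix C C ℝ)
    (α : ℝ) (hα : 4 ≤ α)
    (hXdiag : ∀ i j, i ≠ j → X i j = 0) (hXnn : ∀ i, 0 ≤ X i i) (hXpos : ∀ i, 0 < X i i)
    (hL : IsLaplacian L)
    (hM : IsSDDM (Matrix.fromBlocks (X + L) MFC MCF MCC))
    (hsdd : IsStronglyDD α (X + L)) :
    let Z := (1 / 2 : ℝ) • X⁻¹ + (1 / 2 : ℝ) • (X⁻¹ * (X - L) * X⁻¹ * (X - L) * X⁻¹)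
    let Mlast := Matrix.fromBlocks Z⁻¹ MFC MCF MCC
    let M₁ := Matrix.fromBlocks X MFC MCF
        (Matrix.diagonal ((MCF * X⁻¹ * MFC) *ᵥ fun _ => (1 : ℝ)))
    let M₂ := Matrix.fromBlocks X ((X - L) * X⁻¹ * MFC) (MCF * X⁻¹ * (X - L))
        ((2 : ℝ) • MCC - Matrix.diagonal ((MCF * X⁻¹ * MFC) *ᵥ fun _ => (1 : ℝ)))
    IsLaplacian (schurElimF M₁) ∧ IsSDDM M₂ ∧
      schurElimF Mlast = (1 / 2 : ℝ) • (schurElimF M₁ + schurElimF M₂) := by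
  intro Z Mlast M₁ M₂
  obtain ⟨hMsym, hMpd, hMoff, hMdom⟩ := hM
  obtain ⟨hLsym, hLoff, hLrow⟩ := hL
  have hd : ∀ f, 0 < X f f := hXpos
  -- X is diagonal
  have hXdg : X = Matrix.diagonal (fun f => X f f) := by
    ext i j
    by_cases h : i = j
    · subst h; simp
    · rw [Matrix.diagonal_apply_ne _ h]; exact hXdiag i j h
  have hXinv : X⁻¹ = Matrix.diagonal (fun f => (X f f)⁻¹) := by
    apply Matrix.inv_eq_right_inv
    nth_rewrite 1 [hXdg]
    rw [Matrix.diagonal_mul_diagonal]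
    have h1 : (fun i => X i i * (X i i)⁻¹) = fun _ => (1:ℝ) :=
      funext fun i => mul_inv_cancel₀ (hd i).ne'
    rw [h1, Matrix.diagonal_one]
  have hXt : Xᵀ = X := by rw [hXdg, Matrix.diagonal_transpose]
  have hXit : X⁻¹ᵀ = X⁻¹ := by rw [hXinv, Matrix.diagonal_transpose]
  have hXLt : (X - L)ᵀ = X - L := by rw [Matrix.transpose_sub, hXt, hLsym]
  -- sign facts
  have hMFC : ∀ f c, MFC f c ≤ 0 := fun f c => hMoff (Sum.inl f) (Sum.inr c) (by simp)
  have hMCFeq : MCF = MFCᵀ := by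
    ext c f
    have h := congrFun (congrFun hMsym (Sum.inl f)) (Sum.inr c)
    simpa using h
  have hMCFt : MCFᵀ = MFC := by rw [hMCFeq, Matrix.transpose_transpose]
  have hMCF : ∀ c f, MCF c f ≤ 0 := fun c f => by
    rw [hMCFeq, Matrix.transpose_apply]; exact hMFC f c
  have hMCCo : ∀ c c', c ≠ c' → MCC c c' ≤ 0 := fun c c' h =>
    hMoff (Sum.inr c) (Sum.inr c') (by simp [h])
  have hMCCt : MCCᵀ = MCC := by
    ext c c'
    have h := congrFun (congrFun hMsym (Sum.inr c')) (Sum.inr c)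
    simpa using h.symm
  -- Laplacian facts
  have hLabs : ∀ f g, f ≠ g → |L f g| = -(L f g) := fun f g h => abs_of_nonpos (hLoff f g h)
  have hLdd : ∀ f, ∑ g ∈ Finset.univ.erase f, |L f g| = L f f := by
    intro f
    have h := hLrow f
    rw [← Finset.add_sum_erase _ _ (Finset.mem_univ f)] at h
    have h2 : ∑ g ∈ Finset.univ.erase f, |L f g| = ∑ g ∈ Finset.univ.erase f, -(L f g) :=
      Finset.sum_congr rfl fun g hg =>
        hLabs f g (fun he => (Finset.mem_erase.mp hg).1 he.symm)
    rw [h2, Finset.sum_neg_distrib]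
    linarith
  have hLnn : ∀ f, 0 ≤ L f f := fun f => by
    rw [← hLdd f]; exact Finset.sum_nonneg fun g _ => abs_nonneg _
  have hL4 : ∀ f, 4 * L f f ≤ X f f := by
    intro f
    have h := hsdd f
    have h2 : ∑ g ∈ Finset.univ.erase f, |(X + L) f g| = L f f := by
      rw [← hLdd f]
      refine Finset.sum_congr rfl fun g hg => ?_
      have hg' : g ≠ f := (Finset.mem_erase.mp hg).1
      rw [Matrix.add_apply, hXdiag f g (fun he => hg' he.symm), zero_add]
    rw [h2, Matrix.add_apply] at h
    nlinarith [hLnn f]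
  have hXLe : ∀ f g, 0 ≤ (X - L) f g := by
    intro f g
    rw [Matrix.sub_apply]
    by_cases h : f = g
    · subst h; nlinarith [hL4 f, hLnn f]
    · rw [hXdiag f g h]; linarith [hLoff f g h]
  have hXLrow : ∀ f, ∑ g, (X - L) f g = X f f := by
    intro f
    have h1 : ∑ g, X f g = X f f := by
      rw [← Finset.add_sum_erase _ _ (Finset.mem_univ f)]
      have h2 : ∑ g ∈ Finset.univ.erase f, X f g = 0 :=
        Finset.sum_eq_zero fun g hg =>
          hXdiag f g (fun he => (Finset.mem_erase.mp hg).1 he.symm)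
      rw [h2, add_zero]
    simp only [Matrix.sub_apply, Finset.sum_sub_distrib, h1, hLrow f, sub_zero]
  -- row-sum bounds from SDDM of M
  have hr : ∀ g, ∑ c, |MFC g c| ≤ X g g := by
    intro g
    have h := hMdom (Sum.inl g)
    rw [Finset.sum_erase_eq_sub (Finset.mem_univ _), Fintype.sum_sum_type] at h
    simp only [Matrix.fromBlocks_apply₁₁, Matrix.fromBlocks_apply₁₂] at h
    have hXLgg : (X + L) g g = X g g + L g g := by simp [Matrix.add_apply]
    have habs : |X g g + L g g| = X g g + L g g :=
      abs_of_nonneg (by nlinarith [hLnn g, hd g])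
    have hsum1 : ∑ g', |(X + L) g g'| = (X g g + L g g) + L g g := by
      rw [← Finset.add_sum_erase _ _ (Finset.mem_univ g), hXLgg, habs]
      congr 1
      rw [← hLdd g]
      refine Finset.sum_congr rfl fun g' hg' => ?_
      rw [Matrix.add_apply, hXdiag g g' (fun he => (Finset.mem_erase.mp hg').1 he.symm), zero_add]
    rw [hsum1, hXLgg] at h
    linarith [habs]
  have hst : ∀ c, (∑ f, |MCF c f|) + (∑ c' ∈ Finset.univ.erase c, |MCC c c'|) ≤ MCC c c := by
    intro c
    have h := hMdom (Sum.inr c)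
    rw [Finset.sum_erase_eq_sub (Finset.mem_univ _), Fintype.sum_sum_type] at h
    simp only [Matrix.fromBlocks_apply₂₁, Matrix.fromBlocks_apply₂₂] at h
    have hsplit : ∑ c', |MCC c c'| = |MCC c c| + ∑ c' ∈ Finset.univ.erase c, |MCC c c'| :=
      (Finset.add_sum_erase _ _ (Finset.mem_univ c)).symm
    rw [hsplit] at h
    linarith
  -- entries of the products
  have hPapp : ∀ c c', (MCF * X⁻¹ * MFC) c c' = ∑ f, MCF c f * ((X f f)⁻¹ * MFC f c') := by
    intro c c'
    rw [hXinv, Matrix.mul_apply]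
    refine Finset.sum_congr rfl fun f _ => ?_
    rw [Matrix.mul_diagonal]
    ring
  have hPnn : ∀ c c', 0 ≤ (MCF * X⁻¹ * MFC) c c' := by
    intro c c'
    rw [hPapp]
    refine Finset.sum_nonneg fun f _ => ?_
    have h1 : 0 ≤ (-(MCF c f)) * ((X f f)⁻¹ * (-(MFC f c'))) :=
      mul_nonneg (neg_nonneg.2 (hMCF c f))
        (mul_nonneg (inv_nonneg.2 (hd f).le) (neg_nonneg.2 (hMFC f c')))
    have h2 : (-(MCF c f)) * ((X f f)⁻¹ * (-(MFC f c'))) = MCF c f * ((X f f)⁻¹ * MFC f c') := by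
      ring
    linarith
  have hDvec : ∀ c, ((MCF * X⁻¹ * MFC) *ᵥ fun _ => (1:ℝ)) c = ∑ c', (MCF * X⁻¹ * MFC) c c' := by
    intro c
    simp [Matrix.mulVec, dotProduct]
  have hDle : ∀ c, ((MCF * X⁻¹ * MFC) *ᵥ fun _ => (1:ℝ)) c ≤ ∑ f, |MCF c f| := by
    intro c
    rw [hDvec]
    have h1 : ∑ c', (MCF * X⁻¹ * MFC) c c'
        = ∑ f, (-(MCF c f)) * ((X f f)⁻¹ * (∑ c', |MFC f c'|)) := by
      rw [Finset.sum_congr rfl (fun c' _ => hPapp c c'), Finset.sum_comm]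
      refine Finset.sum_congr rfl fun f _ => ?_
      have h2 : ∀ c', MCF c f * ((X f f)⁻¹ * MFC f c')
          = (-(MCF c f)) * ((X f f)⁻¹ * (-(MFC f c'))) := fun c' => by ring
      rw [Finset.sum_congr rfl (fun c' _ => h2 c'), ← Finset.mul_sum, ← Finset.mul_sum]
      congr 2
      exact Finset.sum_congr rfl fun c' _ => by rw [abs_of_nonpos (hMFC f c')]
    rw [h1]
    refine Finset.sum_le_sum fun f _ => ?_
    have h2 : (X f f)⁻¹ * (∑ c', |MFC f c'|) ≤ 1 := by
      rw [← inv_mul_cancel₀ (hd f).ne']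
      exact mul_le_mul_of_nonneg_left (hr f) (inv_nonneg.2 (hd f).le)
    have h3 : 0 ≤ -(MCF c f) := neg_nonneg.2 (hMCF c f)
    calc (-(MCF c f)) * ((X f f)⁻¹ * ∑ c', |MFC f c'|)
        ≤ (-(MCF c f)) * 1 := mul_le_mul_of_nonneg_left h2 h3
      _ = |MCF c f| := by rw [mul_one, ← abs_of_nonpos (hMCF c f)]
  -- entries of the two off-diagonal blocks of M₂
  have hB2app : ∀ f c, ((X - L) * X⁻¹ * MFC) f c
      = ∑ g, (X - L) f g * ((X g g)⁻¹ * MFC g c) := by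
    intro f c
    rw [hXinv, Matrix.mul_apply]
    refine Finset.sum_congr rfl fun g _ => ?_
    rw [Matrix.mul_diagonal]
    ring
  have hB2np : ∀ f c, ((X - L) * X⁻¹ * MFC) f c ≤ 0 := by
    intro f c
    rw [hB2app]
    refine Finset.sum_nonpos fun g _ => ?_
    have h1 : 0 ≤ (X - L) f g * ((X g g)⁻¹ * (-(MFC g c))) :=
      mul_nonneg (hXLe f g) (mul_nonneg (inv_nonneg.2 (hd g).le) (neg_nonneg.2 (hMFC g c)))
    have h2 : (X - L) f g * ((X g g)⁻¹ * (-(MFC g c)))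
        = -((X - L) f g * ((X g g)⁻¹ * MFC g c)) := by ring
    linarith
  have hC2app : ∀ c f, (MCF * X⁻¹ * (X - L)) c f
      = ∑ g, MCF c g * ((X g g)⁻¹ * (X - L) g f) := by
    intro c f
    rw [hXinv, Matrix.mul_apply]
    refine Finset.sum_congr rfl fun g _ => ?_
    rw [Matrix.mul_diagonal]
    ring
  have hC2np : ∀ c f, (MCF * X⁻¹ * (X - L)) c f ≤ 0 := by
    intro c f
    rw [hC2app]
    refine Finset.sum_nonpos fun g _ => ?_
    have h1 : 0 ≤ (-(MCF c g)) * ((X g g)⁻¹ * (X - L) g f) :=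
      mul_nonneg (neg_nonneg.2 (hMCF c g))
        (mul_nonneg (inv_nonneg.2 (hd g).le) (hXLe g f))
    have h2 : (-(MCF c g)) * ((X g g)⁻¹ * (X - L) g f)
        = -(MCF c g * ((X g g)⁻¹ * (X - L) g f)) := by ring
    linarith
  -- row bounds for the blocks of M₂
  have hrowF : ∀ f, ∑ c, |((X - L) * X⁻¹ * MFC) f c| ≤ X f f := by
    intro f
    have h1 : ∀ c, |((X - L) * X⁻¹ * MFC) f c|
        = ∑ g, (X - L) f g * ((X g g)⁻¹ * (-(MFC g c))) := by
      intro c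
      rw [abs_of_nonpos (hB2np f c), hB2app, ← Finset.sum_neg_distrib]
      exact Finset.sum_congr rfl fun g _ => by ring
    rw [Finset.sum_congr rfl (fun c _ => h1 c), Finset.sum_comm]
    have h2 : ∀ g, ∑ c, (X - L) f g * ((X g g)⁻¹ * (-(MFC g c)))
        = (X - L) f g * ((X g g)⁻¹ * (∑ c, |MFC g c|)) := by
      intro g
      rw [← Finset.mul_sum, ← Finset.mul_sum]
      congr 2
      exact Finset.sum_congr rfl fun c _ => by rw [abs_of_nonpos (hMFC g c)]
    rw [Finset.sum_congr rfl (fun g _ => h2 g)]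
    calc ∑ g, (X - L) f g * ((X g g)⁻¹ * ∑ c, |MFC g c|)
        ≤ ∑ g, (X - L) f g * 1 := by
          refine Finset.sum_le_sum fun g _ => mul_le_mul_of_nonneg_left ?_ (hXLe f g)
          rw [← inv_mul_cancel₀ (hd g).ne']
          exact mul_le_mul_of_nonneg_left (hr g) (inv_nonneg.2 (hd g).le)
      _ = X f f := by
          simp only [mul_one]
          exact hXLrow f
  have hrowC : ∀ c, ∑ f, |(MCF * X⁻¹ * (X - L)) c f| = ∑ g, |MCF c g| := by
    intro c
    have h1 : ∀ f, |(MCF * X⁻¹ * (X - L)) c f|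
        = ∑ g, (-(MCF c g)) * ((X g g)⁻¹ * (X - L) g f) := by
      intro f
      rw [abs_of_nonpos (hC2np c f), hC2app, ← Finset.sum_neg_distrib]
      exact Finset.sum_congr rfl fun g _ => by ring
    rw [Finset.sum_congr rfl (fun f _ => h1 f), Finset.sum_comm]
    have h2 : ∀ g, ∑ f, (-(MCF c g)) * ((X g g)⁻¹ * (X - L) g f) = |MCF c g| := by
      intro g
      rw [← Finset.mul_sum, ← Finset.mul_sum, hXLrow g, inv_mul_cancel₀ (hd g).ne', mul_one,
        abs_of_nonpos (hMCF c g)]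
    exact Finset.sum_congr rfl fun g _ => h2 g
  -- Schur complements of M₁ and M₂, explicitly
  have hSch1 : schurElimF M₁
      = Matrix.diagonal ((MCF * X⁻¹ * MFC) *ᵥ fun _ => (1:ℝ)) - MCF * X⁻¹ * MFC := by
    show schurElimF (Matrix.fromBlocks X MFC MCF
      (Matrix.diagonal ((MCF * X⁻¹ * MFC) *ᵥ fun _ => (1 : ℝ)))) = _
    rw [schurElimF, Matrix.toBlocks_fromBlocks₂₂, Matrix.toBlocks_fromBlocks₂₁,
      Matrix.toBlocks_fromBlocks₁₁, Matrix.toBlocks_fromBlocks₁₂]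
  have hSch2 : schurElimF M₂
      = ((2:ℝ) • MCC - Matrix.diagonal ((MCF * X⁻¹ * MFC) *ᵥ fun _ => (1:ℝ)))
        - MCF * X⁻¹ * (X - L) * X⁻¹ * ((X - L) * X⁻¹ * MFC) := by
    show schurElimF (Matrix.fromBlocks X ((X - L) * X⁻¹ * MFC) (MCF * X⁻¹ * (X - L))
      ((2 : ℝ) • MCC - Matrix.diagonal ((MCF * X⁻¹ * MFC) *ᵥ fun _ => (1 : ℝ)))) = _
    rw [schurElimF, Matrix.toBlocks_fromBlocks₂₂, Matrix.toBlocks_fromBlocks₂₁,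
      Matrix.toBlocks_fromBlocks₁₁, Matrix.toBlocks_fromBlocks₁₂]
  -- positive definiteness machinery
  have hXpd : X.PosDef := by
    rw [hXdg]
    exact Matrix.posDef_diagonal_iff.mpr hd
  have hXipd : X⁻¹.PosDef := hXpd.inv
  haveI : Invertible X := hXpd.isUnit.invertible
  have hXLpd : (X + L).PosDef := posDef_toBlock hMpd
  haveI : Invertible (X + L) := hXLpd.isUnit.invertible
  have hMpd' : (Matrix.fromBlocks (X + L) MFC MFCᴴ MCC).PosDef := by
    rw [show MFCᴴ = MCF from hMCFeq.symm]
    exact hMpd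
  have hSchurMpd : (MCC - MCF * (X + L)⁻¹ * MFC).PosDef := by
    have h := (posDef_fromBlocks_iff MFC MCC hXLpd).mp hMpd'
    rwa [show MFCᴴ = MCF from hMCFeq.symm] at h
  -- spectral bound on the Laplacian part
  have hLpsd : L.PosSemidef := dd_posSemidef hLsym (fun f => (hLdd f).le)
  have hXmLpsd : (X - L).PosSemidef := by
    refine dd_posSemidef hXLt ?_
    intro f
    have h1 : ∑ g ∈ Finset.univ.erase f, |(X - L) f g| = L f f := by
      rw [← hLdd f]
      refine Finset.sum_congr rfl fun g hg => ?_
      rw [Matrix.sub_apply, hXdiag f g (fun he => (Finset.mem_erase.mp hg).1 he.symm), zero_sub,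
        abs_neg]
    rw [h1, Matrix.sub_apply]
    nlinarith [hL4 f, hLnn f]
  -- the diagonal square-root conjugation
  set Si : Matrix F F ℝ := Matrix.diagonal (fun f => Real.sqrt (X f f)) with hSidef
  set E : Matrix F F ℝ := Matrix.diagonal (fun f => (Real.sqrt (X f f))⁻¹) with hEdef
  have hsq : ∀ f, 0 < Real.sqrt (X f f) := fun f => Real.sqrt_pos.2 (hd f)
  have hsqsq : ∀ f, Real.sqrt (X f f) * Real.sqrt (X f f) = X f f :=
    fun f => Real.mul_self_sqrt (hd f).le
  have hSiE : Si * E = 1 := by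
    rw [hSidef, hEdef, Matrix.diagonal_mul_diagonal]
    have h1 : (fun f => Real.sqrt (X f f) * (Real.sqrt (X f f))⁻¹) = fun _ => (1:ℝ) :=
      funext fun f => mul_inv_cancel₀ (hsq f).ne'
    rw [h1, Matrix.diagonal_one]
  have hESi : E * Si = 1 := by
    rw [hSidef, hEdef, Matrix.diagonal_mul_diagonal]
    have h1 : (fun f => (Real.sqrt (X f f))⁻¹ * Real.sqrt (X f f)) = fun _ => (1:ℝ) :=
      funext fun f => inv_mul_cancel₀ (hsq f).ne'
    rw [h1, Matrix.diagonal_one]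
  have hSiSi : Si * Si = X := by
    rw [hSidef, Matrix.diagonal_mul_diagonal]
    conv_rhs => rw [hXdg]
    exact congrArg _ (funext fun f => hsqsq f)
  have hEE : E * E = X⁻¹ := by
    rw [hEdef, Matrix.diagonal_mul_diagonal, hXinv]
    refine congrArg _ (funext fun f => ?_)
    rw [← mul_inv, hsqsq f]
  have hEt : Eᴴ = E := by
    rw [hEdef]
    exact Matrix.diagonal_transpose _
  set Y : Matrix F F ℝ := E * L * E with hYdef
  have hYpsd : Y.PosSemidef := by
    have h := hLpsd.mul_mul_conjTranspose_same E
    rwa [hEt] at h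
  have hEXE : E * X * E = 1 := by
    conv_lhs => rw [hXdg]
    rw [hEdef, Matrix.diagonal_mul_diagonal, Matrix.diagonal_mul_diagonal]
    have h1 : (fun f => (Real.sqrt (X f f))⁻¹ * X f f * (Real.sqrt (X f f))⁻¹) = fun _ => (1:ℝ) := by
      funext f
      rw [mul_comm, ← mul_assoc, ← mul_inv, hsqsq f, inv_mul_cancel₀ (hd f).ne']
    rw [h1, Matrix.diagonal_one]
  have h1mY : (1 : Matrix F F ℝ) - Y = E * (X - L) * E := by
    rw [Matrix.mul_sub, Matrix.sub_mul, hEXE, hYdef]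
  have h1mYpsd : ((1 : Matrix F F ℝ) - Y).PosSemidef := by
    rw [h1mY]
    have h := hXmLpsd.mul_mul_conjTranspose_same E
    rwa [hEt] at h
  have hKey := inv_key hYpsd h1mYpsd
  have hXLfact : X + L = Si * (1 + Y) * Si := by
    have h1 : Si * (1 + Y) * Si = Si * Si + Si * (E * L * E) * Si := by
      rw [hYdef]; noncomm_ring
    have h2 : Si * (E * L * E) * Si = (Si * E) * L * (E * Si) := by noncomm_ring
    rw [h1, h2, hSiE, hESi, Matrix.one_mul, Matrix.mul_one, hSiSi]
  have hSiinv : Si⁻¹ = E := Matrix.inv_eq_right_inv hSiE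
  have hinvXL : (X + L)⁻¹ = E * (1 + Y)⁻¹ * E := by
    rw [hXLfact, Matrix.mul_assoc, Matrix.mul_inv_rev, Matrix.mul_inv_rev, hSiinv]
  have hW : X⁻¹ * (X - L) * X⁻¹ * (X - L) * X⁻¹ = E * ((1 - Y) * (1 - Y)) * E := by
    rw [h1mY, ← hEE]
    noncomm_ring
  have hKpsd : ((X + L)⁻¹ - X⁻¹ * (X - L) * X⁻¹ * (X - L) * X⁻¹).PosSemidef := by
    rw [hinvXL, hW,
      show E * (1 + Y)⁻¹ * E - E * ((1 - Y) * (1 - Y)) * E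
        = E * ((1 + Y)⁻¹ - (1 - Y) * (1 - Y)) * E by noncomm_ring]
    have h := hKey.mul_mul_conjTranspose_same E
    rwa [hEt] at h
  -- MCC - D is PSD
  have hMCCDg : (MCC - Matrix.diagonal ((MCF * X⁻¹ * MFC) *ᵥ fun _ => (1:ℝ))).PosSemidef := by
    refine dd_posSemidef ?_ ?_
    · show (MCC - _)ᵀ = _
      rw [Matrix.transpose_sub, hMCCt, Matrix.diagonal_transpose]
    · intro c
      have h1 : ∑ c' ∈ Finset.univ.erase c,
          |(MCC - Matrix.diagonal ((MCF * X⁻¹ * MFC) *ᵥ fun _ => (1:ℝ))) c c'|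
          = ∑ c' ∈ Finset.univ.erase c, |MCC c c'| := by
        refine Finset.sum_congr rfl fun c' hc' => ?_
        rw [Matrix.sub_apply,
          Matrix.diagonal_apply_ne _ (fun he => (Finset.mem_erase.mp hc').1 he.symm), sub_zero]
      rw [h1, Matrix.sub_apply, Matrix.diagonal_apply_eq]
      linarith [hst c, hDle c]
  -- Schur complement of M₂ is positive definite
  have hB2H : ((X - L) * X⁻¹ * MFC)ᴴ = MCF * X⁻¹ * (X - L) := by
    show ((X - L) * X⁻¹ * MFC)ᵀ = _
    rw [Matrix.transpose_mul, Matrix.transpose_mul, hXit, hXLt, ← hMCFeq, Matrix.mul_assoc]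
  have hS2pd : (((2:ℝ) • MCC - Matrix.diagonal ((MCF * X⁻¹ * MFC) *ᵥ fun _ => (1:ℝ)))
      - MCF * X⁻¹ * (X - L) * X⁻¹ * ((X - L) * X⁻¹ * MFC)).PosDef := by
    have hconj : (MCF * ((X + L)⁻¹ - X⁻¹ * (X - L) * X⁻¹ * (X - L) * X⁻¹) * MFC).PosSemidef := by
      have h := hKpsd.mul_mul_conjTranspose_same MCF
      rwa [show MCFᴴ = MFC from hMCFt] at h
    have hdecomp : ((2:ℝ) • MCC - Matrix.diagonal ((MCF * X⁻¹ * MFC) *ᵥ fun _ => (1:ℝ)))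
        - MCF * X⁻¹ * (X - L) * X⁻¹ * ((X - L) * X⁻¹ * MFC)
        = (MCC - MCF * (X + L)⁻¹ * MFC)
          + ((MCC - Matrix.diagonal ((MCF * X⁻¹ * MFC) *ᵥ fun _ => (1:ℝ)))
            + MCF * ((X + L)⁻¹ - X⁻¹ * (X - L) * X⁻¹ * (X - L) * X⁻¹) * MFC) := by
      have h1 : MCF * ((X + L)⁻¹ - X⁻¹ * (X - L) * X⁻¹ * (X - L) * X⁻¹) * MFC
          = MCF * (X + L)⁻¹ * MFC - MCF * X⁻¹ * (X - L) * X⁻¹ * ((X - L) * X⁻¹ * MFC) := by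
        rw [Matrix.mul_sub, Matrix.sub_mul]
        congr 1
        simp only [Matrix.mul_assoc]
      rw [h1, two_smul]
      abel
    rw [hdecomp]
    exact hSchurMpd.add_posSemidef (hMCCDg.add hconj)
  have hM2pd : M₂.PosDef := by
    show (Matrix.fromBlocks X ((X - L) * X⁻¹ * MFC) (MCF * X⁻¹ * (X - L))
      ((2 : ℝ) • MCC - Matrix.diagonal ((MCF * X⁻¹ * MFC) *ᵥ fun _ => (1 : ℝ)))).PosDef
    rw [show MCF * X⁻¹ * (X - L) = ((X - L) * X⁻¹ * MFC)ᴴ from hB2H.symm]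
    refine (posDef_fromBlocks_iff _ _ hXpd).mpr ?_
    rw [hB2H]
    exact hS2pd
  -- Z is positive definite
  have hW2psd : (X⁻¹ * (X - L) * X⁻¹ * (X - L) * X⁻¹).PosSemidef := by
    have h := hXipd.posSemidef.mul_mul_conjTranspose_same (X⁻¹ * (X - L))
    have he : (X⁻¹ * (X - L))ᴴ = (X - L) * X⁻¹ := by
      show (X⁻¹ * (X - L))ᵀ = _
      rw [Matrix.transpose_mul, hXit, hXLt]
    rw [he] at h
    rwa [show X⁻¹ * (X - L) * X⁻¹ * ((X - L) * X⁻¹)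
      = X⁻¹ * (X - L) * X⁻¹ * (X - L) * X⁻¹ by simp only [Matrix.mul_assoc]] at h
  have hZpd : ((1 / 2 : ℝ) • X⁻¹
      + (1 / 2 : ℝ) • (X⁻¹ * (X - L) * X⁻¹ * (X - L) * X⁻¹)).PosDef :=
    (posDef_smul hXipd (by norm_num)).add_posSemidef (posSemidef_smul hW2psd (by norm_num))
  refine ⟨?_, ?_, ?_⟩
  · -- Schur complement of M₁ is a Laplacian
    rw [hSch1]
    refine ⟨?_, ?_, ?_⟩
    · show (Matrix.diagonal ((MCF * X⁻¹ * MFC) *ᵥ fun _ => (1:ℝ)) - MCF * X⁻¹ * MFC)ᵀ = _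
      rw [Matrix.transpose_sub, Matrix.diagonal_transpose]
      congr 1
      rw [Matrix.transpose_mul, Matrix.transpose_mul, hXit, hMCFt, ← hMCFeq, Matrix.mul_assoc]
    · intro c c' hcc
      rw [Matrix.sub_apply, Matrix.diagonal_apply_ne _ hcc]
      linarith [hPnn c c']
    · intro c
      simp only [Matrix.sub_apply, Finset.sum_sub_distrib]
      have h1 : ∑ c', Matrix.diagonal ((MCF * X⁻¹ * MFC) *ᵥ fun _ => (1:ℝ)) c c'
          = ((MCF * X⁻¹ * MFC) *ᵥ fun _ => (1:ℝ)) c := by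
        rw [← Finset.add_sum_erase _ _ (Finset.mem_univ c)]
        have h2 : ∑ c' ∈ Finset.univ.erase c,
            Matrix.diagonal ((MCF * X⁻¹ * MFC) *ᵥ fun _ => (1:ℝ)) c c' = 0 :=
          Finset.sum_eq_zero fun c' hc' =>
            Matrix.diagonal_apply_ne _ (fun he => (Finset.mem_erase.mp hc').1 he.symm)
        rw [h2, add_zero, Matrix.diagonal_apply_eq]
      rw [h1, hDvec c, sub_self]
  · -- M₂ is SDDM
    refine ⟨?_, hM2pd, ?_, ?_⟩
    · show M₂ᵀ = M₂
      show (Matrix.fromBlocks X ((X - L) * X⁻¹ * MFC) (MCF * X⁻¹ * (X - L))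
        ((2 : ℝ) • MCC - Matrix.diagonal ((MCF * X⁻¹ * MFC) *ᵥ fun _ => (1 : ℝ))))ᵀ = _
      rw [Matrix.fromBlocks_transpose, hXt]
      rw [show ((X - L) * X⁻¹ * MFC)ᵀ = MCF * X⁻¹ * (X - L) from hB2H]
      rw [show (MCF * X⁻¹ * (X - L))ᵀ = (X - L) * X⁻¹ * MFC by
        rw [← hB2H]
        show ((X - L) * X⁻¹ * MFC)ᵀᵀ = _
        rw [Matrix.transpose_transpose]]
      rw [Matrix.transpose_sub, Matrix.transpose_smul, hMCCt, Matrix.diagonal_transpose]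
    · intro i j hij
      cases i with
      | inl f =>
        cases j with
        | inl f' =>
          show X f f' ≤ 0
          rw [hXdiag f f' (by simpa using hij)]
        | inr c =>
          show ((X - L) * X⁻¹ * MFC) f c ≤ 0
          exact hB2np f c
      | inr c =>
        cases j with
        | inl f =>
          show (MCF * X⁻¹ * (X - L)) c f ≤ 0
          exact hC2np c f
        | inr c' =>
          show ((2:ℝ) • MCC - Matrix.diagonal ((MCF * X⁻¹ * MFC) *ᵥ fun _ => (1:ℝ))) c c' ≤ 0
          have hcc : c ≠ c' := by simpa using hij
          rw [Matrix.sub_apply, Matrix.diagonal_apply_ne _ hcc, Matrix.smul_apply, sub_zero,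
            smul_eq_mul]
          nlinarith [hMCCo c c' hcc]
    · show ∀ i, ∑ j ∈ Finset.univ.erase i,
          |(Matrix.fromBlocks X ((X - L) * X⁻¹ * MFC) (MCF * X⁻¹ * (X - L))
            ((2 : ℝ) • MCC - Matrix.diagonal ((MCF * X⁻¹ * MFC) *ᵥ fun _ => (1 : ℝ)))) i j|
          ≤ (Matrix.fromBlocks X ((X - L) * X⁻¹ * MFC) (MCF * X⁻¹ * (X - L))
            ((2 : ℝ) • MCC - Matrix.diagonal ((MCF * X⁻¹ * MFC) *ᵥ fun _ => (1 : ℝ)))) i i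
      intro i
      cases i with
      | inl f =>
        rw [Finset.sum_erase_eq_sub (Finset.mem_univ _), Fintype.sum_sum_type]
        simp only [Matrix.fromBlocks_apply₁₁, Matrix.fromBlocks_apply₁₂]
        have hXr : ∑ g, |X f g| = X f f := by
          rw [← Finset.add_sum_erase _ _ (Finset.mem_univ f)]
          have h2 : ∑ g ∈ Finset.univ.erase f, |X f g| = 0 :=
            Finset.sum_eq_zero fun g hg => by
              rw [hXdiag f g (fun he => (Finset.mem_erase.mp hg).1 he.symm), abs_zero]
          rw [h2, add_zero, abs_of_pos (hd f)]
        rw [hXr, abs_of_pos (hd f)]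
        linarith [hrowF f]
      | inr c =>
        rw [Finset.sum_erase_eq_sub (Finset.mem_univ _), Fintype.sum_sum_type]
        simp only [Matrix.fromBlocks_apply₂₁, Matrix.fromBlocks_apply₂₂]
        have hdc : ((2:ℝ) • MCC - Matrix.diagonal ((MCF * X⁻¹ * MFC) *ᵥ fun _ => (1:ℝ))) c c
            = 2 * MCC c c - ((MCF * X⁻¹ * MFC) *ᵥ fun _ => (1:ℝ)) c := by
          rw [Matrix.sub_apply, Matrix.diagonal_apply_eq, Matrix.smul_apply, smul_eq_mul]
        have hsplit : ∑ c', |((2:ℝ) • MCC - Matrix.diagonal ((MCF * X⁻¹ * MFC) *ᵥ fun _ => (1:ℝ))) c c'|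
            = |((2:ℝ) • MCC - Matrix.diagonal ((MCF * X⁻¹ * MFC) *ᵥ fun _ => (1:ℝ))) c c|
              + ∑ c' ∈ Finset.univ.erase c, 2 * |MCC c c'| := by
          rw [← Finset.add_sum_erase _ _ (Finset.mem_univ c)]
          congr 1
          refine Finset.sum_congr rfl fun c' hc' => ?_
          rw [Matrix.sub_apply,
            Matrix.diagonal_apply_ne _ (fun he => (Finset.mem_erase.mp hc').1 he.symm),
            sub_zero, Matrix.smul_apply, smul_eq_mul, abs_mul, abs_two]
        rw [hsplit, hrowC c, hdc]
        have h2 : ∑ c' ∈ Finset.univ.erase c, 2 * |MCC c c'|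
            = 2 * ∑ c' ∈ Finset.univ.erase c, |MCC c c'| := by
          rw [Finset.mul_sum]
        rw [h2]
        linarith [hst c, hDle c, abs_nonneg (((2:ℝ) • MCC
          - Matrix.diagonal ((MCF * X⁻¹ * MFC) *ᵥ fun _ => (1:ℝ))) c c)]
  · -- the Schur complement identity
    have hZdet : IsUnit ((1 / 2 : ℝ) • X⁻¹
        + (1 / 2 : ℝ) • (X⁻¹ * (X - L) * X⁻¹ * (X - L) * X⁻¹)).det :=
      (Matrix.isUnit_iff_isUnit_det _).mp hZpd.isUnit
    have hSchL : schurElimF Mlast = MCC - MCF * ((1 / 2 : ℝ) • X⁻¹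
        + (1 / 2 : ℝ) • (X⁻¹ * (X - L) * X⁻¹ * (X - L) * X⁻¹)) * MFC := by
      show schurElimF (Matrix.fromBlocks ((1 / 2 : ℝ) • X⁻¹
        + (1 / 2 : ℝ) • (X⁻¹ * (X - L) * X⁻¹ * (X - L) * X⁻¹))⁻¹ MFC MCF MCC) = _
      rw [schurElimF, Matrix.toBlocks_fromBlocks₂₂, Matrix.toBlocks_fromBlocks₂₁,
        Matrix.toBlocks_fromBlocks₁₁, Matrix.toBlocks_fromBlocks₁₂,
        Matrix.nonsing_inv_nonsing_inv _ hZdet]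
    rw [hSchL, hSch1, hSch2]
    have h1 : MCF * ((1 / 2 : ℝ) • X⁻¹
        + (1 / 2 : ℝ) • (X⁻¹ * (X - L) * X⁻¹ * (X - L) * X⁻¹)) * MFC
        = (1 / 2 : ℝ) • (MCF * X⁻¹ * MFC)
          + (1 / 2 : ℝ) • (MCF * X⁻¹ * (X - L) * X⁻¹ * ((X - L) * X⁻¹ * MFC)) := by
      rw [Matrix.mul_add, Matrix.add_mul, Matrix.mul_smul, Matrix.mul_smul, Matrix.smul_mul,
        Matrix.smul_mul]
      simp only [Matrix.mul_assoc]
    rw [h1]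
    module

end
end

section
/- Let A be a symmetric n×n matrix with nonnegative entries, and let d, λ > 0 with λ ≤ d/2 be such that A·1 = d·1 and |xᵀ·A·x| ≤ λ·‖x‖² for every vector x orthogonal to the all-ones vector 1. Then (n/d)·(d·I − A) ≈_ε (n·I − J), where J is the n×n all-ones matrix (so n·I − J is the Laplacian of the complete graph on n vertices) and ε = 2·ln(2)·λ/d. -/
open Matrix BigOperators Finset
open scoped Classical

noncomputable section

lemma aux_psd {n : ℕ} (P : Matrix (Fin n) (Fin n) ℝ) (hsymP : P.IsHermitian)
    (h1 : P *ᵥ (fun _ => (1:ℝ)) = 0)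
    (hq : ∀ y : Fin n → ℝ, (∑ i, y i) = 0 → 0 ≤ y ⬝ᵥ P *ᵥ y) : P.PosSemidef := by
  refine Matrix.PosSemidef.of_dotProduct_mulVec_nonneg hsymP fun x => ?_
  simp only [star_trivial]
  rcases Nat.eq_zero_or_pos n with hn | hn
  · subst hn
    simp [dotProduct]
  have hn0 : ((n:ℝ)) ≠ 0 := by positivity
  set c : ℝ := (∑ i, x i) / n with hc
  set y : Fin n → ℝ := fun i => x i - c with hy
  have hsum : (∑ i, y i) = 0 := by
    simp only [hy, Finset.sum_sub_distrib, Finset.sum_const, Finset.card_univ,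
      Fintype.card_fin, nsmul_eq_mul, hc]
    field_simp; ring
  have hxy : x = y + fun _ => c := by funext i; simp [hy]
  have hPT : Pᵀ = P := by
    rw [← Matrix.conjTranspose_eq_transpose_of_trivial]; exact hsymP
  have hvm : (fun _ => (1:ℝ)) ᵥ* P = 0 := by
    rw [← Matrix.mulVec_transpose, hPT, h1]
  have hone : (fun _ => (1:ℝ)) ⬝ᵥ (P *ᵥ y) = 0 := by
    rw [Matrix.dotProduct_mulVec, hvm, zero_dotProduct]
  have hPx : P *ᵥ x = P *ᵥ y := by
    rw [hxy]
    have : (fun _ : Fin n => c) = c • (fun _ : Fin n => (1:ℝ)) := by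
      funext i; simp
    rw [this, Matrix.mulVec_add, Matrix.mulVec_smul, h1, smul_zero, add_zero]
  have hquad : x ⬝ᵥ P *ᵥ x = y ⬝ᵥ P *ᵥ y := by
    rw [hPx, hxy, add_dotProduct]
    have : (fun _ : Fin n => c) ⬝ᵥ (P *ᵥ y) = c * ((fun _ => (1:ℝ)) ⬝ᵥ (P *ᵥ y)) := by
      simp [dotProduct, Finset.mul_sum]
    rw [this, hone, mul_zero, add_zero]
  rw [hquad]
  exact hq y hsum

lemma sc1 {t : ℝ} (ht0 : 0 < t) (ht : t ≤ 1/2) : 1 + t ≤ Real.exp (2 * Real.log 2 * t) := by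
  have h2 : (1:ℝ) ≤ 2 * Real.log 2 := by nlinarith [Real.log_two_gt_d9]
  have : 2 * Real.log 2 * t + 1 ≤ Real.exp (2 * Real.log 2 * t) := Real.add_one_le_exp _
  nlinarith

lemma sc2 {t : ℝ} (ht0 : 0 < t) (ht : t ≤ 1/2) : Real.exp (-(2 * Real.log 2 * t)) ≤ 1 - t := by
  have key : ((1:ℝ) + (-1/2)) ^ (2*t) ≤ 1 + (2*t) * (-1/2) :=
    rpow_one_add_le_one_add_mul_self (by norm_num) (by linarith) (by linarith)
  have hrw : ((1:ℝ) + (-1/2)) ^ (2*t) = Real.exp (-(2 * Real.log 2 * t)) := by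
    rw [show (1:ℝ) + (-1/2) = 1/2 by norm_num, Real.rpow_def_of_pos (by norm_num)]
    rw [show Real.log (1/2) = -Real.log 2 by
      rw [Real.log_div one_ne_zero two_ne_zero, Real.log_one]; ring]
    ring_nf
  rw [← hrw]
  linarith

/-- expanders approximate complete graphs: if `A` is a symmetric
nonnegative `n×n` matrix with `A·1 = d·1` and `|xᵀAx| ≤ λ‖x‖²` for all `x ⊥ 1`,
with `0 < λ ≤ d/2`, then `(n/d)·(d·I − A) ≈_ε (n·I − J)` where
`ε = 2·ln 2·λ/d`. -/
theorem expander_approximates_complete (n : ℕ) (A : Matrix (Fin n) (Fin n) ℝ) (d lam : ℝ)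
    (hsym : A.IsSymm) (hnn : ∀ i j, 0 ≤ A i j)
    (hd : 0 < d) (hlam : 0 < lam) (hlamd : lam ≤ d / 2)
    (hreg : A *ᵥ (fun _ => (1 : ℝ)) = fun _ => d)
    (heig : ∀ x : Fin n → ℝ, (∑ i, x i) = 0 → |x ⬝ᵥ A *ᵥ x| ≤ lam * (x ⬝ᵥ x)) :
    ApproxEps (((n : ℝ) / d) • (d • (1 : Matrix (Fin n) (Fin n) ℝ) - A))
      (2 * Real.log 2 * lam / d)
      ((n : ℝ) • (1 : Matrix (Fin n) (Fin n) ℝ) - Matrix.of fun _ _ => (1 : ℝ)) := by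
  have ht0 : 0 < lam / d := div_pos hlam hd
  have ht : lam / d ≤ 1 / 2 := by
    rw [div_le_div_iff₀ hd two_pos]; linarith
  have hεeq : 2 * Real.log 2 * lam / d = 2 * Real.log 2 * (lam / d) := by ring
  have hexp1 : 1 + lam / d ≤ Real.exp (2 * Real.log 2 * lam / d) := by
    rw [hεeq]; exact sc1 ht0 ht
  have hexp2 : Real.exp (-(2 * Real.log 2 * lam / d)) ≤ 1 - lam / d := by
    rw [hεeq]; exact sc2 ht0 ht
  have hAT : Aᵀ = A := hsym
  have hJ1 : ∀ v : Fin n → ℝ, (Matrix.of fun _ _ => (1:ℝ)) *ᵥ v = fun _ : Fin n => ∑ j, v j := by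
    intro v; funext i; simp [Matrix.mulVec, dotProduct]
  have hK1 : ((n : ℝ) • (1 : Matrix (Fin n) (Fin n) ℝ) - Matrix.of fun _ _ => (1 : ℝ)) *ᵥ
      (fun _ => (1:ℝ)) = 0 := by
    rw [Matrix.sub_mulVec, Matrix.smul_mulVec, Matrix.one_mulVec, hJ1]
    funext i; simp
  have hM1 : (((n : ℝ) / d) • (d • (1 : Matrix (Fin n) (Fin n) ℝ) - A)) *ᵥ
      (fun _ => (1:ℝ)) = 0 := by
    rw [Matrix.smul_mulVec, Matrix.sub_mulVec, Matrix.smul_mulVec,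
      Matrix.one_mulVec, hreg]
    funext i; simp
  have hsmulH : ∀ (c : ℝ) (P : Matrix (Fin n) (Fin n) ℝ), P.IsHermitian →
      (c • P).IsHermitian := by
    intro c P hP
    show (c • P)ᴴ = c • P
    rw [Matrix.conjTranspose_smul, hP.eq, star_trivial]
  have hAH : A.IsHermitian := by
    show Aᴴ = A
    rw [Matrix.conjTranspose_eq_transpose_of_trivial, hAT]
  have hJH : (Matrix.of fun _ _ => (1:ℝ) : Matrix (Fin n) (Fin n) ℝ).IsHermitian := by
    show _ᴴ = _
    ext i j; simp
  have hMH : (((n : ℝ) / d) • (d • (1 : Matrix (Fin n) (Fin n) ℝ) - A)).IsHermitian :=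
    hsmulH _ _ ((hsmulH d 1 Matrix.isHermitian_one).sub hAH)
  have hKH : ((n : ℝ) • (1 : Matrix (Fin n) (Fin n) ℝ) - Matrix.of fun _ _ => (1 : ℝ)).IsHermitian :=
    (hsmulH _ 1 Matrix.isHermitian_one).sub hJH
  have hKy : ∀ y : Fin n → ℝ, (∑ i, y i) = 0 →
      y ⬝ᵥ ((n : ℝ) • (1 : Matrix (Fin n) (Fin n) ℝ) - Matrix.of fun _ _ => (1 : ℝ)) *ᵥ y
        = (n:ℝ) * (y ⬝ᵥ y) := by
    intro y hy
    have hKv : ((n : ℝ) • (1 : Matrix (Fin n) (Fin n) ℝ) - Matrix.of fun _ _ => (1 : ℝ)) *ᵥ y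
        = (n:ℝ) • y := by
      rw [Matrix.sub_mulVec, Matrix.smul_mulVec, Matrix.one_mulVec, hJ1 y]
      funext i; simp [hy]
    rw [hKv, dotProduct_smul, smul_eq_mul]
  have hMy : ∀ y : Fin n → ℝ,
      y ⬝ᵥ (((n : ℝ) / d) • (d • (1 : Matrix (Fin n) (Fin n) ℝ) - A)) *ᵥ y
        = ((n:ℝ)/d) * (d * (y ⬝ᵥ y) - y ⬝ᵥ A *ᵥ y) := by
    intro y
    rw [Matrix.smul_mulVec, dotProduct_smul, smul_eq_mul,
      Matrix.sub_mulVec, dotProduct_sub, Matrix.smul_mulVec,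
      Matrix.one_mulVec, dotProduct_smul, smul_eq_mul]
  have hnd : (0:ℝ) ≤ (n:ℝ)/d := by positivity
  constructor
  · refine aux_psd _ ((hsmulH _ _ hKH).sub hMH) ?_ ?_
    · rw [Matrix.sub_mulVec, hM1, Matrix.smul_mulVec, hK1, smul_zero, zero_sub, neg_zero]
    · intro y hy
      rw [Matrix.sub_mulVec, dotProduct_sub, hMy y, Matrix.smul_mulVec,
        dotProduct_smul, smul_eq_mul, hKy y hy]
      obtain ⟨ha1, ha2⟩ := abs_le.mp (heig y hy)
      have hq0 : 0 ≤ y ⬝ᵥ y := Finset.sum_nonneg fun i _ => mul_self_nonneg _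
      have hddq : ((n:ℝ)/d) * (d * (y ⬝ᵥ y)) = (n:ℝ) * (y ⬝ᵥ y) := by
        field_simp
      have h1 : 0 ≤ ((n:ℝ)/d) * (y ⬝ᵥ A *ᵥ y + lam * (y ⬝ᵥ y)) :=
        mul_nonneg hnd (by linarith)
      have h2 : (1 + lam / d) * ((n:ℝ) * (y ⬝ᵥ y)) ≤
          Real.exp (2 * Real.log 2 * lam / d) * ((n:ℝ) * (y ⬝ᵥ y)) :=
        mul_le_mul_of_nonneg_right hexp1 (mul_nonneg (Nat.cast_nonneg n) hq0)
      have h3 : (lam / d) * ((n:ℝ) * (y ⬝ᵥ y)) = ((n:ℝ)/d) * (lam * (y ⬝ᵥ y)) := by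
        ring
      nlinarith [h1, h2, h3, hddq]
  · refine aux_psd _ (hMH.sub (hsmulH _ _ hKH)) ?_ ?_
    · rw [Matrix.sub_mulVec, hM1, Matrix.smul_mulVec, hK1, smul_zero, sub_zero]
    · intro y hy
      rw [Matrix.sub_mulVec, dotProduct_sub, hMy y, Matrix.smul_mulVec,
        dotProduct_smul, smul_eq_mul, hKy y hy]
      obtain ⟨ha1, ha2⟩ := abs_le.mp (heig y hy)
      have hq0 : 0 ≤ y ⬝ᵥ y := Finset.sum_nonneg fun i _ => mul_self_nonneg _
      have hddq : ((n:ℝ)/d) * (d * (y ⬝ᵥ y)) = (n:ℝ) * (y ⬝ᵥ y) := by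
        field_simp
      have h1 : 0 ≤ ((n:ℝ)/d) * (lam * (y ⬝ᵥ y) - y ⬝ᵥ A *ᵥ y) :=
        mul_nonneg hnd (by linarith)
      have h2 : Real.exp (-(2 * Real.log 2 * lam / d)) * ((n:ℝ) * (y ⬝ᵥ y)) ≤
          (1 - lam / d) * ((n:ℝ) * (y ⬝ᵥ y)) :=
        mul_le_mul_of_nonneg_right hexp2 (mul_nonneg (Nat.cast_nonneg n) hq0)
      have h3 : (lam / d) * ((n:ℝ) * (y ⬝ᵥ y)) = ((n:ℝ)/d) * (lam * (y ⬝ᵥ y)) := by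
        ring
      nlinarith [h1, h2, h3, hddq]
end
end

section
/- Let V be a finite vertex set and d ∈ ℝ^V with 0 < d_v ≤ 1 for every v. Let H = {v ∈ V : d_v = 1} and L = V \ H, and suppose 1 ≤ |L| ≤ |H|. Let G be the product demand graph of d, let G_{HH} be the subgraph consisting of all edges with both endpoints in H, and let G_{LH} be the subgraph consisting of all edges with one endpoint in L and the other in H. Then L_{G_{HH}} + L_{G_{LH}} ≈_{3|L|/|H|} L_G. -/
open Matrix BigOperators Finset
open scoped Classical

noncomputable section

/-- The vector `e_u - e_v`. -/
def eVec {ι : Type*} [DecidableEq ι] (u v : ι) : ι → ℝ :=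
  fun a => (if a = u then 1 else 0) - (if a = v then 1 else 0)

/-- The Laplacian of a single unit-weight edge `{u,v}`:
`(e_u - e_v)(e_u - e_v)ᵀ`. -/
def edgeL {ι : Type*} [DecidableEq ι] (u v : ι) : Matrix ι ι ℝ :=
  Matrix.vecMulVec (eVec u v) (eVec u v)

section Helpers

variable {ι : Type*} [Fintype ι] [DecidableEq ι]

omit [DecidableEq ι] in
lemma my_sum_mulVec {α : Type*} (s : Finset α) (f : α → Matrix ι ι ℝ) (x : ι → ℝ) :
    (∑ i ∈ s, f i) *ᵥ x = ∑ i ∈ s, f i *ᵥ x := by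
  ext j
  simp [mulVec, dotProduct, Matrix.sum_apply, Finset.sum_mul, Finset.sum_apply]
  exact Finset.sum_comm

omit [DecidableEq ι] in
lemma my_dot_sum {α : Type*} (s : Finset α) (f : α → ι → ℝ) (x : ι → ℝ) :
    x ⬝ᵥ (∑ i ∈ s, f i) = ∑ i ∈ s, x ⬝ᵥ f i := by
  simp [dotProduct, Finset.mul_sum, Finset.sum_apply]
  exact Finset.sum_comm

lemma dot_eVec (u v : ι) (x : ι → ℝ) : eVec u v ⬝ᵥ x = x u - x v := by
  simp [eVec, dotProduct, sub_mul, Finset.sum_sub_distrib, ite_mul]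

lemma quad_edgeL (u v : ι) (x : ι → ℝ) : x ⬝ᵥ (edgeL u v *ᵥ x) = (x u - x v)^2 := by
  have h : edgeL u v *ᵥ x = (eVec u v ⬝ᵥ x) • eVec u v := by
    ext i
    simp only [edgeL, mulVec, vecMulVec, dotProduct, of_apply, Pi.smul_apply, smul_eq_mul]
    rw [Finset.sum_mul]
    exact Finset.sum_congr rfl fun j _ => by ring
  rw [h, dotProduct_smul, smul_eq_mul, dotProduct_comm x (eVec u v), dot_eVec]
  ring

lemma quad_comb (d : ι → ℝ) (s t : Finset ι) (x : ι → ℝ) :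
    x ⬝ᵥ ((∑ u ∈ s, ∑ v ∈ t, (d u * d v) • edgeL u v) *ᵥ x) =
      ∑ u ∈ s, ∑ v ∈ t, d u * d v * (x u - x v)^2 := by
  rw [my_sum_mulVec, my_dot_sum]
  refine Finset.sum_congr rfl fun u _ => ?_
  rw [my_sum_mulVec, my_dot_sum]
  refine Finset.sum_congr rfl fun v _ => ?_
  rw [smul_mulVec, dotProduct_smul, smul_eq_mul, quad_edgeL]

omit [Fintype ι] in
lemma edgeL_ct (u v : ι) : (edgeL u v)ᴴ = edgeL u v := by
  ext i j
  simp [edgeL, vecMulVec, conjTranspose_apply, mul_comm]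

lemma comb_herm (d : ι → ℝ) (s t : Finset ι) :
    (∑ u ∈ s, ∑ v ∈ t, (d u * d v) • edgeL u v).IsHermitian := by
  unfold Matrix.IsHermitian
  rw [conjTranspose_sum]
  refine Finset.sum_congr rfl fun u _ => ?_
  rw [conjTranspose_sum]
  refine Finset.sum_congr rfl fun v _ => ?_
  rw [conjTranspose_smul, edgeL_ct]
  simp

lemma herm_smul (c : ℝ) {M : Matrix ι ι ℝ} (h : M.IsHermitian) : (c • M).IsHermitian := by
  unfold Matrix.IsHermitian at *
  rw [conjTranspose_smul, h]
  simp

lemma core_ineq {V : Type*} [Fintype V] [DecidableEq V] (d : V → ℝ)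
    (hd0 : ∀ v, 0 < d v) (hd1 : ∀ v, d v ≤ 1) (H L : Finset V)
    (hH : ∀ h ∈ H, d h = 1) (x : V → ℝ) :
    (H.card : ℝ) * ∑ l ∈ L, ∑ l' ∈ L, d l * d l' * (x l - x l')^2 ≤
      4 * L.card * ∑ l ∈ L, ∑ h ∈ H, d l * d h * (x l - x h)^2 := by
  have key : ∀ l ∈ L, ∀ l' ∈ L, ∀ h ∈ H,
      d l * d l' * (x l - x l')^2 ≤
        2*(d l * d h * (x l - x h)^2) + 2*(d l' * d h * (x l' - x h)^2) := by
    intro l _ l' _ h hh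
    rw [hH h hh]
    nlinarith [mul_nonneg (mul_nonneg (sub_nonneg.2 (hd1 l')) (hd0 l).le) (sq_nonneg (x l - x h)),
      mul_nonneg (mul_nonneg (sub_nonneg.2 (hd1 l)) (hd0 l').le) (sq_nonneg (x l' - x h)),
      mul_nonneg (mul_nonneg (hd0 l).le (hd0 l').le)
        (sq_nonneg ((x l - x h) + (x l' - x h)))]
  calc (H.card : ℝ) * ∑ l ∈ L, ∑ l' ∈ L, d l * d l' * (x l - x l')^2
      = ∑ l ∈ L, ∑ l' ∈ L, ∑ _h ∈ H, d l * d l' * (x l - x l')^2 := by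
        rw [Finset.mul_sum]
        refine Finset.sum_congr rfl fun l _ => ?_
        rw [Finset.mul_sum]
        refine Finset.sum_congr rfl fun l' _ => ?_
        rw [Finset.sum_const, nsmul_eq_mul]
    _ ≤ ∑ l ∈ L, ∑ l' ∈ L, ∑ h ∈ H,
          (2*(d l * d h * (x l - x h)^2) + 2*(d l' * d h * (x l' - x h)^2)) := by
        refine Finset.sum_le_sum fun l hl => Finset.sum_le_sum fun l' hl' =>
          Finset.sum_le_sum fun h hh => key l hl l' hl' h hh
    _ = 4 * L.card * ∑ l ∈ L, ∑ h ∈ H, d l * d h * (x l - x h)^2 := by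
        simp only [Finset.sum_add_distrib, Finset.sum_const, nsmul_eq_mul, ← Finset.mul_sum]
        ring

lemma arith1 (e SHH SLH SLL : ℝ) (he : 1 ≤ e)
    (h0HH : 0 ≤ SHH) (h0LH : 0 ≤ SLH) (h0LL : 0 ≤ SLL) :
    0 ≤ e * ((1/2) * (SHH + 2 * SLH + SLL)) - ((1/2) * SHH + SLH) := by
  nlinarith [mul_nonneg (sub_nonneg.2 he) h0HH, mul_nonneg (sub_nonneg.2 he) h0LH,
    mul_nonneg (sub_nonneg.2 he) h0LL]

lemma arith2 (SHH SLH SLL Hc Lc : ℝ) (h0HH : 0 ≤ SHH) (h0LH : 0 ≤ SLH) (h0LL : 0 ≤ SLL)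
    (hHpos : 0 < Hc) (hL1 : 1 ≤ Lc) (hcore : Hc * SLL ≤ 4 * Lc * SLH) :
    0 ≤ ((1/2) * SHH + SLH) - Real.exp (-(3 * Lc / Hc)) * ((1/2) * (SHH + 2 * SLH + SLL)) := by
  have hε0 : 0 ≤ 3 * Lc / Hc := by positivity
  have step1 : (1/2) * SLL ≤ (3 * Lc / Hc) * SLH := by
    have h2 : SLL ≤ 4 * Lc / Hc * SLH := by
      rw [div_mul_eq_mul_div, le_div_iff₀ hHpos]
      nlinarith
    have hq : 0 ≤ Lc / Hc * SLH := mul_nonneg (div_nonneg (by linarith) hHpos.le) h0LH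
    have e1 : 4 * Lc / Hc * SLH = 4 * (Lc / Hc * SLH) := by ring
    have e2 : (3 * Lc / Hc) * SLH = 3 * (Lc / Hc * SLH) := by ring
    rw [e2]; rw [e1] at h2; linarith
  have hkey : (1/2) * (SHH + 2 * SLH + SLL) ≤
      Real.exp (3 * Lc / Hc) * ((1/2) * SHH + SLH) := by
    have step3 := Real.add_one_le_exp (3 * Lc / Hc)
    nlinarith [mul_nonneg hε0 h0HH, step1,
      mul_nonneg (by linarith : (0:ℝ) ≤ Real.exp (3*Lc/Hc) - (1 + 3*Lc/Hc))
        (by linarith : (0:ℝ) ≤ (1/2) * SHH + SLH)]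
  have hfinal : Real.exp (-(3 * Lc / Hc)) * ((1/2) * (SHH + 2 * SLH + SLL)) ≤
      (1/2) * SHH + SLH := by
    calc Real.exp (-(3 * Lc / Hc)) * ((1/2) * (SHH + 2 * SLH + SLL))
        ≤ Real.exp (-(3 * Lc / Hc)) * (Real.exp (3 * Lc / Hc) * ((1/2) * SHH + SLH)) :=
          mul_le_mul_of_nonneg_left hkey (Real.exp_pos _).le
      _ = (1/2) * SHH + SLH := by
          rw [← mul_assoc, ← Real.exp_add]
          simp
  linarith

end Helpers

/-- low-demand edges are unimportant: for a product demand graph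
with demands `0 < d_v ≤ 1`, `H = {v : d_v = 1}`, `L = V \ H`, `1 ≤ |L| ≤ |H|`,
one has `L_{G_HH} + L_{G_LH} ≈_{3|L|/|H|} L_G`. -/
theorem product_demand_drop_LL {V : Type*} [Fintype V] [DecidableEq V] (d : V → ℝ)
    (hd0 : ∀ v, 0 < d v) (hd1 : ∀ v, d v ≤ 1) :
    let H := Finset.univ.filter fun v => d v = 1
    let L := Finset.univ.filter fun v => d v ≠ 1
    1 ≤ L.card → L.card ≤ H.card →
    ApproxEps
      ((1 / 2 : ℝ) • (∑ u ∈ H, ∑ v ∈ H, (d u * d v) • edgeL u v) +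
        ∑ l ∈ L, ∑ h ∈ H, (d l * d h) • edgeL l h)
      (3 * (L.card : ℝ) / (H.card : ℝ))
      ((1 / 2 : ℝ) • ∑ u : V, ∑ v : V, (d u * d v) • edgeL u v) := by
  intro H L hL1 hLH
  have hH1 : ∀ h ∈ H, d h = 1 := fun h hh => (Finset.mem_filter.1 hh).2
  have hHnat : 1 ≤ H.card := le_trans hL1 hLH
  have hHpos : (0:ℝ) < H.card := by exact_mod_cast hHnat
  have hL1c : (1:ℝ) ≤ L.card := by exact_mod_cast hL1
  set ε : ℝ := 3 * (L.card : ℝ) / (H.card : ℝ) with hε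
  have hε0 : 0 ≤ ε := by positivity
  -- abbreviations for the matrices
  set MA : Matrix V V ℝ :=
    (1 / 2 : ℝ) • (∑ u ∈ H, ∑ v ∈ H, (d u * d v) • edgeL u v) +
      ∑ l ∈ L, ∑ h ∈ H, (d l * d h) • edgeL l h with hMA
  set MB : Matrix V V ℝ := (1 / 2 : ℝ) • ∑ u : V, ∑ v : V, (d u * d v) • edgeL u v with hMB
  -- hermitian facts
  have hermA : MA.IsHermitian :=
    (herm_smul _ (comb_herm d H H)).add (comb_herm d L H)
  have hermB : MB.IsHermitian := herm_smul _ (comb_herm d univ univ)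
  -- quadratic forms
  have qA : ∀ x : V → ℝ, x ⬝ᵥ (MA *ᵥ x) =
      (1/2) * (∑ u ∈ H, ∑ v ∈ H, d u * d v * (x u - x v)^2) +
        ∑ l ∈ L, ∑ h ∈ H, d l * d h * (x l - x h)^2 := by
    intro x
    rw [hMA, add_mulVec, dotProduct_add, smul_mulVec, dotProduct_smul, smul_eq_mul,
      quad_comb, quad_comb]
  have qB : ∀ x : V → ℝ, x ⬝ᵥ (MB *ᵥ x) =
      (1/2) * (∑ u : V, ∑ v : V, d u * d v * (x u - x v)^2) := by
    intro x
    rw [hMB, smul_mulVec, dotProduct_smul, smul_eq_mul, quad_comb]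
  -- splitting the full sum
  have hsplit : ∀ g : V → ℝ, ∑ v : V, g v = ∑ v ∈ H, g v + ∑ v ∈ L, g v := by
    intro g
    exact (Finset.sum_filter_add_sum_filter_not Finset.univ (fun v => d v = 1) g).symm
  have hVV : ∀ x : V → ℝ, (∑ u : V, ∑ v : V, d u * d v * (x u - x v)^2) =
      (∑ u ∈ H, ∑ v ∈ H, d u * d v * (x u - x v)^2) +
      2 * (∑ l ∈ L, ∑ h ∈ H, d l * d h * (x l - x h)^2) +
      (∑ l ∈ L, ∑ l' ∈ L, d l * d l' * (x l - x l')^2) := by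
    intro x
    rw [hsplit (fun u => ∑ v : V, d u * d v * (x u - x v)^2)]
    have h1 : ∀ u, (∑ v : V, d u * d v * (x u - x v)^2) =
        (∑ v ∈ H, d u * d v * (x u - x v)^2) + ∑ v ∈ L, d u * d v * (x u - x v)^2 :=
      fun u => hsplit _
    simp only [h1, Finset.sum_add_distrib]
    have hswap : (∑ u ∈ H, ∑ v ∈ L, d u * d v * (x u - x v)^2) =
        ∑ l ∈ L, ∑ h ∈ H, d l * d h * (x l - x h)^2 := by
      rw [Finset.sum_comm]
      exact Finset.sum_congr rfl fun l _ => Finset.sum_congr rfl fun h _ => by ring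
    rw [hswap]
    ring
  -- nonnegativity of the pieces
  have hnn : ∀ (s t : Finset V) (x : V → ℝ),
      0 ≤ ∑ u ∈ s, ∑ v ∈ t, d u * d v * (x u - x v)^2 := by
    intro s t x
    exact Finset.sum_nonneg fun u _ => Finset.sum_nonneg fun v _ =>
      mul_nonneg (mul_nonneg (hd0 u).le (hd0 v).le) (sq_nonneg _)
  constructor
  · -- e^ε • MB - MA ⪰ 0
    refine Matrix.PosSemidef.of_dotProduct_mulVec_nonneg ((herm_smul _ hermB).sub hermA) fun x => ?_
    rw [star_trivial, sub_mulVec, dotProduct_sub, smul_mulVec, dotProduct_smul,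
      smul_eq_mul, qA, qB, hVV x]
    exact arith1 _ _ _ _ (Real.one_le_exp hε0) (hnn H H x) (hnn L H x) (hnn L L x)
  · -- MA - e^{-ε} • MB ⪰ 0
    refine Matrix.PosSemidef.of_dotProduct_mulVec_nonneg (hermA.sub (herm_smul _ hermB)) fun x => ?_
    rw [star_trivial, sub_mulVec, dotProduct_sub, smul_mulVec, dotProduct_smul,
      smul_eq_mul, qA, qB, hVV x]
    have hcore : (H.card : ℝ) * (∑ l ∈ L, ∑ l' ∈ L, d l * d l' * (x l - x l')^2) ≤
        4 * L.card * (∑ l ∈ L, ∑ h ∈ H, d l * d h * (x l - x h)^2) :=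
      core_ineq d hd0 hd1 H L hH1 x
    have := arith2 (∑ u ∈ H, ∑ v ∈ H, d u * d v * (x u - x v)^2)
      (∑ l ∈ L, ∑ h ∈ H, d l * d h * (x l - x h)^2)
      (∑ l ∈ L, ∑ l' ∈ L, d l * d l' * (x l - x l')^2)
      (H.card : ℝ) (L.card : ℝ) (hnn H H x) (hnn L H x) (hnn L L x) hHpos hL1c hcore
    have hneg : -ε = -(3 * (L.card : ℝ) / (H.card : ℝ)) := by rw [hε]
    rw [hneg]
    linarith
end
end
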